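/- arXiv:2306.04702 — 7 statements merged into one kernel-verified Lean document; each statement's English description precedes it below -/
import Mathlib

section
/- For every a ≥ 0, the truncated second moment ν_a = E(Z² | |Z| ≥ a) of a standard Gaussian Z satisfies a² + 1 ≤ ν_a ≤ a² + 2. -/
open MeasureTheory ProbabilityTheory Real
open scoped ENNReal NNReal Classical

open Set Filter
open scoped Topology

/-- `ν_a = E(Z² | |Z| ≥ a)` for a standard Gaussian `Z`. -/
noncomputable def nuGauss (a : ℝ) : ℝ :=
  (∫ z in {z : ℝ | a ≤ |z|}, z ^ 2 ∂(gaussianReal 0 1)) /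
    ((gaussianReal 0 1) {z : ℝ | a ≤ |z|}).toReal

namespace NuGaussAux

noncomputable def gg (z : ℝ) : ℝ := rexp (-z ^ 2 / 2)

lemma gg_pos (z : ℝ) : 0 < gg z := exp_pos _

lemma gg_cont : Continuous gg := by
  unfold gg
  exact Real.continuous_exp.comp ((continuous_pow 2).neg.div_const 2)

lemma gg_deriv (z : ℝ) : HasDerivAt gg (-z * gg z) z := by
  have h1 : HasDerivAt (fun z : ℝ => -z ^ 2 / 2) (-z) z := by
    have := ((hasDerivAt_pow 2 z).neg).div_const 2
    simpa using this.congr_deriv (by ring)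
  show HasDerivAt (fun z => rexp (-z ^ 2 / 2)) (-z * gg z) z
  simpa [gg, mul_comm] using h1.exp

lemma gg_int : Integrable gg := by
  have := integrable_exp_neg_mul_sq (by norm_num : (0:ℝ) < 1/2)
  refine this.congr (Filter.Eventually.of_forall fun z => ?_)
  simp [gg]; ring_nf

lemma sq_gg_le (z : ℝ) : z ^ 2 * gg z ≤ 4 * rexp (-(1/4) * z ^ 2) := by
  have h : z ^ 2 / 4 + 1 ≤ rexp (z ^ 2 / 4) := add_one_le_exp _
  have h2 : z ^ 2 ≤ 4 * rexp (z ^ 2 / 4) := by nlinarith [exp_pos (z^2/4)]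
  calc z ^ 2 * gg z ≤ 4 * rexp (z ^ 2 / 4) * rexp (-z ^ 2 / 2) :=
        mul_le_mul_of_nonneg_right h2 (gg_pos z).le
    _ = 4 * rexp (-(1/4) * z ^ 2) := by rw [mul_assoc, ← exp_add]; ring_nf

lemma sq_gg_bdd (z : ℝ) : z ^ 2 * gg z ≤ 4 := by
  have h := sq_gg_le z
  have h4 : rexp (-(1/4) * z ^ 2) ≤ 1 := by
    rw [exp_le_one_iff]; nlinarith [sq_nonneg z]
  nlinarith [exp_pos (-(1/4) * z ^ 2)]

lemma sq_gg_int : Integrable (fun z : ℝ => z ^ 2 * gg z) := by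
  have hb : Integrable (fun z : ℝ => 4 * rexp (-(1/4) * z ^ 2)) :=
    (integrable_exp_neg_mul_sq (by norm_num : (0:ℝ) < 1/4)).const_mul 4
  refine hb.mono' ?_ (Filter.Eventually.of_forall fun z => ?_)
  · exact ((continuous_pow 2).mul gg_cont).aestronglyMeasurable
  · have h0 : 0 ≤ z ^ 2 * gg z := mul_nonneg (sq_nonneg z) (gg_pos z).le
    rw [Real.norm_eq_abs, abs_of_nonneg h0]
    exact sq_gg_le z

lemma tendsto_mul_gg : Tendsto (fun z : ℝ => z * gg z) atTop (𝓝 0) := by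
  have hb : Tendsto (fun z : ℝ => 4 / z) atTop (𝓝 0) :=
    tendsto_const_nhds.div_atTop tendsto_id
  refine squeeze_zero_norm' ?_ hb
  filter_upwards [eventually_gt_atTop (0:ℝ)] with z hz
  rw [Real.norm_eq_abs, abs_of_nonneg (mul_nonneg hz.le (gg_pos z).le),
    le_div_iff₀ hz]
  nlinarith [sq_gg_bdd z, gg_pos z]

lemma tendsto_gg : Tendsto gg atTop (𝓝 0) := by
  have h2 : Tendsto (fun z : ℝ => z ^ 2 / 2) atTop atTop :=
    (tendsto_pow_atTop two_ne_zero).atTop_div_const two_pos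
  have h3 : Tendsto (fun z : ℝ => -z ^ 2 / 2) atTop atBot := by
    have := tendsto_neg_atTop_atBot.comp h2
    refine this.congr fun z => ?_
    simp [Function.comp]; ring
  exact Real.tendsto_exp_atBot.comp h3

noncomputable def II (a : ℝ) : ℝ := ∫ z in Ioi a, gg z

lemma II_pos (a : ℝ) : 0 < II a := by
  rw [II, setIntegral_pos_iff_support_of_nonneg_ae
    (Filter.Eventually.of_forall fun z => (gg_pos z).le) gg_int.integrableOn]
  have hs : Function.support gg = univ := by
    ext z; simp [Function.mem_support, (gg_pos z).ne']
  rw [hs, univ_inter]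
  simp [Real.volume_Ioi]

lemma key_J (a : ℝ) : ∫ z in Ioi a, z ^ 2 * gg z = a * gg a + II a := by
  have hF : ∀ x ∈ Ici a, HasDerivAt (fun z => -z * gg z) ((x ^ 2 - 1) * gg x) x := by
    intro x _
    have h := (hasDerivAt_id x).neg.mul (gg_deriv x)
    simp only [Pi.neg_apply, id_eq] at h
    exact h.congr_deriv (by ring)
  have hint : IntegrableOn (fun x => (x ^ 2 - 1) * gg x) (Ioi a) := by
    have he : (fun x : ℝ => (x ^ 2 - 1) * gg x) = fun x => x ^ 2 * gg x - gg x := by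
      ext x; ring
    rw [he]; exact (sq_gg_int.sub gg_int).integrableOn
  have htend : Tendsto (fun z => -z * gg z) atTop (𝓝 0) := by
    have := tendsto_mul_gg.neg
    simpa using this
  have h := integral_Ioi_of_hasDerivAt_of_tendsto' hF hint htend
  have hsplit : ∫ x in Ioi a, (x ^ 2 - 1) * gg x
      = (∫ x in Ioi a, x ^ 2 * gg x) - II a := by
    rw [II, ← integral_sub sq_gg_int.integrableOn gg_int.integrableOn]
    congr 1; ext x; ring
  rw [hsplit] at h
  simp only [neg_mul, zero_sub, neg_neg] at h
  linarith

lemma mills_upper {a : ℝ} (ha : 0 < a) : II a ≤ gg a / a := by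
  have hH : ∀ x ∈ Ici a, HasDerivAt (fun z => -(gg z / z)) (gg x + gg x / x ^ 2) x := by
    intro x hx
    have hx0 : x ≠ 0 := (lt_of_lt_of_le ha hx).ne'
    have h := ((gg_deriv x).div (hasDerivAt_id x) hx0).neg
    simp only [id_eq] at h
    refine h.congr_deriv ?_
    field_simp
    ring
  have hpos : ∀ x ∈ Ioi a, 0 ≤ gg x + gg x / x ^ 2 := by
    intro x hx
    have h1 := gg_pos x
    have h2 : 0 < x := ha.trans hx
    positivity
  have htend : Tendsto (fun z => -(gg z / z)) atTop (𝓝 0) := by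
    have h0 : Tendsto (fun z : ℝ => gg z / z) atTop (𝓝 0) := by
      refine squeeze_zero_norm' ?_ tendsto_gg
      filter_upwards [eventually_ge_atTop (1:ℝ)] with z hz
      rw [Real.norm_eq_abs, abs_of_nonneg (div_nonneg (gg_pos z).le (by linarith)),
        div_le_iff₀ (by linarith : (0:ℝ) < z)]
      nlinarith [gg_pos z]
    simpa using h0.neg
  have h := integral_Ioi_of_hasDerivAt_of_nonneg' hH hpos htend
  have hle : II a ≤ ∫ x in Ioi a, (gg x + gg x / x ^ 2) := by
    rw [II]
    refine setIntegral_mono_on gg_int.integrableOn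
      (integrableOn_Ioi_deriv_of_nonneg' hH hpos htend) measurableSet_Ioi ?_
    intro x hx
    have hx0 : 0 < x := ha.trans hx
    have h1 := gg_pos x
    nlinarith [div_nonneg (gg_pos x).le (sq_nonneg x)]
  rw [h] at hle
  simp only [zero_sub, neg_neg] at hle
  exact hle

lemma mills_lower {a : ℝ} (ha : 0 ≤ a) : a * gg a / (a ^ 2 + 1) ≤ II a := by
  have hG : ∀ x ∈ Ici a, HasDerivAt (fun z => -(z * gg z / (1 + z ^ 2)))
      (((1 + x ^ 2) ^ 2 - 2) / (1 + x ^ 2) ^ 2 * gg x) x := by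
    intro x _
    have hx0 : (1 + x ^ 2 : ℝ) ≠ 0 := by positivity
    have hnum : HasDerivAt (fun z : ℝ => z * gg z) (gg x + x * (-x * gg x)) x := by
      have h := (hasDerivAt_id x).mul (gg_deriv x)
      simp only [id_eq, one_mul] at h
      exact h
    have hden : HasDerivAt (fun z : ℝ => 1 + z ^ 2) (2 * x) x := by
      simpa using (hasDerivAt_pow 2 x).const_add 1
    have h := (hnum.div hden hx0).neg
    refine h.congr_deriv ?_
    field_simp
    ring
  have hderint : IntegrableOn
      (fun x => ((1 + x ^ 2) ^ 2 - 2) / (1 + x ^ 2) ^ 2 * gg x) (Ioi a) := by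
    refine ((gg_int.const_mul 3).integrableOn).mono' ?_ ?_
    · refine AEStronglyMeasurable.mul ?_ gg_cont.aestronglyMeasurable.restrict
      have hc : Continuous fun x : ℝ => ((1 + x ^ 2) ^ 2 - 2) / (1 + x ^ 2) ^ 2 := by
        refine Continuous.div (by continuity) (by continuity) fun x => by positivity
      exact hc.aestronglyMeasurable.restrict
    · refine Filter.Eventually.of_forall fun x => ?_
      have h1 : (0:ℝ) < (1 + x ^ 2) ^ 2 := by positivity
      rw [Real.norm_eq_abs, abs_mul, abs_of_nonneg (gg_pos x).le, abs_div,
        abs_of_nonneg h1.le, div_mul_eq_mul_div, div_le_iff₀ h1]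
      have habs : |(1 + x ^ 2) ^ 2 - 2| ≤ 3 * (1 + x ^ 2) ^ 2 := by
        rw [abs_le]; constructor <;> nlinarith [sq_nonneg (1 + x ^ 2), sq_nonneg x]
      nlinarith [gg_pos x, abs_nonneg ((1 + x ^ 2) ^ 2 - 2)]
  have htend : Tendsto (fun z => -(z * gg z / (1 + z ^ 2))) atTop (𝓝 0) := by
    have h0 : Tendsto (fun z : ℝ => z * gg z / (1 + z ^ 2)) atTop (𝓝 0) := by
      refine squeeze_zero_norm' ?_ tendsto_gg
      filter_upwards [eventually_ge_atTop (0:ℝ)] with z hz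
      have h1 : (0:ℝ) < 1 + z ^ 2 := by positivity
      rw [Real.norm_eq_abs,
        abs_of_nonneg (div_nonneg (mul_nonneg hz (NuGaussAux.gg_pos z).le) h1.le),
        div_le_iff₀ h1]
      nlinarith [gg_pos z, sq_nonneg (z - 1)]
    simpa using h0.neg
  have h := integral_Ioi_of_hasDerivAt_of_tendsto' hG hderint htend
  have hle : ∫ x in Ioi a, ((1 + x ^ 2) ^ 2 - 2) / (1 + x ^ 2) ^ 2 * gg x ≤ II a := by
    rw [II]
    refine setIntegral_mono_on hderint gg_int.integrableOn measurableSet_Ioi ?_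
    intro x _
    have h1 : (0:ℝ) < (1 + x ^ 2) ^ 2 := by positivity
    rw [div_mul_eq_mul_div, div_le_iff₀ h1]
    nlinarith [gg_pos x]
  rw [h] at hle
  simp only [zero_sub, neg_neg] at hle
  have heq : a * gg a / (a ^ 2 + 1) = a * gg a / (1 + a ^ 2) := by ring_nf
  rw [heq]
  exact hle

lemma gg_even (x : ℝ) : gg (-x) = gg x := by simp [gg]

lemma pdf_eq (x : ℝ) : gaussianPDFReal 0 1 x = (√(2 * π))⁻¹ * gg x := by
  simp [gaussianPDFReal, gg]

lemma set_eq (a : ℝ) : {z : ℝ | a ≤ |z|} = Iic (-a) ∪ Ici a := by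
  ext z
  simp only [mem_setOf_eq, mem_union, mem_Iic, mem_Ici, le_abs, le_neg]
  tauto

lemma measurableSet_S (a : ℝ) : MeasurableSet {z : ℝ | a ≤ |z|} := by
  rw [set_eq]
  exact measurableSet_Iic.union measurableSet_Ici

lemma integral_sym (a : ℝ) (ha : 0 ≤ a) (F : ℝ → ℝ) (heven : ∀ x, F (-x) = F x)
    (hint : Integrable F) :
    ∫ z in {z : ℝ | a ≤ |z|}, F z = 2 * ∫ z in Ioi a, F z := by
  rw [set_eq a]
  rw [integral_union_ae ?hd measurableSet_Ici.nullMeasurableSet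
    hint.integrableOn hint.integrableOn]
  case hd =>
    have hsub : Iic (-a) ∩ Ici a ⊆ ({0} : Set ℝ) := by
      intro z hz
      simp only [mem_inter_iff, mem_Iic, mem_Ici] at hz
      simp only [mem_singleton_iff]
      have h1 : z ≤ 0 := by linarith [hz.1]
      have h2 : 0 ≤ z := by linarith [hz.2]
      linarith
    exact measure_mono_null hsub Real.volume_singleton
  rw [← integral_comp_neg_Ioi]
  simp only [heven]
  rw [integral_Ici_eq_integral_Ioi]
  ring

lemma measure_S (a : ℝ) (ha : 0 ≤ a) :
    ((gaussianReal 0 1) {z : ℝ | a ≤ |z|}).toReal = 2 * (√(2 * π))⁻¹ * II a := by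
  rw [gaussianReal_apply_eq_integral 0 one_ne_zero]
  rw [ENNReal.toReal_ofReal
    (setIntegral_nonneg (measurableSet_S a) fun x _ => gaussianPDFReal_nonneg 0 1 x)]
  have heq : ∫ x in {z : ℝ | a ≤ |z|}, gaussianPDFReal 0 1 x
      = 2 * ∫ x in Ioi a, gaussianPDFReal 0 1 x := by
    refine integral_sym a ha _ (fun x => ?_) (integrable_gaussianPDFReal 0 1)
    rw [pdf_eq, pdf_eq, gg_even]
  rw [heq]
  have : ∫ x in Ioi a, gaussianPDFReal 0 1 x = (√(2 * π))⁻¹ * II a := by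
    rw [II, ← integral_const_mul]
    exact setIntegral_congr_fun measurableSet_Ioi fun x _ => pdf_eq x
  rw [this, mul_assoc]

lemma int_sq (a : ℝ) (ha : 0 ≤ a) :
    ∫ z in {z : ℝ | a ≤ |z|}, z ^ 2 ∂(gaussianReal 0 1)
      = 2 * (√(2 * π))⁻¹ * ∫ z in Ioi a, z ^ 2 * gg z := by
  rw [gaussianReal_of_var_ne_zero 0 one_ne_zero]
  have hpdf : gaussianPDF 0 1 = fun x => ((gaussianPDFReal 0 1 x).toNNReal : ℝ≥0∞) := rfl
  rw [hpdf, setIntegral_withDensity_eq_setIntegral_smul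
    (measurable_gaussianPDFReal 0 1).real_toNNReal _ (measurableSet_S a)]
  have hcong : ∀ z : ℝ, (gaussianPDFReal 0 1 z).toNNReal • (z ^ 2)
      = (√(2 * π))⁻¹ * (z ^ 2 * gg z) := by
    intro z
    rw [NNReal.smul_def, smul_eq_mul,
      Real.coe_toNNReal _ (gaussianPDFReal_nonneg 0 1 z), pdf_eq]
    ring
  rw [integral_congr_ae (Filter.Eventually.of_forall hcong)]
  have hint : Integrable (fun z : ℝ => (√(2 * π))⁻¹ * (z ^ 2 * gg z)) :=
    sq_gg_int.const_mul _
  have heven : ∀ x : ℝ, (√(2 * π))⁻¹ * ((-x) ^ 2 * gg (-x))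
      = (√(2 * π))⁻¹ * (x ^ 2 * gg x) := by
    intro x; rw [gg_even, neg_pow]; ring
  rw [integral_sym a ha _ heven hint, integral_const_mul, mul_assoc]

end NuGaussAux

/-- For every `a ≥ 0`, the truncated second moment `ν_a = E(Z² | |Z| ≥ a)` of a standard
Gaussian `Z` satisfies `a² + 1 ≤ ν_a ≤ a² + 2`. -/
theorem nuGauss_bounds (a : ℝ) (ha : 0 ≤ a) :
    a ^ 2 + 1 ≤ nuGauss a ∧ nuGauss a ≤ a ^ 2 + 2 := by
  have hI := NuGaussAux.II_pos a
  have hc : (2 : ℝ) * (√(2 * π))⁻¹ ≠ 0 := by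
    have : (0:ℝ) < √(2 * π) := Real.sqrt_pos.mpr (by positivity)
    positivity
  have hnu : nuGauss a = a * NuGaussAux.gg a / NuGaussAux.II a + 1 := by
    rw [nuGauss, NuGaussAux.int_sq a ha, NuGaussAux.measure_S a ha,
      mul_div_mul_left _ _ hc, NuGaussAux.key_J a]
    field_simp
  constructor
  · rw [hnu]
    rcases eq_or_lt_of_le ha with rfl | hlt
    · norm_num
    · have h := NuGaussAux.mills_upper hlt
      have h1 : a ^ 2 * NuGaussAux.II a ≤ a * NuGaussAux.gg a := by
        calc a ^ 2 * NuGaussAux.II a ≤ a ^ 2 * (NuGaussAux.gg a / a) := by nlinarith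
          _ = a * NuGaussAux.gg a := by field_simp
      have h2 : a ^ 2 ≤ a * NuGaussAux.gg a / NuGaussAux.II a :=
        (le_div_iff₀ hI).mpr (by linarith)
      linarith
  · rw [hnu]
    have h := NuGaussAux.mills_lower ha
    rw [div_le_iff₀ (by positivity : (0:ℝ) < a ^ 2 + 1)] at h
    have h2 : a * NuGaussAux.gg a / NuGaussAux.II a ≤ a ^ 2 + 1 := by
      rw [div_le_iff₀ hI]
      nlinarith
    linarith
end

section
/- Let Z be a standard Gaussian random variable, a ≥ 1, ν_a = E(Z² | |Z| ≥ a), and X = (Z² − ν_a)·1{|Z| ≥ a}. Then for every λ ∈ (0, 1/2], E(e^{−λX}) ≤ exp(6·λ²·e^{−a²/2}). -/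
open MeasureTheory ProbabilityTheory Real
open scoped ENNReal NNReal Classical

section AuxLemmas
open Filter Set Topology

noncomputable def phiG (z : ℝ) : ℝ := (Real.sqrt (2 * π))⁻¹ * Real.exp (-z ^ 2 / 2)

lemma phiG_eq_pdf : gaussianPDFReal 0 1 = phiG := by
  ext x; simp [gaussianPDFReal, phiG]

lemma phiG_pos (z : ℝ) : 0 < phiG z := by unfold phiG; positivity

lemma measurable_phiG : Measurable phiG :=
  (Real.measurable_exp.comp ((measurable_id.pow_const 2).neg.div_const 2)).const_mul _

lemma hasDerivAt_phiG (z : ℝ) : HasDerivAt phiG (-z * phiG z) z := by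
  have h1 : HasDerivAt (fun x : ℝ => -x ^ 2 / 2) (-z) z := by
    have := ((hasDerivAt_pow 2 z).neg.div_const 2)
    refine this.congr_deriv ?_
    ring
  have := (h1.exp).const_mul (Real.sqrt (2 * π))⁻¹
  refine this.congr_deriv ?_
  unfold phiG; ring

lemma int_phiG : Integrable phiG := by
  rw [← phiG_eq_pdf]; exact integrable_gaussianPDFReal 0 1

lemma int_pow_phiG (n : ℕ) : Integrable (fun z : ℝ => z ^ n * phiG z) := by
  have h : (-1 : ℝ) < (n : ℝ) := lt_of_lt_of_le (by norm_num) (Nat.cast_nonneg n)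
  have := (integrable_rpow_mul_exp_neg_mul_sq (b := (2:ℝ)⁻¹) (by norm_num) h).const_mul
    (Real.sqrt (2 * π))⁻¹
  refine this.congr (ae_of_all _ fun z => ?_)
  show (Real.sqrt (2 * π))⁻¹ * (z ^ (n:ℝ) * rexp (-2⁻¹ * z ^ 2)) = z ^ n * phiG z
  rw [Real.rpow_natCast]
  unfold phiG
  rw [show -z ^ 2 / 2 = -2⁻¹ * z ^ 2 by ring]
  ring

lemma tend_pow_gauss (n : ℕ) :
    Tendsto (fun z : ℝ => z ^ n * Real.exp (-z ^ 2 / 2)) atTop (𝓝 0) := by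
  apply squeeze_zero' (g := fun z : ℝ => z ^ n * Real.exp (-z))
  · filter_upwards [eventually_ge_atTop (0:ℝ)] with z hz
    positivity
  · filter_upwards [eventually_ge_atTop (2:ℝ)] with z hz
    have h2 : -z ^ 2 / 2 ≤ -z := by nlinarith
    exact mul_le_mul_of_nonneg_left (Real.exp_le_exp.2 h2) (by positivity)
  · exact tendsto_pow_mul_exp_neg_atTop_nhds_zero n

lemma tend_mul_phiG {r : ℝ → ℝ} (h : ∀ᶠ z in atTop, |r z| ≤ 5 * z ^ 3) :
    Tendsto (fun z => r z * phiG z) atTop (𝓝 0) := by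
  have hb : Tendsto (fun z : ℝ => 5 * (Real.sqrt (2 * π))⁻¹ *
      (z ^ 3 * Real.exp (-z ^ 2 / 2))) atTop (𝓝 0) := by
    simpa using (tend_pow_gauss 3).const_mul (5 * (Real.sqrt (2 * π))⁻¹)
  apply squeeze_zero_norm' _ hb
  filter_upwards [h, eventually_ge_atTop (0:ℝ)] with z hz hz0
  have hp := phiG_pos z
  have : ‖r z * phiG z‖ = |r z| * phiG z := by
    rw [norm_mul, Real.norm_eq_abs, Real.norm_eq_abs, abs_of_pos hp]
  rw [this]
  calc |r z| * phiG z ≤ 5 * z ^ 3 * phiG z := by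
        exact mul_le_mul_of_nonneg_right hz hp.le
    _ = 5 * (Real.sqrt (2 * π))⁻¹ * (z ^ 3 * Real.exp (-z ^ 2 / 2)) := by
        unfold phiG; ring

lemma ftc0 {F f : ℝ → ℝ} {a : ℝ} (hderiv : ∀ x ∈ Set.Ici a, HasDerivAt F (f x) x)
    (hint : IntegrableOn f (Set.Ioi a)) (h0 : Tendsto F atTop (𝓝 0)) :
    ∫ x in Set.Ioi a, f x = -F a := by
  simpa using integral_Ioi_of_hasDerivAt_of_tendsto' hderiv hint h0

section FTCfacts
variable {a : ℝ}

lemma int3on (ha : 1 ≤ a) : IntegrableOn (fun z => (1 + (z ^ 2)⁻¹) * phiG z) (Ioi a) := by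
  apply Integrable.mono' ((int_phiG.const_mul 2).integrableOn)
  · exact ((measurable_const.add ((measurable_id.pow_const 2).inv)).mul
      measurable_phiG).aestronglyMeasurable
  · rw [ae_restrict_iff' measurableSet_Ioi]
    refine ae_of_all _ fun x hx => ?_
    have hx1 : (1:ℝ) ≤ x := le_trans ha (le_of_lt hx)
    have hp := phiG_pos x
    have h2 : (x ^ 2)⁻¹ ≤ 1 := by
      rw [inv_le_one_iff₀]; right; nlinarith
    have h0 : (0:ℝ) ≤ (x ^ 2)⁻¹ := by positivity
    rw [Real.norm_eq_abs, abs_of_nonneg (by positivity)]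
    nlinarith

lemma int4on (ha : 1 ≤ a) :
    IntegrableOn (fun z => (1 + 15 * (z ^ 6)⁻¹) * phiG z) (Ioi a) := by
  apply Integrable.mono' ((int_phiG.const_mul 16).integrableOn)
  · exact ((measurable_const.add (((measurable_id.pow_const 6).inv).const_mul 15)).mul
      measurable_phiG).aestronglyMeasurable
  · rw [ae_restrict_iff' measurableSet_Ioi]
    refine ae_of_all _ fun x hx => ?_
    have hx1 : (1:ℝ) ≤ x := le_trans ha (le_of_lt hx)
    have hp := phiG_pos x
    have h2 : (x ^ 6)⁻¹ ≤ 1 := by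
      rw [inv_le_one_iff₀]; right; exact one_le_pow₀ hx1
    have h0 : (0:ℝ) ≤ (x ^ 6)⁻¹ := by positivity
    rw [Real.norm_eq_abs, abs_of_nonneg (by positivity)]
    nlinarith

lemma int5on (ha : 1 ≤ a) :
    IntegrableOn (fun z => ((z ^ 4 + 2 * z ^ 2 - 1) / (z ^ 2 + 1) ^ 2) * phiG z) (Ioi a) := by
  apply Integrable.mono' ((int_phiG.const_mul 1).integrableOn)
  · exact (((((measurable_id.pow_const 4).add
      ((measurable_id.pow_const 2).const_mul 2)).sub_const 1).div
        (((measurable_id.pow_const 2).add_const 1).pow_const 2)).mul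
      measurable_phiG).aestronglyMeasurable
  · rw [ae_restrict_iff' measurableSet_Ioi]
    refine ae_of_all _ fun x hx => ?_
    have hx1 : (1:ℝ) ≤ x := le_trans ha (le_of_lt hx)
    have hp := phiG_pos x
    have hnum : (0:ℝ) ≤ x ^ 4 + 2 * x ^ 2 - 1 := by nlinarith
    have hden : (0:ℝ) < (x ^ 2 + 1) ^ 2 := by positivity
    have hratio : (x ^ 4 + 2 * x ^ 2 - 1) / (x ^ 2 + 1) ^ 2 ≤ 1 := by
      rw [div_le_one hden]; nlinarith
    rw [Real.norm_eq_abs, abs_of_nonneg (by positivity), one_mul]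
    calc (x ^ 4 + 2 * x ^ 2 - 1) / (x ^ 2 + 1) ^ 2 * phiG x
        ≤ 1 * phiG x := by exact mul_le_mul_of_nonneg_right hratio hp.le
      _ = phiG x := by ring

lemma gaussE1 (ha : 1 ≤ a) :
    ∫ z in Ioi a, (z ^ 2 - 1) * phiG z = a * phiG a := by
  have h : ∫ z in Ioi a, (z ^ 2 - 1) * phiG z = -((-a) * phiG a) := by
    apply ftc0 (F := fun z => (-z) * phiG z)
    · intro x _
      have H := ((hasDerivAt_id x).neg.mul (hasDerivAt_phiG x))
      refine H.congr_deriv ?_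
      simp only [Pi.neg_apply, id_eq]
      ring
    · refine (((int_pow_phiG 2).sub int_phiG).congr
        (ae_of_all _ fun z => by simp only [Pi.sub_apply]; ring)).integrableOn
    · apply tend_mul_phiG
      filter_upwards [eventually_ge_atTop (1:ℝ)] with z hz
      rw [abs_neg, abs_of_nonneg (by linarith)]
      have h1 : 0 ≤ z ^ 2 - 1 := by nlinarith
      nlinarith [mul_nonneg (by linarith : (0:ℝ) ≤ z) h1]
  rw [h]; ring

lemma gaussE2 (ha : 1 ≤ a) :
    ∫ z in Ioi a, (z ^ 4 - 3) * phiG z = (a ^ 3 + 3 * a) * phiG a := by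
  have h : ∫ z in Ioi a, (z ^ 4 - 3) * phiG z = -((-(a ^ 3 + 3 * a)) * phiG a) := by
    apply ftc0 (F := fun z => (-(z ^ 3 + 3 * z)) * phiG z)
    · intro x _
      have H := (((hasDerivAt_pow 3 x).add ((hasDerivAt_id x).const_mul 3)).neg.mul
        (hasDerivAt_phiG x))
      refine H.congr_deriv ?_
      simp only [Pi.neg_apply, Pi.add_apply, Pi.sub_apply, Pi.inv_apply, Pi.div_apply, id_eq]
      ring
    · refine (((int_pow_phiG 4).sub ((int_pow_phiG 0).const_mul 3)).congr
        (ae_of_all _ fun z => by simp only [Pi.sub_apply]; ring)).integrableOn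
    · apply tend_mul_phiG
      filter_upwards [eventually_ge_atTop (1:ℝ)] with z hz
      rw [abs_neg, abs_of_nonneg (by positivity)]
      have h1 : 0 ≤ z ^ 2 - 1 := by nlinarith
      nlinarith [mul_nonneg (by linarith : (0:ℝ) ≤ z) h1]
  rw [h]; ring

lemma gaussE3 (ha : 1 ≤ a) :
    ∫ z in Ioi a, (1 + (z ^ 2)⁻¹) * phiG z = a⁻¹ * phiG a := by
  have h : ∫ z in Ioi a, (1 + (z ^ 2)⁻¹) * phiG z = -((-(a⁻¹)) * phiG a) := by
    apply ftc0 (F := fun z => (-(z⁻¹)) * phiG z)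
    · intro x hx
      have hx0 : x ≠ 0 := by have := hx.out; intro h; rw [h] at this; linarith
      have H := ((hasDerivAt_inv hx0).neg.mul (hasDerivAt_phiG x))
      refine H.congr_deriv ?_
      simp only [Pi.neg_apply]; field_simp
      ring
    · exact int3on ha
    · apply tend_mul_phiG
      filter_upwards [eventually_ge_atTop (1:ℝ)] with z hz
      have h1 : z⁻¹ ≤ 1 := by rw [inv_le_one_iff₀]; right; linarith
      have h0 : (0:ℝ) ≤ z⁻¹ := by positivity
      rw [abs_neg, abs_of_nonneg h0]
      nlinarith [one_le_pow₀ hz (n := 3)]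
  rw [h]; ring

lemma gaussE4 (ha : 1 ≤ a) :
    ∫ z in Ioi a, (1 + 15 * (z ^ 6)⁻¹) * phiG z
      = (a⁻¹ - (a ^ 3)⁻¹ + 3 * (a ^ 5)⁻¹) * phiG a := by
  have h : ∫ z in Ioi a, (1 + 15 * (z ^ 6)⁻¹) * phiG z
      = -((-(a⁻¹ - (a ^ 3)⁻¹ + 3 * (a ^ 5)⁻¹)) * phiG a) := by
    apply ftc0 (F := fun z => (-(z⁻¹ - (z ^ 3)⁻¹ + 3 * (z ^ 5)⁻¹)) * phiG z)
    · intro x hx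
      have hx0 : x ≠ 0 := by have := hx.out; intro h; rw [h] at this; linarith
      have H := ((((hasDerivAt_inv hx0).sub
          ((hasDerivAt_pow 3 x).inv (pow_ne_zero 3 hx0))).add
          (((hasDerivAt_pow 5 x).inv (pow_ne_zero 5 hx0)).const_mul 3)).neg.mul
        (hasDerivAt_phiG x))
      refine H.congr_deriv ?_
      simp only [Pi.neg_apply, Pi.add_apply, Pi.sub_apply, Pi.inv_apply, Pi.div_apply]; field_simp
      ring
    · exact int4on ha
    · apply tend_mul_phiG
      filter_upwards [eventually_ge_atTop (1:ℝ)] with z hz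
      have h1 : z⁻¹ ≤ 1 := by rw [inv_le_one_iff₀]; right; linarith
      have h3 : (z ^ 3)⁻¹ ≤ 1 := by rw [inv_le_one_iff₀]; right; exact one_le_pow₀ hz
      have h5 : (z ^ 5)⁻¹ ≤ 1 := by rw [inv_le_one_iff₀]; right; exact one_le_pow₀ hz
      have h10 : (0:ℝ) ≤ z⁻¹ := by positivity
      have h30 : (0:ℝ) ≤ (z ^ 3)⁻¹ := by positivity
      have h50 : (0:ℝ) ≤ (z ^ 5)⁻¹ := by positivity
      have hz3 : (1:ℝ) ≤ z ^ 3 := one_le_pow₀ hz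
      rw [abs_neg, abs_le]
      constructor <;> nlinarith
  rw [h]; ring

lemma gaussE5 (ha : 1 ≤ a) :
    ∫ z in Ioi a, ((z ^ 4 + 2 * z ^ 2 - 1) / (z ^ 2 + 1) ^ 2) * phiG z
      = (a / (a ^ 2 + 1)) * phiG a := by
  have h : ∫ z in Ioi a, ((z ^ 4 + 2 * z ^ 2 - 1) / (z ^ 2 + 1) ^ 2) * phiG z
      = -((-(a / (a ^ 2 + 1))) * phiG a) := by
    apply ftc0 (F := fun z => (-(z / (z ^ 2 + 1))) * phiG z)
    · intro x _
      have hd : (x:ℝ) ^ 2 + 1 ≠ 0 := by positivity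
      have H := ((((hasDerivAt_id x).div ((hasDerivAt_pow 2 x).add_const 1) hd)).neg.mul
        (hasDerivAt_phiG x))
      refine H.congr_deriv ?_
      simp only [Pi.neg_apply, Pi.add_apply, Pi.sub_apply, Pi.inv_apply, Pi.div_apply, id_eq]
      field_simp
      ring
    · exact int5on ha
    · apply tend_mul_phiG
      filter_upwards [eventually_ge_atTop (1:ℝ)] with z hz
      have hd : (0:ℝ) < z ^ 2 + 1 := by positivity
      have h1 : z / (z ^ 2 + 1) ≤ 1 := by rw [div_le_one hd]; nlinarith
      have h0 : (0:ℝ) ≤ z / (z ^ 2 + 1) := by positivity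
      rw [abs_neg, abs_of_nonneg h0]
      nlinarith [one_le_pow₀ hz (n := 3)]
  rw [h]; ring

lemma Q_le_one_div (ha : 1 ≤ a) : ∫ z in Ioi a, phiG z ≤ a⁻¹ * phiG a := by
  rw [← gaussE3 ha]
  apply setIntegral_mono_on int_phiG.integrableOn (int3on ha) measurableSet_Ioi
  intro x hx
  have hp := phiG_pos x
  have : (0:ℝ) ≤ (x ^ 2)⁻¹ := by
    have : (1:ℝ) ≤ x := le_trans ha (le_of_lt hx)
    positivity
  nlinarith

lemma Q_le_cubic (ha : 1 ≤ a) :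
    ∫ z in Ioi a, phiG z ≤ (a⁻¹ - (a ^ 3)⁻¹ + 3 * (a ^ 5)⁻¹) * phiG a := by
  rw [← gaussE4 ha]
  apply setIntegral_mono_on int_phiG.integrableOn (int4on ha) measurableSet_Ioi
  intro x hx
  have hp := phiG_pos x
  have : (0:ℝ) ≤ (x ^ 6)⁻¹ := by
    have : (1:ℝ) ≤ x := le_trans ha (le_of_lt hx)
    positivity
  nlinarith

lemma Q_ge (ha : 1 ≤ a) : (a / (a ^ 2 + 1)) * phiG a ≤ ∫ z in Ioi a, phiG z := by
  rw [← gaussE5 ha]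
  apply setIntegral_mono_on (int5on ha) int_phiG.integrableOn measurableSet_Ioi
  intro x hx
  have hp := phiG_pos x
  have hx1 : (1:ℝ) ≤ x := le_trans ha (le_of_lt hx)
  have hden : (0:ℝ) < (x ^ 2 + 1) ^ 2 := by positivity
  have hratio : (x ^ 4 + 2 * x ^ 2 - 1) / (x ^ 2 + 1) ^ 2 ≤ 1 := by
    rw [div_le_one hden]; nlinarith
  nlinarith

lemma J2_eq (ha : 1 ≤ a) :
    ∫ z in Ioi a, z ^ 2 * phiG z = a * phiG a + ∫ z in Ioi a, phiG z := by
  have hsub : ∫ z in Ioi a, (z ^ 2 * phiG z - phiG z)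
      = (∫ z in Ioi a, z ^ 2 * phiG z) - ∫ z in Ioi a, phiG z :=
    integral_sub (int_pow_phiG 2).integrableOn int_phiG.integrableOn
  have hcongr : ∫ z in Ioi a, (z ^ 2 - 1) * phiG z
      = ∫ z in Ioi a, (z ^ 2 * phiG z - phiG z) := by
    apply integral_congr_ae (ae_of_all _ fun z => by ring)
  have := gaussE1 ha
  rw [hcongr, hsub] at this
  linarith

lemma J4_eq (ha : 1 ≤ a) :
    ∫ z in Ioi a, z ^ 4 * phiG z
      = (a ^ 3 + 3 * a) * phiG a + 3 * ∫ z in Ioi a, phiG z := by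
  have hsub : ∫ z in Ioi a, (z ^ 4 * phiG z - 3 * phiG z)
      = (∫ z in Ioi a, z ^ 4 * phiG z) - ∫ z in Ioi a, 3 * phiG z :=
    integral_sub (int_pow_phiG 4).integrableOn (int_phiG.const_mul 3).integrableOn
  have hc : ∫ z in Ioi a, 3 * phiG z = 3 * ∫ z in Ioi a, phiG z := by
    exact integral_const_mul 3 _
  have hcongr : ∫ z in Ioi a, (z ^ 4 - 3) * phiG z
      = ∫ z in Ioi a, (z ^ 4 * phiG z - 3 * phiG z) := by
    apply integral_congr_ae (ae_of_all _ fun z => by ring)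
  have := gaussE2 ha
  rw [hcongr, hsub, hc] at this
  linarith

lemma S_decomp (ha : 1 ≤ a) : {z : ℝ | a ≤ |z|} = Iic (-a) ∪ Ici a := by
  ext z
  rw [mem_setOf_eq, le_abs, mem_union, mem_Iic, mem_Ici]
  constructor
  · rintro (h | h)
    · right; exact h
    · left; linarith
  · rintro (h | h)
    · right; linarith
    · left; exact h

lemma measurableSet_S : MeasurableSet {z : ℝ | a ≤ |z|} :=
  measurableSet_le measurable_const measurable_abs

lemma even_setIntegral (ha : 1 ≤ a) {g : ℝ → ℝ} (hint : Integrable g)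
    (heven : ∀ z, g (-z) = g z) :
    ∫ z in {z : ℝ | a ≤ |z|}, g z = 2 * ∫ z in Ioi a, g z := by
  rw [S_decomp ha]
  have hdisj : Disjoint (Iic (-a)) (Ici a) := by
    rw [Iic_disjoint_Ici]
    intro h; linarith
  rw [setIntegral_union hdisj measurableSet_Ici hint.integrableOn hint.integrableOn]
  have h1 : ∫ z in Iic (-a), g z = ∫ z in Ioi a, g z := by
    have : ∫ z in Iic (-a), g z = ∫ z in Iic (-a), g (-z) := by
      apply integral_congr_ae (ae_of_all _ fun z => (heven z).symm)
    rw [this, integral_comp_neg_Iic, neg_neg]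
  rw [h1, integral_Ici_eq_integral_Ioi]
  ring

end FTCfacts

lemma gaussian_withDensity :
    gaussianReal 0 1 = volume.withDensity (fun x => ((phiG x).toNNReal : ℝ≥0∞)) := by
  rw [gaussianReal_of_var_ne_zero 0 one_ne_zero]
  congr 1
  ext x
  rw [gaussianPDF_def, phiG_eq_pdf]
  rfl

lemma gauss_integral {g : ℝ → ℝ} (hg : Measurable g) :
    ∫ z, g z ∂(gaussianReal 0 1) = ∫ z, phiG z * g z := by
  rw [gaussian_withDensity,
    integral_withDensity_eq_integral_smul (measurable_phiG.real_toNNReal) g]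
  apply integral_congr_ae (ae_of_all _ fun z => ?_)
  simp only [NNReal.smul_def, smul_eq_mul]
  rw [Real.coe_toNNReal _ (phiG_pos z).le]

lemma gauss_setIntegral {g : ℝ → ℝ} (hg : Measurable g) {s : Set ℝ} (hs : MeasurableSet s) :
    ∫ z in s, g z ∂(gaussianReal 0 1) = ∫ z in s, phiG z * g z := by
  rw [gaussian_withDensity,
    setIntegral_withDensity_eq_setIntegral_smul (measurable_phiG.real_toNNReal) g hs]
  apply integral_congr_ae (ae_of_all _ fun z => ?_)
  simp only [NNReal.smul_def, smul_eq_mul]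
  rw [Real.coe_toNNReal _ (phiG_pos z).le]

lemma gauss_measure_toReal {s : Set ℝ} (hs : MeasurableSet s) :
    ((gaussianReal 0 1) s).toReal = ∫ z in s, phiG z := by
  rw [gaussianReal_apply_eq_integral 0 one_ne_zero s, phiG_eq_pdf,
    ENNReal.toReal_ofReal]
  exact setIntegral_nonneg hs fun z _ => (phiG_pos z).le

lemma exp_quad {y : ℝ} (hy : y ≤ 1) : Real.exp y ≤ 1 + y + (3/4) * y ^ 2 := by
  by_cases h : -1 ≤ y
  · have hb := Real.exp_bound (x := y) (abs_le.2 ⟨h, hy⟩) (n := 2) (by norm_num)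
    rw [abs_le] at hb
    have h2 := hb.2
    simp only [Finset.sum_range_succ, Finset.sum_range_zero, pow_zero, pow_one,
      Nat.factorial] at h2
    norm_num at h2
    have : |y| ^ 2 = y ^ 2 := sq_abs y
    nlinarith [hb.1, sq_abs y]
  · push_neg at h
    have h1 : Real.exp y ≤ Real.exp (-1) := Real.exp_le_exp.2 (by linarith)
    have h2 : Real.exp (-1) ≤ 1/2 := by
      rw [Real.exp_neg]
      have : (2:ℝ) ≤ Real.exp 1 := by
        have := Real.add_one_le_exp (1:ℝ); linarith
      rw [inv_le_comm₀ (by positivity) (by norm_num)] at *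
      · linarith
    nlinarith [sq_nonneg (y + 2/3)]

lemma sqrt_two_pi_inv_le : (Real.sqrt (2 * π))⁻¹ ≤ 2/5 := by
  have h : (5/2 : ℝ) ≤ Real.sqrt (2 * π) := by
    rw [show (5/2:ℝ) = Real.sqrt ((5/2)^2) by rw [Real.sqrt_sq]; norm_num]
    apply Real.sqrt_le_sqrt
    nlinarith [Real.pi_gt_d6]
  rw [inv_le_comm₀ (by positivity) (by norm_num)]
  linarith

end AuxLemmas

set_option maxHeartbeats 1000000 in
/-- MGF bound: for a standard Gaussian `Z`, `a ≥ 1`, `X = (Z² − ν_a)·1{|Z| ≥ a}` and any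
`λ ∈ (0, 1/2]`, one has `E(e^{−λX}) ≤ exp(6·λ²·e^{−a²/2})`. -/
theorem thresholded_chi_sq_mgf_bound
    {Ω : Type*} [MeasureSpace Ω] [IsProbabilityMeasure (ℙ : Measure Ω)]
    (Z : Ω → ℝ) (hlaw : Measure.map Z ℙ = gaussianReal 0 1)
    (a : ℝ) (ha : 1 ≤ a) (l : ℝ) (hl0 : 0 < l) (hl : l ≤ 1 / 2) :
    (∫ ω, Real.exp (-l * (if a ≤ |Z ω| then Z ω ^ 2 - nuGauss a else 0)) ∂ℙ)
      ≤ Real.exp (6 * l ^ 2 * Real.exp (-a ^ 2 / 2)) := by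
  classical
  set ν : ℝ := nuGauss a with hνdef
  set Q : ℝ := ∫ z in Set.Ioi a, phiG z with hQdef
  set p : ℝ := phiG a with hpdef
  have hppos : 0 < p := phiG_pos a
  have ha0 : 0 < a := lt_of_lt_of_le one_pos ha
  have hQpos : 0 < Q := lt_of_lt_of_le (by positivity) (Q_ge ha)
  -- basic Q bounds in product form
  have h1 : a * Q ≤ p := by
    have := Q_le_one_div ha
    calc a * Q ≤ a * (a⁻¹ * p) := by
          exact mul_le_mul_of_nonneg_left this ha0.le
      _ = p := by field_simp
  have h2 : a ^ 5 * Q ≤ (a ^ 4 - a ^ 2 + 3) * p := by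
    have := Q_le_cubic ha
    calc a ^ 5 * Q ≤ a ^ 5 * ((a⁻¹ - (a ^ 3)⁻¹ + 3 * (a ^ 5)⁻¹) * p) := by
          exact mul_le_mul_of_nonneg_left this (by positivity)
      _ = (a ^ 4 - a ^ 2 + 3) * p := by field_simp
  have h3 : a * p ≤ (a ^ 2 + 1) * Q := by
    have := Q_ge ha
    have h' : (a ^ 2 + 1) * ((a / (a ^ 2 + 1)) * p) ≤ (a ^ 2 + 1) * Q :=
      mul_le_mul_of_nonneg_left this (by positivity)
    calc a * p = (a ^ 2 + 1) * ((a / (a ^ 2 + 1)) * p) := by field_simp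
      _ ≤ (a ^ 2 + 1) * Q := h'
  -- the moments of the gaussian over S
  have hSm : MeasurableSet {z : ℝ | a ≤ |z|} := measurableSet_S
  have hphiG_even : ∀ z : ℝ, phiG (-z) = phiG z := by
    intro z; unfold phiG; rw [neg_sq]
  have hP : ∫ z in {z : ℝ | a ≤ |z|}, phiG z = 2 * Q :=
    even_setIntegral ha int_phiG hphiG_even
  have hM2 : ∫ z in {z : ℝ | a ≤ |z|}, z ^ 2 * phiG z = 2 * (a * p + Q) := by
    rw [even_setIntegral ha (int_pow_phiG 2) fun z => by
      rw [hphiG_even z]; ring, J2_eq ha]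
    try ring
  have hM4 : ∫ z in {z : ℝ | a ≤ |z|}, z ^ 4 * phiG z
      = 2 * ((a ^ 3 + 3 * a) * p + 3 * Q) := by
    rw [even_setIntegral ha (int_pow_phiG 4) fun z => by
      rw [hphiG_even z]; ring, J4_eq ha]
    try ring
  -- value of ν
  have hν : ν = (a * p + Q) / Q := by
    rw [hνdef]
    unfold nuGauss
    rw [gauss_setIntegral (g := fun z => z ^ 2) (by measurability) hSm,
      gauss_measure_toReal hSm, hP]
    have : ∫ z in {z : ℝ | a ≤ |z|}, phiG z * z ^ 2
        = ∫ z in {z : ℝ | a ≤ |z|}, z ^ 2 * phiG z :=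
      integral_congr_ae (ae_of_all _ fun z => mul_comm _ _)
    rw [this, hM2]
    exact mul_div_mul_left _ _ two_ne_zero
  -- ν is at most a² + 2
  have hν_le : ν ≤ a ^ 2 + 2 := by
    rw [hν, div_le_iff₀ hQpos]
    nlinarith
  -- the thresholded random variable
  set f : ℝ → ℝ := fun z => if a ≤ |z| then z ^ 2 - ν else 0 with hfdef
  have hf_meas : Measurable f :=
    Measurable.ite hSm ((measurable_id.pow_const 2).sub_const ν) measurable_const
  -- mean zero
  have hE0 : ∫ z, phiG z * f z = 0 := by
    have hind : ∀ z, phiG z * f z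
        = Set.indicator {z : ℝ | a ≤ |z|} (fun z => z ^ 2 * phiG z - ν * phiG z) z := by
      intro z
      rw [Set.indicator_apply]
      by_cases h : z ∈ {z : ℝ | a ≤ |z|}
      · rw [if_pos h]
        simp only [Set.mem_setOf_eq] at h
        simp only [hfdef]
        rw [if_pos h]; ring
      · rw [if_neg h]
        simp only [Set.mem_setOf_eq] at h
        simp only [hfdef]
        rw [if_neg h]; ring
    rw [integral_congr_ae (ae_of_all _ hind), integral_indicator hSm,
      integral_sub (int_pow_phiG 2).integrableOn (int_phiG.const_mul ν).integrableOn,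
      integral_const_mul, hM2, hP, hν]
    field_simp
    ring
  -- second moment
  have hE2 : ∫ z, phiG z * f z ^ 2
      = 2 * ((a ^ 3 + 3 * a) * p + 3 * Q) - (2 * ν) * (2 * (a * p + Q)) + ν ^ 2 * (2 * Q) := by
    have hind : ∀ z, phiG z * f z ^ 2
        = Set.indicator {z : ℝ | a ≤ |z|}
            (fun z => z ^ 4 * phiG z - (2 * ν) * (z ^ 2 * phiG z) + ν ^ 2 * phiG z) z := by
      intro z
      rw [Set.indicator_apply]
      by_cases h : z ∈ {z : ℝ | a ≤ |z|}
      · rw [if_pos h]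
        simp only [Set.mem_setOf_eq] at h
        simp only [hfdef]
        rw [if_pos h]; ring
      · rw [if_neg h]
        simp only [Set.mem_setOf_eq] at h
        simp only [hfdef]
        rw [if_neg h]; ring
    have hA : Integrable (fun x : ℝ => x ^ 4 * phiG x - 2 * ν * (x ^ 2 * phiG x)) := by
      refine ((int_pow_phiG 4).sub ((int_pow_phiG 2).const_mul (2 * ν))).congr
        (ae_of_all _ fun x => ?_)
      simp only [Pi.sub_apply]
    rw [integral_congr_ae (ae_of_all _ hind), integral_indicator hSm,
      integral_add (hA.integrableOn)
        ((int_phiG.const_mul (ν ^ 2)).integrableOn),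
      integral_sub (int_pow_phiG 4).integrableOn
        ((int_pow_phiG 2).const_mul (2 * ν)).integrableOn,
      integral_const_mul, integral_const_mul, hM2, hP, hM4]
  -- bound on the second moment
  have hWle : ∫ z, phiG z * f z ^ 2 ≤ 4 * Real.exp (-a ^ 2 / 2) := by
    have hQp : Q ≤ p := le_trans (le_mul_of_one_le_left hQpos.le ha) h1
    have hcase : p * Q * (a ^ 3 + a - 3) ≤ a ^ 2 * p ^ 2 := by
      rcases le_or_gt (a ^ 3 + a - 3) 0 with hc | hc
      · nlinarith [mul_pos hppos hQpos]
      · have hstep : (a ^ 3 + a - 3) * (a ^ 5 * Q)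
            ≤ (a ^ 3 + a - 3) * ((a ^ 4 - a ^ 2 + 3) * p) :=
          mul_le_mul_of_nonneg_left h2 hc.le
        have hpoly : (a ^ 3 + a - 3) * (a ^ 4 - a ^ 2 + 3) ≤ a ^ 7 := by
          nlinarith [sq_nonneg (a - 1), sq_nonneg (a ^ 2 - 1), sq_nonneg a,
            pow_pos ha0 2, pow_pos ha0 3, pow_pos ha0 4,
            mul_nonneg (mul_nonneg (sub_nonneg.2 ha) (sub_nonneg.2 ha)) (sub_nonneg.2 ha),
            mul_nonneg (sub_nonneg.2 (one_le_pow₀ ha (n := 2))) (sub_nonneg.2 ha),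
            mul_nonneg (sub_nonneg.2 (one_le_pow₀ ha (n := 3))) (sub_nonneg.2 ha),
            mul_nonneg (sub_nonneg.2 (one_le_pow₀ ha (n := 4))) (sub_nonneg.2 ha)]
        have h5 : (0:ℝ) < a ^ 5 := by positivity
        have hdiv5 : a ^ 5 * ((a ^ 3 + a - 3) * Q) ≤ a ^ 5 * (a ^ 2 * p) := by
          nlinarith [mul_le_mul_of_nonneg_right hpoly hppos.le]
        have hq2 := le_of_mul_le_mul_left hdiv5 h5
        nlinarith [mul_le_mul_of_nonneg_left hq2 hppos.le]
    have hkey : (2 * ((a ^ 3 + 3 * a) * p + 3 * Q) - 10 * p) * Q ≤ 2 * (a * p + Q) ^ 2 := by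
      nlinarith [hcase, mul_le_mul_of_nonneg_right hQp hQpos.le]
    have hdiv : 2 * ((a ^ 3 + 3 * a) * p + 3 * Q) - 10 * p ≤ 2 * (a * p + Q) ^ 2 / Q :=
      (le_div_iff₀ hQpos).2 hkey
    have hform : 2 * ((a ^ 3 + 3 * a) * p + 3 * Q) - (2 * ν) * (2 * (a * p + Q))
        + ν ^ 2 * (2 * Q) = 2 * ((a ^ 3 + 3 * a) * p + 3 * Q) - 2 * (a * p + Q) ^ 2 / Q := by
      rw [hν]; field_simp; ring
    have h10 : (10 : ℝ) * p ≤ 4 * Real.exp (-a ^ 2 / 2) := by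
      have hexp : (0:ℝ) < Real.exp (-a ^ 2 / 2) := Real.exp_pos _
      have : p = (Real.sqrt (2 * π))⁻¹ * Real.exp (-a ^ 2 / 2) := rfl
      rw [this]
      nlinarith [sqrt_two_pi_inv_le]
    rw [hE2, hform]
    linarith
  -- pointwise exponential bound
  have hfl : ∀ z, -l * f z ≤ 1 := by
    intro z
    simp only [hfdef]
    by_cases h : a ≤ |z|
    · rw [if_pos h]
      have hz2 : a ^ 2 ≤ z ^ 2 := by
        rw [← sq_abs z]
        exact pow_le_pow_left₀ ha0.le h 2
      nlinarith
    · rw [if_neg h]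
      norm_num
  have hpt : ∀ z, phiG z * Real.exp (-l * f z)
      ≤ phiG z * (1 + (-l * f z) + (3/4) * (-l * f z) ^ 2) := fun z =>
    mul_le_mul_of_nonneg_left (exp_quad (hfl z)) (phiG_pos z).le
  -- integrability
  have hintG : Integrable (fun z => phiG z * Real.exp (-l * f z)) := by
    apply Integrable.mono' (int_phiG.const_mul 3)
    · exact (measurable_phiG.mul ((hf_meas.const_mul (-l)).exp)).aestronglyMeasurable
    · refine ae_of_all _ fun z => ?_
      have hp1 := phiG_pos z
      have hexp : Real.exp (-l * f z) ≤ 3 := by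
        calc Real.exp (-l * f z) ≤ Real.exp 1 := Real.exp_le_exp.2 (hfl z)
          _ ≤ 3 := by nlinarith [Real.exp_one_lt_d9]
      rw [Real.norm_eq_abs, abs_of_nonneg (by positivity)]
      nlinarith [Real.exp_pos (-l * f z)]
  have hint_f : Integrable (fun z => phiG z * f z) := by
    have hmaj : Integrable (fun z => z ^ 2 * phiG z + |ν| * phiG z) :=
      (int_pow_phiG 2).add (int_phiG.const_mul |ν|)
    apply Integrable.mono' hmaj (measurable_phiG.mul hf_meas).aestronglyMeasurable
    refine ae_of_all _ fun z => ?_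
    have hp1 := phiG_pos z
    have hfb : |f z| ≤ z ^ 2 + |ν| := by
      simp only [hfdef]
      by_cases h : a ≤ |z|
      · rw [if_pos h, abs_le]
        constructor <;> nlinarith [le_abs_self ν, neg_abs_le ν, sq_nonneg z]
      · rw [if_neg h, abs_zero]
        positivity
    rw [Real.norm_eq_abs, Pi.mul_apply, abs_mul, abs_of_pos hp1]
    nlinarith [abs_nonneg (f z)]
  have hint_f2 : Integrable (fun z => phiG z * f z ^ 2) := by
    have hmaj : Integrable (fun z => z ^ 4 * phiG z + 2 * |ν| * (z ^ 2 * phiG z)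
        + ν ^ 2 * phiG z) :=
      ((int_pow_phiG 4).add ((int_pow_phiG 2).const_mul (2 * |ν|))).add
        (int_phiG.const_mul (ν ^ 2))
    apply Integrable.mono' hmaj
      (measurable_phiG.mul (hf_meas.pow_const 2)).aestronglyMeasurable
    refine ae_of_all _ fun z => ?_
    have hp1 := phiG_pos z
    have hfb : f z ^ 2 ≤ z ^ 4 + 2 * |ν| * z ^ 2 + ν ^ 2 := by
      simp only [hfdef]
      by_cases h : a ≤ |z|
      · rw [if_pos h]
        nlinarith [le_abs_self ν, neg_abs_le ν, sq_nonneg z, abs_nonneg ν]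
      · rw [if_neg h]
        have h0 : ((0:ℝ)) ^ 2 = 0 := by norm_num
        rw [h0]
        positivity
    rw [Real.norm_eq_abs, Pi.mul_apply, abs_of_nonneg (by positivity)]
    nlinarith [sq_nonneg (f z)]
  -- the RHS integral
  have hint_phiG1 : ∫ z, phiG z = 1 := by
    rw [← phiG_eq_pdf]
    exact integral_gaussianPDFReal_eq_one 0 one_ne_zero
  have hRint : ∫ z, phiG z * (1 + (-l * f z) + (3/4) * (-l * f z) ^ 2)
      = 1 + (3/4) * l ^ 2 * ∫ z, phiG z * f z ^ 2 := by
    have hcongr : ∀ z, phiG z * (1 + (-l * f z) + (3/4) * (-l * f z) ^ 2)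
        = (phiG z + (-l) * (phiG z * f z)) + ((3/4) * l ^ 2) * (phiG z * f z ^ 2) := by
      intro z; ring
    have hB : Integrable (fun z : ℝ => phiG z + (-l) * (phiG z * f z)) := by
      refine (int_phiG.add (hint_f.const_mul (-l))).congr (ae_of_all _ fun z => ?_)
      simp only [Pi.add_apply]
    rw [integral_congr_ae (ae_of_all _ hcongr),
      integral_add hB (hint_f2.const_mul ((3/4) * l ^ 2)),
      integral_add int_phiG (hint_f.const_mul (-l)),
      integral_const_mul, integral_const_mul, hE0, hint_phiG1]
    ring
  -- identify the LHS with an integral against the gaussian density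
  have hZae : AEMeasurable Z ℙ := by
    by_contra h
    rw [Measure.map_of_not_aemeasurable h] at hlaw
    have h1 := congrArg (fun μ : Measure ℝ => μ Set.univ) hlaw
    simp [measure_univ] at h1
  have hg_meas : Measurable (fun z => Real.exp (-l * f z)) := (hf_meas.const_mul (-l)).exp
  have hLHS : (∫ ω, Real.exp (-l * (if a ≤ |Z ω| then Z ω ^ 2 - nuGauss a else 0)) ∂ℙ)
      = ∫ z, phiG z * Real.exp (-l * f z) := by
    rw [← gauss_integral hg_meas, ← hlaw, integral_map hZae hg_meas.aestronglyMeasurable]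
  -- conclude
  rw [hLHS]
  have hEpos : (0:ℝ) < Real.exp (-a ^ 2 / 2) := Real.exp_pos _
  calc ∫ z, phiG z * Real.exp (-l * f z)
      ≤ ∫ z, phiG z * (1 + (-l * f z) + (3/4) * (-l * f z) ^ 2) := by
        apply integral_mono hintG _ hpt
        refine ((int_phiG.add (hint_f.const_mul (-l))).add
          (hint_f2.const_mul ((3/4) * l ^ 2))).congr (ae_of_all _ fun z => ?_)
        simp only [Pi.add_apply]
        ring
    _ = 1 + (3/4) * l ^ 2 * ∫ z, phiG z * f z ^ 2 := hRint
    _ ≤ 1 + (3/4) * l ^ 2 * (4 * Real.exp (-a ^ 2 / 2)) := by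
        have hl2 : (0:ℝ) ≤ (3/4) * l ^ 2 := by positivity
        nlinarith [hWle]
    _ ≤ Real.exp (6 * l ^ 2 * Real.exp (-a ^ 2 / 2)) := by
        have h6 : 6 * l ^ 2 * Real.exp (-a ^ 2 / 2) + 1
            ≤ Real.exp (6 * l ^ 2 * Real.exp (-a ^ 2 / 2)) :=
          Real.add_one_le_exp _
        nlinarith [sq_nonneg l, mul_pos (mul_pos (by norm_num : (0:ℝ) < 6)
          (pow_pos hl0 2)) hEpos]
end

section
/- Let Z_1, …, Z_p be independent standard Gaussian random variables, let a ≥ 1, and let ν_a = E(Z² | |Z| ≥ a) for a standard Gaussian Z. Then for every t > 0, P( Σ_{i=1}^p (Z_i² − ν_a)·1{|Z_i| ≥ a} < −t ) ≤ exp( −min( t²·e^{a²/2}/(24p), t/4 ) ). -/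
open MeasureTheory ProbabilityTheory Real
open scoped ENNReal NNReal Classical

open Filter Set Topology

namespace TCSC

/-- unnormalized gaussian density -/
noncomputable def gE (x : ℝ) : ℝ := Real.exp (-x ^ 2 / 2)

/-- unnormalized gaussian upper tail -/
noncomputable def gQ (a : ℝ) : ℝ := ∫ x in Set.Ioi a, gE x

lemma gE_pos (x : ℝ) : 0 < gE x := Real.exp_pos _

lemma gE_even (x : ℝ) : gE (-x) = gE x := by simp [gE]

lemma continuous_gE : Continuous gE := by
  have : Continuous fun x : ℝ => -x ^ 2 / 2 := by continuity
  exact Real.continuous_exp.comp this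

lemma integrable_gE : Integrable gE := by
  have h := integrable_exp_neg_mul_sq (b := 2⁻¹) (by norm_num)
  refine h.congr ?_
  filter_upwards with x
  simp only [gE]
  ring_nf

lemma hasDerivAt_gE (x : ℝ) : HasDerivAt gE (-x * gE x) x := by
  have h1 : HasDerivAt (fun y : ℝ => -y ^ 2 / 2) (-x) x := by
    have h := ((hasDerivAt_pow 2 x).neg).div_const 2
    refine h.congr_deriv ?_
    simp
    ring
  have h2 := (Real.hasDerivAt_exp (-x ^ 2 / 2)).comp x h1
  have h3 : HasDerivAt (fun y : ℝ => rexp (-y ^ 2 / 2)) (rexp (-x ^ 2 / 2) * (-x)) x := h2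
  have h4 : rexp (-x ^ 2 / 2) * (-x) = -x * gE x := by simp [gE]; ring
  rw [h4] at h3
  exact h3

lemma integrableOn_pow_gE (k : ℕ) {a : ℝ} (ha : 0 < a) :
    IntegrableOn (fun x => x ^ k * gE x) (Set.Ici a) := by
  have h := integrableOn_rpow_mul_exp_neg_mul_sq (b := 2⁻¹) (by norm_num)
    (s := (k : ℝ)) ((by norm_num : (-1:ℝ) < 0).trans_le (Nat.cast_nonneg k))
  have h2 : IntegrableOn (fun x : ℝ => x ^ (k : ℝ) * Real.exp (-2⁻¹ * x ^ 2)) (Set.Ici a) :=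
    h.mono_set (fun x hx => lt_of_lt_of_le ha hx)
  refine h2.congr_fun (fun x hx => ?_) measurableSet_Ici
  have hx0 : (0:ℝ) ≤ x := le_trans ha.le hx
  simp only [Real.rpow_natCast]
  simp only [gE]
  ring_nf

lemma integrableOn_gE {a : ℝ} : IntegrableOn gE (Set.Ici a) := integrable_gE.integrableOn

lemma integrableOn_gE_Ioi {a : ℝ} : IntegrableOn gE (Set.Ioi a) := integrable_gE.integrableOn

end TCSC

namespace TCSC2
open TCSC

lemma integrableOn_pow_gE_Ioi (k : ℕ) {a : ℝ} (ha : 0 < a) :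
    IntegrableOn (fun x => x ^ k * gE x) (Set.Ioi a) :=
  (integrableOn_pow_gE k ha).mono_set Set.Ioi_subset_Ici_self

lemma tendsto_pow_gE (k : ℕ) : Tendsto (fun x => x ^ k * gE x) atTop (𝓝 0) := by
  have hsq : Tendsto (fun x : ℝ => x ^ 2 / 2) atTop atTop :=
    (tendsto_pow_atTop (two_ne_zero)).atTop_div_const (by norm_num)
  have hg : Tendsto (fun u : ℝ => u ^ k * Real.exp (-u)) atTop (𝓝 0) :=
    tendsto_pow_mul_exp_neg_atTop_nhds_zero k
  have hcomp : Tendsto (fun x : ℝ => (x ^ 2 / 2) ^ k * Real.exp (-(x ^ 2 / 2))) atTop (𝓝 0) :=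
    hg.comp hsq
  have hub : Tendsto (fun x : ℝ => 2 ^ k * ((x ^ 2 / 2) ^ k * Real.exp (-(x ^ 2 / 2))))
      atTop (𝓝 0) := by
    simpa using hcomp.const_mul ((2:ℝ) ^ k)
  refine tendsto_of_tendsto_of_tendsto_of_le_of_le' tendsto_const_nhds hub ?_ ?_
  · filter_upwards [eventually_ge_atTop (0:ℝ)] with x hx
    exact mul_nonneg (pow_nonneg hx k) (gE_pos x).le
  · filter_upwards [eventually_ge_atTop (1:ℝ)] with x hx
    have h1 : x ^ k ≤ 2 ^ k * (x ^ 2 / 2) ^ k := by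
      rw [← mul_pow]
      have : x ^ k ≤ (x ^ 2) ^ k := by
        apply pow_le_pow_left₀ (by linarith) ?_ k
        nlinarith
      simpa [mul_div_cancel₀] using this
    have h2 : gE x = Real.exp (-(x ^ 2 / 2)) := by rw [gE]; ring_nf
    rw [h2]
    have := mul_le_mul_of_nonneg_right h1 (Real.exp_pos (-(x ^ 2 / 2))).le
    linarith [this]

lemma gQ_nonneg (a : ℝ) : 0 ≤ gQ a :=
  setIntegral_nonneg measurableSet_Ioi (fun x _ => (gE_pos x).le)

lemma gQ_pos (a : ℝ) : 0 < gQ a := by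
  rw [gQ, setIntegral_pos_iff_support_of_nonneg_ae]
  · have : Function.support gE = Set.univ := by
      ext x; simp [Function.support, (gE_pos x).ne']
    rw [this]
    simp [Set.univ_inter]
  · filter_upwards with x using (gE_pos x).le
  · exact integrableOn_gE_Ioi

lemma J1 {a : ℝ} (ha : 0 < a) : ∫ x in Set.Ioi a, x * gE x = gE a := by
  have hF : ∀ x ∈ Set.Ici a, HasDerivAt (fun y => -gE y) (x * gE x) x := by
    intro x _
    exact (hasDerivAt_gE x).neg.congr_deriv (by ring)
  have hint : IntegrableOn (fun x => x * gE x) (Set.Ioi a) := by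
    simpa using integrableOn_pow_gE_Ioi 1 ha
  have hlim : Tendsto (fun y => -gE y) atTop (𝓝 0) := by
    have := (tendsto_pow_gE 0).neg
    simpa using this
  have := integral_Ioi_of_hasDerivAt_of_tendsto' hF hint hlim
  simpa using this

lemma J2 {a : ℝ} (ha : 0 < a) : ∫ x in Set.Ioi a, x ^ 2 * gE x = a * gE a + gQ a := by
  have hF : ∀ x ∈ Set.Ici a, HasDerivAt (fun y => -(y * gE y)) (x ^ 2 * gE x - gE x) x := by
    intro x _
    have := ((hasDerivAt_id x).mul (hasDerivAt_gE x)).neg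
    refine this.congr_deriv ?_
    simp only [id_eq]
    ring
  have hint : IntegrableOn (fun x => x ^ 2 * gE x - gE x) (Set.Ioi a) :=
    (integrableOn_pow_gE_Ioi 2 ha).sub integrableOn_gE_Ioi
  have hlim : Tendsto (fun y => -(y * gE y)) atTop (𝓝 0) := by
    have := (tendsto_pow_gE 1).neg
    simpa using this
  have hkey := integral_Ioi_of_hasDerivAt_of_tendsto' hF hint hlim
  have hsub : ∫ x in Set.Ioi a, (x ^ 2 * gE x - gE x)
      = (∫ x in Set.Ioi a, x ^ 2 * gE x) - gQ a :=
    integral_sub (integrableOn_pow_gE_Ioi 2 ha) integrableOn_gE_Ioi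
  rw [hsub] at hkey
  simp only [zero_sub, neg_neg] at hkey
  linarith

lemma J4 {a : ℝ} (ha : 0 < a) :
    ∫ x in Set.Ioi a, x ^ 4 * gE x = a ^ 3 * gE a + 3 * (a * gE a + gQ a) := by
  have hF : ∀ x ∈ Set.Ici a, HasDerivAt (fun y => -(y ^ 3 * gE y))
      (x ^ 4 * gE x - 3 * (x ^ 2 * gE x)) x := by
    intro x _
    have := ((hasDerivAt_pow 3 x).mul (hasDerivAt_gE x)).neg
    refine this.congr_deriv ?_
    ring
  have hint : IntegrableOn (fun x => x ^ 4 * gE x - 3 * (x ^ 2 * gE x)) (Set.Ioi a) :=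
    (integrableOn_pow_gE_Ioi 4 ha).sub ((integrableOn_pow_gE_Ioi 2 ha).const_mul 3)
  have hlim : Tendsto (fun y => -(y ^ 3 * gE y)) atTop (𝓝 0) := by
    have := (tendsto_pow_gE 3).neg
    simpa using this
  have hkey := integral_Ioi_of_hasDerivAt_of_tendsto' hF hint hlim
  have hsub : ∫ x in Set.Ioi a, (x ^ 4 * gE x - 3 * (x ^ 2 * gE x))
      = (∫ x in Set.Ioi a, x ^ 4 * gE x) - 3 * ∫ x in Set.Ioi a, x ^ 2 * gE x := by
    rw [integral_sub (integrableOn_pow_gE_Ioi 4 ha)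
      ((integrableOn_pow_gE_Ioi 2 ha).const_mul 3), integral_const_mul]
  rw [hsub, J2 ha] at hkey
  simp only [zero_sub, neg_neg] at hkey
  linarith

lemma mills1 {a : ℝ} (ha : 0 < a) : gQ a ≤ gE a / a := by
  have hmono : gQ a ≤ ∫ x in Set.Ioi a, a⁻¹ * (x * gE x) := by
    rw [gQ]
    have hintx : IntegrableOn (fun x => x * gE x) (Set.Ioi a) := by
      simpa using integrableOn_pow_gE_Ioi 1 ha
    refine setIntegral_mono_on integrableOn_gE_Ioi
      (hintx.const_mul a⁻¹) measurableSet_Ioi ?_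
    intro x hx
    rw [Set.mem_Ioi] at hx
    rw [← mul_assoc]
    nth_rewrite 1 [show gE x = 1 * gE x by ring]
    apply mul_le_mul_of_nonneg_right _ (gE_pos x).le
    rw [inv_mul_eq_div, le_div_iff₀ ha]
    linarith
  rw [integral_const_mul, J1 ha] at hmono
  rw [div_eq_inv_mul]
  exact hmono

lemma hasDerivAt_gQ {x : ℝ} (hx : 0 < x) : HasDerivAt gQ (-gE x) x := by
  have hid : ∀ y ∈ Set.Ioi (0:ℝ), gQ y = gQ 0 - ∫ t in (0:ℝ)..y, gE t := by
    intro y hy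
    rw [Set.mem_Ioi] at hy
    have hsplit : gQ 0 = (∫ t in Set.Ioc (0:ℝ) y, gE t) + gQ y := by
      rw [gQ, gQ, ← setIntegral_union (Set.Ioc_disjoint_Ioi le_rfl) measurableSet_Ioi
        integrable_gE.integrableOn integrable_gE.integrableOn,
        Set.Ioc_union_Ioi_eq_Ioi hy.le]
    rw [intervalIntegral.integral_of_le hy.le]
    linarith
  have h2 : HasDerivAt (fun y => gQ 0 - ∫ t in (0:ℝ)..y, gE t) (-gE x) x := by
    have h3 := intervalIntegral.integral_hasDerivAt_right
      (integrable_gE.intervalIntegrable (a := 0) (b := x))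
      (continuous_gE.stronglyMeasurable.stronglyMeasurableAtFilter)
      (continuous_gE.continuousAt)
    exact ((hasDerivAt_const x (gQ 0)).sub h3).congr_deriv (by ring)
  refine h2.congr_of_eventuallyEq ?_
  filter_upwards [Ioi_mem_nhds hx] with y hy using hid y hy

lemma tendsto_gE : Tendsto gE atTop (𝓝 0) := by
  have := tendsto_pow_gE 0
  simpa using this

lemma tendsto_gQ : Tendsto gQ atTop (𝓝 0) := by
  refine tendsto_of_tendsto_of_tendsto_of_le_of_le' tendsto_const_nhds tendsto_gE ?_ ?_
  · filter_upwards with x using gQ_nonneg x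
  · filter_upwards [eventually_ge_atTop (1:ℝ)] with x hx
    have hx0 : (0:ℝ) < x := by linarith
    calc gQ x ≤ gE x / x := mills1 hx0
    _ ≤ gE x := by
        rw [div_le_iff₀ hx0]
        nlinarith [gE_pos x]

/-- If `F` has nonpositive derivative on `[1, ∞)` and tends to `0`, then `F ≥ 0` there. -/
lemma nonneg_of_deriv_nonpos_tendsto (F F' : ℝ → ℝ)
    (hF : ∀ x ∈ Set.Ici (1:ℝ), HasDerivAt F (F' x) x)
    (hF' : ∀ x ∈ Set.Ioi (1:ℝ), F' x ≤ 0)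
    (hlim : Tendsto F atTop (𝓝 0)) {a : ℝ} (ha : 1 ≤ a) : 0 ≤ F a := by
  have hanti : AntitoneOn F (Set.Ici (1:ℝ)) := by
    refine antitoneOn_of_deriv_nonpos (convex_Ici 1) ?_ ?_ ?_
    · exact fun x hx => (hF x hx).continuousAt.continuousWithinAt
    · intro x hx
      rw [interior_Ici] at hx
      exact (hF x (Set.mem_Ici.mpr hx.le)).differentiableAt.differentiableWithinAt
    · intro x hx
      rw [interior_Ici] at hx
      rw [(hF x (Set.mem_Ici.mpr (le_of_lt hx))).deriv]
      exact hF' x hx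
  refine le_of_tendsto hlim ?_
  filter_upwards [eventually_ge_atTop a] with b hb
  exact hanti (Set.mem_Ici.mpr ha) (Set.mem_Ici.mpr (ha.trans hb)) hb

lemma mills2 {a : ℝ} (ha : 1 ≤ a) : a * gE a ≤ (a ^ 2 + 1) * gQ a := by
  set F : ℝ → ℝ := fun x => (x ^ 2 + 1) * gQ x - x * gE x with hFdef
  set F' : ℝ → ℝ := fun x => 2 * x * gQ x - 2 * gE x with hF'def
  have hF : ∀ x ∈ Set.Ici (1:ℝ), HasDerivAt F (F' x) x := by
    intro x hx
    rw [Set.mem_Ici] at hx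
    have h1 : HasDerivAt (fun y : ℝ => y ^ 2 + 1) (2 * x) x := by
      simpa using (hasDerivAt_pow 2 x).add_const 1
    have h2 := (h1.mul (hasDerivAt_gQ (by linarith))).sub
      ((hasDerivAt_id x).mul (hasDerivAt_gE x))
    refine h2.congr_deriv ?_
    simp only [hF'def, id_eq]
    ring
  have hF' : ∀ x ∈ Set.Ioi (1:ℝ), F' x ≤ 0 := by
    intro x hx
    rw [Set.mem_Ioi] at hx
    have hx0 : (0:ℝ) < x := by linarith
    have := mills1 hx0
    have h2 : 2 * x * gQ x ≤ 2 * x * (gE x / x) :=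
      mul_le_mul_of_nonneg_left this (by linarith)
    simp only [hF'def]
    rw [mul_div_assoc'] at h2
    have : 2 * x * gE x / x = 2 * gE x := by field_simp
    rw [this] at h2
    linarith
  have hlim : Tendsto F atTop (𝓝 0) := by
    have h1 : Tendsto (fun x => (x ^ 2 + 1) * gQ x) atTop (𝓝 0) := by
      refine tendsto_of_tendsto_of_tendsto_of_le_of_le' tendsto_const_nhds
        (by simpa using (tendsto_pow_gE 1).const_mul (2:ℝ)) ?_ ?_
      · filter_upwards [eventually_ge_atTop (0:ℝ)] with x hx
        exact mul_nonneg (by positivity) (gQ_nonneg x)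
      · filter_upwards [eventually_ge_atTop (1:ℝ)] with x hx
        have hx0 : (0:ℝ) < x := by linarith
        calc (x ^ 2 + 1) * gQ x ≤ (x ^ 2 + 1) * (gE x / x) :=
              mul_le_mul_of_nonneg_left (mills1 hx0) (by positivity)
        _ ≤ 2 * (x * gE x) := by
              rw [show (x ^ 2 + 1) * (gE x / x) = ((x ^ 2 + 1) * gE x) / x by ring,
                div_le_iff₀ hx0]
              nlinarith [mul_nonneg (show (0:ℝ) ≤ x ^ 2 - 1 by nlinarith) (gE_pos x).le]
    have h2 : Tendsto (fun x => x * gE x) atTop (𝓝 0) := by simpa using tendsto_pow_gE 1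
    simpa using h1.sub h2
  have := nonneg_of_deriv_nonpos_tendsto F F' hF hF' hlim ha
  simp only [hFdef] at this
  linarith

lemma mills3 {a : ℝ} (ha : 1 ≤ a) : gQ a ≤ gE a * ((a ^ 4 - a ^ 2 + 3) / a ^ 5) := by
  set F : ℝ → ℝ := fun x => gE x * ((x ^ 4 - x ^ 2 + 3) / x ^ 5) - gQ x with hFdef
  set F' : ℝ → ℝ := fun x => -15 * gE x / x ^ 6 with hF'def
  have hF : ∀ x ∈ Set.Ici (1:ℝ), HasDerivAt F (F' x) x := by
    intro x hx
    rw [Set.mem_Ici] at hx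
    have hx0 : (0:ℝ) < x := by linarith
    have hN : HasDerivAt (fun y : ℝ => y ^ 4 - y ^ 2 + 3) (4 * x ^ 3 - 2 * x) x := by
      have := ((hasDerivAt_pow 4 x).sub (hasDerivAt_pow 2 x)).add_const 3
      refine this.congr_deriv ?_
      push_cast
      ring
    have hD : HasDerivAt (fun y : ℝ => y ^ 5) (5 * x ^ 4) x := by
      simpa using hasDerivAt_pow 5 x
    have hP := hN.div hD (by positivity)
    have h2 := ((hasDerivAt_gE x).mul hP).sub (hasDerivAt_gQ hx0)
    refine h2.congr_deriv ?_
    simp only [hF'def, Pi.div_apply]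
    field_simp
    ring
  have hF' : ∀ x ∈ Set.Ioi (1:ℝ), F' x ≤ 0 := by
    intro x hx
    rw [Set.mem_Ioi] at hx
    have : (0:ℝ) < x ^ 6 := by positivity
    simp only [hF'def]
    apply div_nonpos_of_nonpos_of_nonneg _ this.le
    nlinarith [gE_pos x]
  have hlim : Tendsto F atTop (𝓝 0) := by
    have h1 : Tendsto (fun x => gE x * ((x ^ 4 - x ^ 2 + 3) / x ^ 5)) atTop (𝓝 0) := by
      refine tendsto_of_tendsto_of_tendsto_of_le_of_le' tendsto_const_nhds
        (by simpa using tendsto_gE.const_mul (4:ℝ)) ?_ ?_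
      · filter_upwards [eventually_ge_atTop (1:ℝ)] with x hx
        have hx0 : (0:ℝ) < x := by linarith
        have : (0:ℝ) ≤ (x ^ 4 - x ^ 2 + 3) / x ^ 5 := by
          apply div_nonneg _ (by positivity)
          nlinarith [mul_nonneg (sq_nonneg x) (show (0:ℝ) ≤ x ^ 2 - 1 by nlinarith)]
        exact mul_nonneg (gE_pos x).le this
      · filter_upwards [eventually_ge_atTop (1:ℝ)] with x hx
        have hx0 : (0:ℝ) < x := by linarith
        have hb : (x ^ 4 - x ^ 2 + 3) / x ^ 5 ≤ 4 := by
          rw [div_le_iff₀ (by positivity)]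
          have h2 : (1:ℝ) ≤ x ^ 2 := by nlinarith
          have h4 : x ^ 2 ≤ x ^ 4 := by nlinarith
          have h5 : x ^ 4 ≤ x ^ 5 := by
            nlinarith [pow_nonneg (show (0:ℝ) ≤ x by linarith) 4]
          linarith
        calc gE x * ((x ^ 4 - x ^ 2 + 3) / x ^ 5) ≤ gE x * 4 :=
              mul_le_mul_of_nonneg_left hb (gE_pos x).le
        _ = 4 * gE x := by ring
    simpa using h1.sub tendsto_gQ
  have := nonneg_of_deriv_nonpos_tendsto F F' hF hF' hlim ha
  simp only [hFdef] at this
  linarith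

end TCSC2

namespace TCSC3
open TCSC TCSC2

noncomputable def c2pi : ℝ := (Real.sqrt (2 * π))⁻¹

lemma c2pi_pos : 0 < c2pi := by
  rw [c2pi]
  positivity

lemma sqrt_two_pi_ge : (5:ℝ)/2 ≤ Real.sqrt (2 * π) := by
  rw [show (5:ℝ)/2 = Real.sqrt ((5/2)^2) by rw [Real.sqrt_sq]; norm_num]
  apply Real.sqrt_le_sqrt
  nlinarith [Real.pi_gt_d6]

lemma pdf01 (x : ℝ) : gaussianPDFReal 0 1 x = c2pi * gE x := by
  simp [gaussianPDFReal, c2pi, gE]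

def SetA (a : ℝ) : Set ℝ := {z : ℝ | a ≤ |z|}

lemma measurableSet_SetA (a : ℝ) : MeasurableSet (SetA a) :=
  measurableSet_le measurable_const measurable_abs

lemma SetA_eq (a : ℝ) : SetA a = Set.Iic (-a) ∪ Set.Ici a := by
  ext z
  simp only [SetA, Set.mem_setOf_eq, Set.mem_union, Set.mem_Iic, Set.mem_Ici, le_abs]
  constructor
  · rintro (h | h)
    · exact Or.inr h
    · exact Or.inl (by linarith)
  · rintro (h | h)
    · exact Or.inr (by linarith)
    · exact Or.inl h

lemma integrableOn_Iic_of_even {a : ℝ} {h : ℝ → ℝ} (heven : ∀ x, h (-x) = h x)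
    (hint : IntegrableOn h (Set.Ici a)) : IntegrableOn h (Set.Iic (-a)) := by
  have hemb : MeasurableEmbedding fun x : ℝ => -x :=
    (Homeomorph.neg ℝ).isClosedEmbedding.measurableEmbedding
  have hmp : MeasurePreserving (fun x : ℝ => -x) volume volume :=
    ⟨measurable_neg, Measure.map_neg_eq_self _⟩
  have hpre : (fun x : ℝ => -x) ⁻¹' Set.Iic (-a) = Set.Ici a := by
    ext x
    simp only [Set.mem_preimage, Set.mem_Iic, Set.mem_Ici]
    constructor <;> intro <;> linarith
  have heq : (h ∘ fun x : ℝ => -x) = h := funext fun x => heven x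
  have hiff := hmp.integrableOn_comp_preimage hemb (f := h) (s := Set.Iic (-a))
  rw [hpre, heq] at hiff
  exact hiff.mp hint

lemma integrableOn_SetA_of_even {a : ℝ} (ha : 0 < a) {h : ℝ → ℝ}
    (heven : ∀ x, h (-x) = h x) (hint : IntegrableOn h (Set.Ici a)) :
    IntegrableOn h (SetA a) := by
  rw [SetA_eq]
  exact (integrableOn_Iic_of_even heven hint).union hint

lemma integral_SetA_of_even {a : ℝ} (ha : 0 < a) {h : ℝ → ℝ}
    (heven : ∀ x, h (-x) = h x) (hint : IntegrableOn h (Set.Ici a)) :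
    ∫ x in SetA a, h x = 2 * ∫ x in Set.Ici a, h x := by
  rw [SetA_eq]
  rw [setIntegral_union ?disj measurableSet_Ici (integrableOn_Iic_of_even heven hint) hint]
  case disj =>
    rw [Set.disjoint_left]
    intro x hx1 hx2
    rw [Set.mem_Iic] at hx1
    rw [Set.mem_Ici] at hx2
    linarith
  have h1 : ∫ x in Set.Iic (-a), h x = ∫ x in Set.Ici a, h x := by
    calc ∫ x in Set.Iic (-a), h x = ∫ x in Set.Iic (-a), h (-x) := by
          refine setIntegral_congr_fun measurableSet_Iic fun x _ => (heven x).symm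
    _ = ∫ x in Set.Ioi a, h x := by rw [integral_comp_neg_Iic]; simp
    _ = ∫ x in Set.Ici a, h x := integral_Ici_eq_integral_Ioi.symm
  rw [h1]
  ring

end TCSC3

namespace TCSC4
open TCSC TCSC2 TCSC3

lemma gaussian_eq_withDensity :
    gaussianReal 0 1 = volume.withDensity
      (fun x => ((gaussianPDFReal 0 1 x).toNNReal : ℝ≥0∞)) := by
  rw [gaussianReal_of_var_ne_zero 0 one_ne_zero]
  rfl

lemma setIntegral_gaussian (g : ℝ → ℝ) {s : Set ℝ} (hs : MeasurableSet s) :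
    ∫ z in s, g z ∂(gaussianReal 0 1) = ∫ z in s, c2pi * gE z * g z := by
  rw [gaussian_eq_withDensity,
    setIntegral_withDensity_eq_setIntegral_smul
      (measurable_gaussianPDFReal 0 1).real_toNNReal g hs]
  refine setIntegral_congr_fun hs fun x _ => ?_
  rw [NNReal.smul_def, Real.coe_toNNReal _ (gaussianPDFReal_nonneg 0 1 x), pdf01, smul_eq_mul]

lemma setIntegral_gaussian_even {a : ℝ} (ha : 0 < a) (H : ℝ → ℝ)
    (heven : ∀ x, H (-x) = H x)
    (hint : IntegrableOn (fun x => H x * gE x) (Set.Ici a)) :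
    ∫ z in SetA a, H z ∂(gaussianReal 0 1)
      = c2pi * (2 * ∫ x in Set.Ici a, H x * gE x) := by
  rw [setIntegral_gaussian H (measurableSet_SetA a)]
  have h1 : ∫ z in SetA a, c2pi * gE z * H z = c2pi * ∫ z in SetA a, H z * gE z := by
    rw [← integral_const_mul]
    exact setIntegral_congr_fun (measurableSet_SetA a) fun x _ => by ring
  rw [h1, integral_SetA_of_even ha (fun x => by rw [gE_even, heven]) hint]

lemma integrableOn_one_gE {a : ℝ} : IntegrableOn (fun x => (1:ℝ) * gE x) (Set.Ici a) := by
  simpa using (integrableOn_gE (a := a))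

lemma q_val {a : ℝ} (ha : 0 < a) :
    ((gaussianReal 0 1) (SetA a)).toReal = c2pi * (2 * gQ a) := by
  have h0 : ((gaussianReal 0 1) (SetA a)).toReal = ∫ z in SetA a, (1:ℝ) ∂(gaussianReal 0 1) := by
    rw [setIntegral_const]
    simp [measureReal_def]
  rw [h0, setIntegral_gaussian_even ha (fun _ => (1:ℝ)) (fun _ => rfl) integrableOn_one_gE]
  rw [integral_Ici_eq_integral_Ioi]
  simp [gQ]

lemma m2_val {a : ℝ} (ha : 0 < a) :
    ∫ z in SetA a, z ^ 2 ∂(gaussianReal 0 1) = c2pi * (2 * (a * gE a + gQ a)) := by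
  rw [setIntegral_gaussian_even ha (fun z => z ^ 2) (fun x => by ring)
    (integrableOn_pow_gE 2 ha), integral_Ici_eq_integral_Ioi, J2 ha]

lemma nu_val {a : ℝ} (ha : 0 < a) : nuGauss a = (a * gE a + gQ a) / gQ a := by
  rw [nuGauss]
  have hA : {z : ℝ | a ≤ |z|} = SetA a := rfl
  rw [hA, m2_val ha, q_val ha]
  have h1 : (0:ℝ) < c2pi * (2 * gQ a) := by
    have := gQ_pos a
    have := c2pi_pos
    positivity
  rw [div_eq_div_iff h1.ne' (gQ_pos a).ne']
  ring

lemma nu_nonneg {a : ℝ} (ha : 0 < a) : 0 ≤ nuGauss a := by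
  rw [nu_val ha]
  have := gQ_pos a
  have := gE_pos a
  positivity

lemma nu_le {a : ℝ} (ha : 1 ≤ a) : nuGauss a ≤ a ^ 2 + 2 := by
  have ha0 : (0:ℝ) < a := by linarith
  rw [nu_val ha0, div_le_iff₀ (gQ_pos a)]
  have := mills2 ha
  nlinarith [gQ_pos a]

lemma nu_mul_gQ {a : ℝ} (ha : 0 < a) :
    nuGauss a * gQ a = a * gE a + gQ a := by
  rw [nu_val ha, div_mul_cancel₀]
  exact (gQ_pos a).ne'

end TCSC4

namespace TCSC5
open TCSC TCSC2 TCSC3 TCSC4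

lemma integrableOn_V {a : ℝ} (ha : 0 < a) (ν : ℝ) :
    IntegrableOn (fun x => (x ^ 2 - ν) ^ 2 * gE x) (Set.Ici a) := by
  have h : ∀ x, (x ^ 2 - ν) ^ 2 * gE x
      = x ^ 4 * gE x - 2 * ν * (x ^ 2 * gE x) + ν ^ 2 * gE x := fun x => by ring
  have h4 := integrableOn_pow_gE 4 ha
  have h2 := (integrableOn_pow_gE 2 ha).const_mul (2 * ν)
  have h0 := (integrableOn_gE (a := a)).const_mul (ν ^ 2)
  have hsum : IntegrableOn
      (fun x => x ^ 4 * gE x - 2 * ν * (x ^ 2 * gE x) + ν ^ 2 * gE x) (Set.Ici a) :=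
    (h4.sub h2).add h0
  exact hsum.congr_fun (fun x _ => (h x).symm) measurableSet_Ici

lemma intV_val {a : ℝ} (ha : 0 < a) (ν : ℝ) :
    ∫ x in Set.Ici a, (x ^ 2 - ν) ^ 2 * gE x
      = (a ^ 3 * gE a + 3 * (a * gE a + gQ a)) - 2 * ν * (a * gE a + gQ a) + ν ^ 2 * gQ a := by
  have h : ∀ x : ℝ, (x ^ 2 - ν) ^ 2 * gE x
      = x ^ 4 * gE x - 2 * ν * (x ^ 2 * gE x) + ν ^ 2 * gE x := fun x => by ring
  rw [setIntegral_congr_fun measurableSet_Ici (fun x _ => h x)]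
  have h4 := integrableOn_pow_gE 4 ha
  have h2 := (integrableOn_pow_gE 2 ha).const_mul (2 * ν)
  have h0 := (integrableOn_gE (a := a)).const_mul (ν ^ 2)
  have hfg : IntegrableOn (fun x => x ^ 4 * gE x - 2 * ν * (x ^ 2 * gE x)) (Set.Ici a) :=
    h4.sub h2
  rw [integral_add hfg h0, integral_sub h4 h2, integral_const_mul, integral_const_mul]
  rw [integral_Ici_eq_integral_Ioi, integral_Ici_eq_integral_Ioi, integral_Ici_eq_integral_Ioi,
    J4 ha, J2 ha]
  have : ∫ x in Set.Ioi a, gE x = gQ a := rfl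
  rw [this]

/-- The key variance bound: `∫_{|z|≥a} (z²-ν)² dγ ≤ 4 e^{-a²/2}`. -/
lemma Vbound {a : ℝ} (ha : 1 ≤ a) :
    ∫ z in SetA a, (z ^ 2 - nuGauss a) ^ 2 ∂(gaussianReal 0 1) ≤ 4 * gE a := by
  have ha0 : (0:ℝ) < a := by linarith
  set ν := nuGauss a with hν
  set Ea := gE a with hEa
  set Qa := gQ a with hQa
  have hval : ∫ z in SetA a, (z ^ 2 - ν) ^ 2 ∂(gaussianReal 0 1)
      = c2pi * (2 * ∫ x in Set.Ici a, (x ^ 2 - ν) ^ 2 * gE x) :=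
    setIntegral_gaussian_even ha0 _ (fun x => by ring) (integrableOn_V ha0 ν)
  rw [hval, intV_val ha0]
  -- step 1: integral ≤ a*Ea - a^3*Ea + (a^4+2)*Qa
  have hmul : ν * Qa = a * Ea + Qa := nu_mul_gQ ha0
  have hQpos : 0 < Qa := gQ_pos a
  have hEpos : 0 < Ea := gE_pos a
  have step1 : (a ^ 3 * Ea + 3 * (a * Ea + Qa)) - 2 * ν * (a * Ea + Qa) + ν ^ 2 * Qa
      ≤ a * Ea - a ^ 3 * Ea + (a ^ 4 + 2) * Qa := by
    have heq : (a * Ea - a ^ 3 * Ea + (a ^ 4 + 2) * Qa)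
        - ((a ^ 3 * Ea + 3 * (a * Ea + Qa)) - 2 * ν * (a * Ea + Qa) + ν ^ 2 * Qa)
        = Qa * (ν - (a ^ 2 + 1)) ^ 2 := by
      linear_combination (2 * a ^ 2 + 2 - 2 * ν) * hmul
    linarith [heq, mul_nonneg hQpos.le (sq_nonneg (ν - (a ^ 2 + 1)))]
  -- step 2: a*Ea - a^3*Ea + (a^4+2)*Qa ≤ 5*Ea
  have step2 : a * Ea - a ^ 3 * Ea + (a ^ 4 + 2) * Qa ≤ 5 * Ea := by
    rcases le_or_gt a 4 with hle | hgt
    · have hm := mills1 ha0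
      have h1 : (a ^ 4 + 2) * Qa ≤ (a ^ 4 + 2) * (Ea / a) :=
        mul_le_mul_of_nonneg_left hm (by positivity)
      have h2 : a * Ea - a ^ 3 * Ea + (a ^ 4 + 2) * (Ea / a) ≤ 5 * Ea := by
        rw [show a * Ea - a ^ 3 * Ea + (a ^ 4 + 2) * (Ea / a)
            = ((a ^ 2 - a ^ 4 + a ^ 4 + 2) / a) * Ea by field_simp; ring]
        have hc : (a ^ 2 - a ^ 4 + a ^ 4 + 2) / a ≤ 5 := by
          rw [div_le_iff₀ ha0]
          nlinarith
        exact mul_le_mul_of_nonneg_right hc hEpos.le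
      linarith
    · have hm := mills3 ha
      have h1 : (a ^ 4 + 2) * Qa ≤ (a ^ 4 + 2) * (Ea * ((a ^ 4 - a ^ 2 + 3) / a ^ 5)) :=
        mul_le_mul_of_nonneg_left hm (by positivity)
      have h2 : a * Ea - a ^ 3 * Ea + (a ^ 4 + 2) * (Ea * ((a ^ 4 - a ^ 2 + 3) / a ^ 5))
          ≤ 5 * Ea := by
        rw [show a * Ea - a ^ 3 * Ea + (a ^ 4 + 2) * (Ea * ((a ^ 4 - a ^ 2 + 3) / a ^ 5))
            = ((5 * a ^ 4 - 2 * a ^ 2 + 6) / a ^ 5) * Ea by field_simp; ring]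
        have hc : (5 * a ^ 4 - 2 * a ^ 2 + 6) / a ^ 5 ≤ 5 := by
          rw [div_le_iff₀ (by positivity)]
          nlinarith [pow_pos ha0 4, mul_nonneg (pow_nonneg ha0.le 4)
            (show (0:ℝ) ≤ a - 4 by linarith), sq_nonneg a]
        exact mul_le_mul_of_nonneg_right hc hEpos.le
      linarith
  -- step 3: c2pi * (2 * (5*Ea)) ≤ 4 * Ea
  have step3 : c2pi * (2 * (5 * Ea)) ≤ 4 * Ea := by
    have h1 : c2pi ≤ 2/5 := by
      rw [c2pi]
      rw [inv_le_iff_one_le_mul₀ (by positivity)]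
      nlinarith [sqrt_two_pi_ge]
    nlinarith [hEpos, c2pi_pos]
  calc c2pi * (2 * ((a ^ 3 * Ea + 3 * (a * Ea + Qa)) - 2 * ν * (a * Ea + Qa) + ν ^ 2 * Qa))
      ≤ c2pi * (2 * (5 * Ea)) := by
        have := c2pi_pos
        apply mul_le_mul_of_nonneg_left _ this.le
        apply mul_le_mul_of_nonneg_left _ (by norm_num : (0:ℝ) ≤ 2)
        linarith
  _ ≤ 4 * Ea := step3

end TCSC5

namespace TCSC6
open TCSC TCSC2 TCSC3 TCSC4 TCSC5

lemma exp_le_quad_of_nonpos {x : ℝ} (hx : x ≤ 0) : Real.exp x ≤ 1 + x + x ^ 2 / 2 := by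
  set g : ℝ → ℝ := fun y => 1 + y + y ^ 2 / 2 - Real.exp y with hg
  have hd : ∀ y : ℝ, HasDerivAt g (1 + y - Real.exp y) y := by
    intro y
    have h1 : HasDerivAt (fun z : ℝ => 1 + z + z ^ 2 / 2) (1 + y) y := by
      have := ((hasDerivAt_id y).const_add 1).add ((hasDerivAt_pow 2 y).div_const 2)
      refine this.congr_deriv ?_
      push_cast
      ring
    have := h1.sub (Real.hasDerivAt_exp y)
    exact this
  have hanti : AntitoneOn g (Set.Iic (0:ℝ)) := by
    refine antitoneOn_of_deriv_nonpos (convex_Iic 0) ?_ ?_ ?_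
    · exact fun y _ => (hd y).continuousAt.continuousWithinAt
    · exact fun y _ => (hd y).differentiableAt.differentiableWithinAt
    · intro y hy
      rw [(hd y).deriv]
      have := Real.add_one_le_exp y
      linarith
  have := hanti (Set.mem_Iic.mpr hx) (Set.mem_Iic.mpr le_rfl) hx
  have hg0 : g 0 = 0 := by simp [hg]
  rw [hg0] at this
  simp only [hg] at this
  linarith

lemma exp_le_quad_of_nonneg {x : ℝ} (hx : 0 ≤ x) :
    Real.exp x ≤ 1 + x + x ^ 2 / 2 * Real.exp x := by
  set g : ℝ → ℝ := fun y => (1 + y) * Real.exp (-y) + y ^ 2 / 2 - 1 with hg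
  have hd : ∀ y : ℝ, HasDerivAt g (y * (1 - Real.exp (-y))) y := by
    intro y
    have hexp : HasDerivAt (fun z : ℝ => Real.exp (-z)) (-Real.exp (-y)) y := by
      have := (Real.hasDerivAt_exp (-y)).comp y ((hasDerivAt_id y).neg)
      exact this.congr_deriv (by simp)
    have h1 : HasDerivAt (fun z : ℝ => (1 + z) * Real.exp (-z))
        (Real.exp (-y) + (1 + y) * (-Real.exp (-y))) y := by
      have := (((hasDerivAt_id y).const_add 1)).mul hexp
      exact this.congr_deriv (by simp)
    have h2 := (h1.add ((hasDerivAt_pow 2 y).div_const 2)).sub_const 1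
    refine h2.congr_deriv ?_
    push_cast
    ring
  have hmono : MonotoneOn g (Set.Ici (0:ℝ)) := by
    refine monotoneOn_of_deriv_nonneg (convex_Ici 0) ?_ ?_ ?_
    · exact fun y _ => (hd y).continuousAt.continuousWithinAt
    · exact fun y _ => (hd y).differentiableAt.differentiableWithinAt
    · intro y hy
      rw [interior_Ici] at hy
      rw [(hd y).deriv]
      have h1 : Real.exp (-y) ≤ 1 := by
        rw [Real.exp_le_one_iff]
        rw [Set.mem_Ioi] at hy
        linarith
      have : (0:ℝ) ≤ y := le_of_lt hy
      nlinarith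
  have := hmono (Set.mem_Ici.mpr le_rfl) (Set.mem_Ici.mpr hx) hx
  have hg0 : g 0 = 0 := by simp [hg]
  rw [hg0] at this
  simp only [hg] at this
  -- (1+x) e^{-x} + x²/2 - 1 ≥ 0  ⟹  e^x ≤ 1 + x + (x²/2) e^x
  have hepos := Real.exp_pos x
  have hprod : Real.exp (-x) * Real.exp x = 1 := by
    rw [← Real.exp_add]
    simp
  have hxprod : x * (Real.exp (-x) * Real.exp x) = x := by rw [hprod, mul_one]
  have key2 : 0 ≤ ((1 + x) * Real.exp (-x) + x ^ 2 / 2 - 1) * Real.exp x :=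
    mul_nonneg (by linarith) hepos.le
  nlinarith [key2, hprod, hxprod]

/-- main pointwise bound: for `0 ≤ lam ≤ 1/2`, `ν ≤ s + 2` with `s ≥ x`-interpretation:
if `x ≥ 0`, `ν - 2 ≤ b ≤ x` then `exp (-lam * (x - ν)) ≤ 1 - lam*(x-ν) + (3/2)*lam^2*(x-ν)^2`. -/
lemma exp_pointwise {lam ν b x : ℝ} (hlam0 : 0 ≤ lam) (hlam : lam ≤ 1/2)
    (hν : ν ≤ b + 2) (hbx : b ≤ x) :
    Real.exp (-lam * (x - ν)) ≤ 1 + (-lam * (x - ν)) + 3/2 * (lam * (x - ν)) ^ 2 := by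
  set u : ℝ := -lam * (x - ν) with hu
  rcases le_or_gt u 0 with h0 | h0
  · have := exp_le_quad_of_nonpos h0
    nlinarith [sq_nonneg u]
  · -- u > 0 means x < ν, so x - ν ≥ b - ν ≥ -2, u ≤ lam * 2 ≤ 1
    have hxν : x - ν ≥ -2 := by linarith
    have hu1 : u ≤ 1 := by
      rcases le_or_gt (x - ν) 0 with hc | hc
      · calc u = lam * (ν - x) := by rw [hu]; ring
        _ ≤ (1/2) * 2 := by
            apply mul_le_mul hlam (by linarith) (by linarith) (by norm_num)
        _ = 1 := by norm_num
      · exfalso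
        have : u ≤ 0 := by
          rw [hu]
          apply mul_nonpos_of_nonpos_of_nonneg (by linarith) hc.le
        linarith
    have h1 := exp_le_quad_of_nonneg h0.le
    have h2 : Real.exp u ≤ Real.exp 1 := Real.exp_le_exp.mpr hu1
    have h3 : Real.exp 1 ≤ 3 := by
      have := Real.exp_one_lt_d9
      linarith
    have h4 : Real.exp u ≤ 1 + u + u ^ 2 / 2 * 3 := by nlinarith [sq_nonneg u]
    have : (3:ℝ)/2 * (lam * (x - ν)) ^ 2 = u ^ 2 / 2 * 3 := by rw [hu]; ring
    linarith [h4, this.ge]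

end TCSC6

namespace TCSC7
open TCSC TCSC2 TCSC3 TCSC4 TCSC5 TCSC6

lemma measurable_f (a : ℝ) :
    Measurable (fun z : ℝ => if a ≤ |z| then z ^ 2 - nuGauss a else 0) := by
  refine Measurable.ite (measurableSet_SetA a) ?_ measurable_const
  exact (measurable_id.pow_const 2).sub_const _

lemma f_ge (a : ℝ) (ha : 0 < a) (z : ℝ) :
    -(nuGauss a) ≤ (if a ≤ |z| then z ^ 2 - nuGauss a else 0) := by
  split
  · nlinarith [sq_nonneg z]
  · linarith [nu_nonneg ha]

lemma integrableOn_lin {a : ℝ} (ha : 0 < a) (ν : ℝ) :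
    IntegrableOn (fun x => (x ^ 2 - ν) * gE x) (Set.Ici a) := by
  have h2 := integrableOn_pow_gE 2 ha
  have h0 := (integrableOn_gE (a := a)).const_mul ν
  have hsum : IntegrableOn (fun x => x ^ 2 * gE x - ν * gE x) (Set.Ici a) := h2.sub h0
  exact hsum.congr_fun (fun x _ => by ring) measurableSet_Ici

lemma intLin_zero {a : ℝ} (ha : 0 < a) :
    ∫ x in Set.Ici a, (x ^ 2 - nuGauss a) * gE x = 0 := by
  have h2 := integrableOn_pow_gE 2 ha
  have h0 := (integrableOn_gE (a := a)).const_mul (nuGauss a)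
  have heq : ∫ x in Set.Ici a, (x ^ 2 - nuGauss a) * gE x
      = ∫ x in Set.Ici a, (x ^ 2 * gE x - nuGauss a * gE x) :=
    setIntegral_congr_fun measurableSet_Ici (fun x _ => by ring)
  rw [heq, integral_sub h2 h0, integral_const_mul, integral_Ici_eq_integral_Ioi,
    integral_Ici_eq_integral_Ioi, J2 ha]
  have : ∫ x in Set.Ioi a, gE x = gQ a := rfl
  rw [this]
  have := nu_mul_gQ ha
  linarith

/-- Bound for the mgf of a single thresholded variable at `-lam`. -/
lemma mgf_single {a lam : ℝ} (ha : 1 ≤ a) (hlam0 : 0 ≤ lam) (hlam : lam ≤ 1/2) :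
    ∫ z, Real.exp (-lam * (if a ≤ |z| then z ^ 2 - nuGauss a else 0)) ∂(gaussianReal 0 1)
      ≤ Real.exp (6 * lam ^ 2 * gE a) := by
  have ha0 : (0:ℝ) < a := by linarith
  set ν := nuGauss a with hνdef
  set γ := gaussianReal 0 1 with hγ
  set g : ℝ → ℝ := fun z => Real.exp (-lam * (if a ≤ |z| then z ^ 2 - ν else 0)) with hgdef
  have hgmeas : Measurable g := by
    exact (((measurable_f a).const_mul (-lam)).exp)
  have hgbound : ∀ z, |g z| ≤ Real.exp (lam * ν) := by
    intro z
    rw [abs_of_pos (Real.exp_pos _)]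
    apply Real.exp_le_exp.mpr
    have := f_ge a ha0 z
    nlinarith
  have hgint : Integrable g γ := by
    refine Integrable.mono' (integrable_const (Real.exp (lam * ν)))
      hgmeas.aestronglyMeasurable ?_
    filter_upwards with z using hgbound z
  -- split the integral
  have hsplit : ∫ z, g z ∂γ = (∫ z in SetA a, g z ∂γ) + ∫ z in (SetA a)ᶜ, g z ∂γ :=
    (integral_add_compl (measurableSet_SetA a) hgint).symm
  -- complement part
  have hcompl_val : ∫ z in (SetA a)ᶜ, g z ∂γ = 1 - (γ (SetA a)).toReal := by
    have h1 : ∀ z ∈ (SetA a)ᶜ, g z = 1 := by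
      intro z hz
      have hz' : ¬ a ≤ |z| := hz
      simp [hgdef, hz']
    rw [setIntegral_congr_fun (measurableSet_SetA a).compl h1, setIntegral_const, smul_eq_mul,
      mul_one, measureReal_def, measure_compl (measurableSet_SetA a) (measure_ne_top _ _)]
    rw [show γ Set.univ = 1 from measure_univ]
    rw [ENNReal.toReal_sub_of_le prob_le_one ENNReal.one_ne_top]
    simp
  -- main part
  have hmain : ∫ z in SetA a, g z ∂γ
      ≤ (γ (SetA a)).toReal + 3/2 * lam ^ 2 * (4 * gE a) := by
    have h1 : ∫ z in SetA a, g z ∂γ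
        = ∫ z in SetA a, Real.exp (-lam * (z ^ 2 - ν)) ∂γ := by
      refine setIntegral_congr_fun (measurableSet_SetA a) fun z hz => ?_
      have hz' : a ≤ |z| := hz
      simp [hgdef, hz']
    have hHint : IntegrableOn (fun x => Real.exp (-lam * (x ^ 2 - ν)) * gE x) (Set.Ici a) := by
      refine Integrable.mono' ((integrableOn_gE (a := a)).const_mul (Real.exp (lam * ν)))
        ?_ ?_
      · exact ((((measurable_id.pow_const 2).sub_const ν).const_mul
          (-lam)).exp.mul (continuous_gE.measurable)).aestronglyMeasurable
      · filter_upwards with x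
        rw [Real.norm_eq_abs, abs_of_pos (mul_pos (Real.exp_pos _) (gE_pos x))]
        apply mul_le_mul_of_nonneg_right _ (gE_pos x).le
        apply Real.exp_le_exp.mpr
        nlinarith [sq_nonneg x, nu_nonneg ha0]
    have h2 : ∫ z in SetA a, Real.exp (-lam * (z ^ 2 - ν)) ∂γ
        = c2pi * (2 * ∫ x in Set.Ici a, Real.exp (-lam * (x ^ 2 - ν)) * gE x) :=
      setIntegral_gaussian_even ha0 _ (fun x => by norm_num) hHint
    -- pointwise bound on the Lebesgue integral
    have hptwise : ∀ x ∈ Set.Ici a, Real.exp (-lam * (x ^ 2 - ν)) * gE x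
        ≤ (1 + (-lam * (x ^ 2 - ν)) + 3/2 * (lam * (x ^ 2 - ν)) ^ 2) * gE x := by
      intro x hx
      rw [Set.mem_Ici] at hx
      have hbx : a ^ 2 ≤ x ^ 2 := by nlinarith
      exact mul_le_mul_of_nonneg_right
        (exp_pointwise hlam0 hlam (nu_le ha) hbx) (gE_pos x).le
    have hPint : IntegrableOn
        (fun x => (1 + (-lam * (x ^ 2 - ν)) + 3/2 * (lam * (x ^ 2 - ν)) ^ 2) * gE x)
        (Set.Ici a) := by
      have hs : IntegrableOn (fun x => gE x + (-lam) * ((x ^ 2 - ν) * gE x)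
          + (3/2 * lam ^ 2) * ((x ^ 2 - ν) ^ 2 * gE x)) (Set.Ici a) :=
        ((integrableOn_gE (a := a)).add
          ((integrableOn_lin ha0 ν).const_mul (-lam))).add
          ((integrableOn_V ha0 ν).const_mul (3/2 * lam ^ 2))
      exact hs.congr_fun (fun x _ => by ring) measurableSet_Ici
    have h3 : ∫ x in Set.Ici a, Real.exp (-lam * (x ^ 2 - ν)) * gE x
        ≤ ∫ x in Set.Ici a,
          (1 + (-lam * (x ^ 2 - ν)) + 3/2 * (lam * (x ^ 2 - ν)) ^ 2) * gE x :=
      setIntegral_mono_on hHint hPint measurableSet_Ici hptwise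
    -- compute the RHS integral
    have h4 : ∫ x in Set.Ici a,
          (1 + (-lam * (x ^ 2 - ν)) + 3/2 * (lam * (x ^ 2 - ν)) ^ 2) * gE x
        = gQ a + (3/2 * lam ^ 2) * ∫ x in Set.Ici a, (x ^ 2 - ν) ^ 2 * gE x := by
      have heq : ∫ x in Set.Ici a,
            (1 + (-lam * (x ^ 2 - ν)) + 3/2 * (lam * (x ^ 2 - ν)) ^ 2) * gE x
          = ∫ x in Set.Ici a, (gE x + (-lam) * ((x ^ 2 - ν) * gE x)
            + (3/2 * lam ^ 2) * ((x ^ 2 - ν) ^ 2 * gE x)) :=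
        setIntegral_congr_fun measurableSet_Ici (fun x _ => by ring)
      have hi0 : IntegrableOn (fun x : ℝ => gE x) (Set.Ici a) := integrableOn_gE
      have hiL : IntegrableOn (fun x : ℝ => -lam * ((x ^ 2 - ν) * gE x)) (Set.Ici a) :=
        (integrableOn_lin ha0 ν).const_mul (-lam)
      have hi1 : IntegrableOn (fun x : ℝ => gE x + -lam * ((x ^ 2 - ν) * gE x)) (Set.Ici a) :=
        hi0.add hiL
      have hi2 : IntegrableOn (fun x : ℝ => 3/2 * lam ^ 2 * ((x ^ 2 - ν) ^ 2 * gE x))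
          (Set.Ici a) := (integrableOn_V ha0 ν).const_mul (3/2 * lam ^ 2)
      rw [heq, integral_add hi1 hi2, integral_add hi0 hiL,
        integral_const_mul, integral_const_mul, intLin_zero ha0, integral_Ici_eq_integral_Ioi]
      have : ∫ x in Set.Ioi a, gE x = gQ a := rfl
      rw [this]
      ring
    -- assemble, using `Vbound`
    have hVb := Vbound ha
    have hVeq : ∫ z in SetA a, (z ^ 2 - ν) ^ 2 ∂γ
        = c2pi * (2 * ∫ x in Set.Ici a, (x ^ 2 - ν) ^ 2 * gE x) :=
      setIntegral_gaussian_even ha0 _ (fun x => by ring) (integrableOn_V ha0 ν)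
    have hq := q_val ha0
    rw [h1, h2]
    calc c2pi * (2 * ∫ x in Set.Ici a, Real.exp (-lam * (x ^ 2 - ν)) * gE x)
        ≤ c2pi * (2 * (gQ a + (3/2 * lam ^ 2) * ∫ x in Set.Ici a, (x ^ 2 - ν) ^ 2 * gE x)) := by
          rw [← h4]
          have := c2pi_pos
          apply mul_le_mul_of_nonneg_left _ this.le
          apply mul_le_mul_of_nonneg_left h3 (by norm_num)
    _ = (γ (SetA a)).toReal
          + 3/2 * lam ^ 2 * (c2pi * (2 * ∫ x in Set.Ici a, (x ^ 2 - ν) ^ 2 * gE x)) := by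
          rw [hq]
          ring
    _ ≤ (γ (SetA a)).toReal + 3/2 * lam ^ 2 * (4 * gE a) := by
          rw [← hVeq]
          have h6 : (0:ℝ) ≤ 3/2 * lam ^ 2 := by positivity
          nlinarith [mul_le_mul_of_nonneg_left hVb h6]
  -- combine
  have htotal : ∫ z, g z ∂γ ≤ 1 + 6 * lam ^ 2 * gE a := by
    rw [hsplit, hcompl_val]
    have : (3:ℝ)/2 * lam ^ 2 * (4 * gE a) = 6 * lam ^ 2 * gE a := by ring
    linarith [hmain]
  calc ∫ z, g z ∂γ ≤ 1 + 6 * lam ^ 2 * gE a := htotal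
  _ ≤ Real.exp (6 * lam ^ 2 * gE a) := by
      have := Real.add_one_le_exp (6 * lam ^ 2 * gE a)
      linarith

end TCSC7

namespace TCSC8
open TCSC TCSC2 TCSC3 TCSC4 TCSC5 TCSC6 TCSC7

lemma iIndepFun_congr {Ω : Type*} [MeasurableSpace Ω] {μ : Measure Ω} {ι : Type*}
    {f g : ι → Ω → ℝ}
    (hf : iIndepFun f μ) (h : ∀ i, f i =ᵐ[μ] g i) :
    iIndepFun g μ := by
  rw [iIndepFun_iff_measure_inter_preimage_eq_mul] at hf ⊢
  intro S sets hsets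
  have hae : ∀ i ∈ S, (f i ⁻¹' sets i : Set Ω) =ᵐ[μ] (g i ⁻¹' sets i) := by
    intro i _
    rw [Filter.eventuallyEq_set]
    filter_upwards [h i] with ω hω
    simp [Set.mem_preimage, hω]
  have h1 : μ (⋂ i ∈ S, f i ⁻¹' sets i) = μ (⋂ i ∈ S, g i ⁻¹' sets i) := by
    apply measure_congr
    rw [Filter.eventuallyEq_set]
    have hall : ∀ᵐ ω ∂μ, ∀ i ∈ S, (ω ∈ f i ⁻¹' sets i ↔ ω ∈ g i ⁻¹' sets i) :=
      (Filter.eventually_all_finset S).mpr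
        (fun i hi => Filter.eventuallyEq_set.mp (hae i hi))
    filter_upwards [hall] with ω hω
    simp only [Set.mem_iInter]
    constructor
    · intro hmem i hi
      exact (hω i hi).mp (hmem i hi)
    · intro hmem i hi
      exact (hω i hi).mpr (hmem i hi)
  rw [← h1, hf S hsets]
  exact Finset.prod_congr rfl fun i hi => measure_congr (hae i hi)

lemma arith {r t : ℝ} (hr : 0 < r) (ht : 0 < t) :
    ∃ lam, 0 ≤ lam ∧ lam ≤ 1/2 ∧
      -lam * t + 6 * lam ^ 2 * r ≤ -(min (t ^ 2 / (24 * r)) (t / 4)) := by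
  rcases le_or_gt (t / (12 * r)) (1/2) with h | h
  · refine ⟨t / (12 * r), by positivity, h, ?_⟩
    have key : -(t / (12 * r)) * t + 6 * (t / (12 * r)) ^ 2 * r = -(t ^ 2 / (24 * r)) := by
      field_simp
      ring
    rw [key]
    have : min (t ^ 2 / (24 * r)) (t / 4) ≤ t ^ 2 / (24 * r) := min_le_left _ _
    linarith
  · refine ⟨1/2, by norm_num, le_rfl, ?_⟩
    rw [lt_div_iff₀ (by positivity : (0:ℝ) < 12 * r)] at h
    have hmin : min (t ^ 2 / (24 * r)) (t / 4) ≤ t / 4 := min_le_right _ _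
    nlinarith

end TCSC8

-- Chernoff-type bound: if `Z_1, …, Z_p` are i.i.d. standard Gaussians and `a ≥ 1`, then for
-- every `t > 0`,
-- `P( Σᵢ (Zᵢ² − ν_a)·1{|Zᵢ| ≥ a} < −t ) ≤ exp(−min(t²·e^{a²/2}/(24p), t/4))`.
open TCSC TCSC2 TCSC3 TCSC4 TCSC5 TCSC6 TCSC7 TCSC8 in
/-- Chernoff-type bound: if `Z_1, …, Z_p` are i.i.d. standard Gaussians and `a ≥ 1`, then for
every `t > 0`,
`P( Σᵢ (Zᵢ² − ν_a)·1{|Zᵢ| ≥ a} < −t ) ≤ exp(−min(t²·e^{a²/2}/(24p), t/4))`. -/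
theorem thresholded_chi_sq_chernoff
    {Ω : Type*} [MeasureSpace Ω] [IsProbabilityMeasure (ℙ : Measure Ω)]
    (p : ℕ) (Z : Fin p → Ω → ℝ)
    (hindep : iIndepFun Z ℙ)
    (hlaw : ∀ i, Measure.map (Z i) ℙ = gaussianReal 0 1)
    (a : ℝ) (ha : 1 ≤ a) (t : ℝ) (ht : 0 < t) :
    ℙ {ω | ∑ i : Fin p, (if a ≤ |Z i ω| then Z i ω ^ 2 - nuGauss a else 0) < -t}
      ≤ ENNReal.ofReal
          (Real.exp (-(min (t ^ 2 * Real.exp (a ^ 2 / 2) / (24 * p)) (t / 4)))) := by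
  classical
  have ha0 : (0:ℝ) < a := by linarith
  rcases Nat.eq_zero_or_pos p with hp0 | hp
  · subst hp0
    have hempty : {ω : Ω | ∑ i : Fin 0,
        (if a ≤ |Z i ω| then Z i ω ^ 2 - nuGauss a else 0) < -t} = ∅ := by
      ext ω
      simp only [Finset.univ_eq_empty, Finset.sum_empty, Set.mem_setOf_eq, Set.mem_empty_iff_false,
        iff_false, not_lt]
      linarith
    rw [hempty]
    simp
  -- setup
  set F : ℝ → ℝ := fun z => if a ≤ |z| then z ^ 2 - nuGauss a else 0 with hFdef
  have hZaem : ∀ i, AEMeasurable (Z i) ℙ := by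
    intro i
    by_contra hc
    have h0 := hlaw i
    rw [Measure.map_of_not_aemeasurable hc] at h0
    have h1 := congrArg (fun m : Measure ℝ => m Set.univ) h0
    simp [measure_univ] at h1
  set Z' : Fin p → Ω → ℝ := fun i => (hZaem i).mk (Z i) with hZ'def
  have hZ'meas : ∀ i, Measurable (Z' i) := fun i => (hZaem i).measurable_mk
  have hZae : ∀ i, Z i =ᵐ[ℙ] Z' i := fun i => (hZaem i).ae_eq_mk
  have hlaw' : ∀ i, Measure.map (Z' i) ℙ = gaussianReal 0 1 := fun i => by
    rw [← Measure.map_congr (hZae i)]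
    exact hlaw i
  have hindep' : iIndepFun Z' ℙ := iIndepFun_congr hindep hZae
  set X : Fin p → Ω → ℝ := fun i ω => F (Z' i ω) with hXdef
  have hXmeas : ∀ i, Measurable (X i) := fun i => (measurable_f a).comp (hZ'meas i)
  have hXindep : iIndepFun X ℙ :=
    hindep'.comp (fun _ => F) (fun _ => measurable_f a)
  set S' : Ω → ℝ := fun ω => ∑ i, X i ω with hS'def
  -- event comparison
  have hevent : ℙ {ω | ∑ i : Fin p, (if a ≤ |Z i ω| then Z i ω ^ 2 - nuGauss a else 0) < -t}
      ≤ ℙ {ω | S' ω ≤ -t} := by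
    have hae : ∀ᵐ ω ∂ℙ, ∀ i, Z i ω = Z' i ω := ae_all_iff.mpr (fun i => hZae i)
    have hseteq : {ω | ∑ i : Fin p, (if a ≤ |Z i ω| then Z i ω ^ 2 - nuGauss a else 0) < -t}
        =ᵐ[ℙ] {ω | S' ω < -t} := by
      rw [Filter.eventuallyEq_set]
      filter_upwards [hae] with ω hω
      have hsum : ∑ i : Fin p, (if a ≤ |Z i ω| then Z i ω ^ 2 - nuGauss a else 0) = S' ω :=
        Finset.sum_congr rfl fun i _ => by rw [hω i]
      simp only [Set.mem_setOf_eq, hsum]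
    calc ℙ {ω | ∑ i : Fin p, (if a ≤ |Z i ω| then Z i ω ^ 2 - nuGauss a else 0) < -t}
        = ℙ {ω | S' ω < -t} := measure_congr hseteq
    _ ≤ ℙ {ω | S' ω ≤ -t} := by
        apply measure_mono
        intro ω hω
        have h1 : S' ω < -t := hω
        exact le_of_lt h1
  -- choose lambda
  have hEa := gE_pos a
  have hpR : (0:ℝ) < (p:ℝ) := by exact_mod_cast hp
  have hr : (0:ℝ) < (p:ℝ) * gE a := mul_pos hpR hEa
  obtain ⟨lam, hlam0, hlam12, hlam⟩ := arith hr ht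
  -- integrability of exp(-lam * S')
  have hSmeas : Measurable S' := by
    apply Finset.measurable_sum
    exact fun i _ => hXmeas i
  have hXlow : ∀ i ω, -(nuGauss a) ≤ X i ω := fun i ω => f_ge a ha0 (Z' i ω)
  have hSlow : ∀ ω, -((p:ℝ) * nuGauss a) ≤ S' ω := by
    intro ω
    have h1 := Finset.sum_le_sum (s := Finset.univ) (f := fun _ : Fin p => -(nuGauss a))
      (g := fun i => X i ω) (fun i _ => hXlow i ω)
    rw [Finset.sum_const, Finset.card_univ, Fintype.card_fin, nsmul_eq_mul] at h1
    calc -((p:ℝ) * nuGauss a) = (p:ℝ) * -(nuGauss a) := by ring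
    _ ≤ S' ω := h1
  have hSint : Integrable (fun ω => Real.exp (-lam * S' ω)) ℙ := by
    refine Integrable.mono' (integrable_const (Real.exp (lam * ((p:ℝ) * nuGauss a))))
      ((hSmeas.const_mul (-lam)).exp.aestronglyMeasurable) ?_
    filter_upwards with ω
    rw [Real.norm_eq_abs, abs_of_pos (Real.exp_pos _)]
    apply Real.exp_le_exp.mpr
    nlinarith [hSlow ω]
  -- Chernoff
  have hchern := measure_le_le_exp_mul_mgf (X := S') (μ := ℙ) (t := -lam) (-t)
    (neg_nonpos.mpr hlam0) hSint
  -- mgf product bound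
  have hSeq : S' = ∑ i ∈ Finset.univ, X i := by
    funext ω
    rw [Finset.sum_apply]
  have hprod : mgf S' ℙ (-lam) = ∏ i, mgf (X i) ℙ (-lam) := by
    rw [hSeq]
    exact hXindep.mgf_sum hXmeas Finset.univ
  have hmgf_le : ∀ i, mgf (X i) ℙ (-lam) ≤ Real.exp (6 * lam ^ 2 * gE a) := by
    intro i
    have hmap : ∫ z, Real.exp (-lam * F z) ∂(gaussianReal 0 1)
        = ∫ ω, Real.exp (-lam * X i ω) ∂ℙ := by
      rw [← hlaw' i]
      exact integral_map (hZ'meas i).aemeasurable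
        (((measurable_f a).const_mul (-lam)).exp).aestronglyMeasurable
    have hle := mgf_single (lam := lam) ha hlam0 hlam12
    rw [hmap] at hle
    exact hle
  have hprod_le : ∏ i, mgf (X i) ℙ (-lam) ≤ Real.exp ((p:ℝ) * (6 * lam ^ 2 * gE a)) := by
    calc ∏ i, mgf (X i) ℙ (-lam) ≤ ∏ _i : Fin p, Real.exp (6 * lam ^ 2 * gE a) :=
          Finset.prod_le_prod (fun i _ => mgf_nonneg) (fun i _ => hmgf_le i)
    _ = Real.exp ((p:ℝ) * (6 * lam ^ 2 * gE a)) := by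
        rw [Finset.prod_const, Finset.card_univ, Fintype.card_fin, ← Real.exp_nat_mul]
  -- real-valued final bound
  have hfinal : (ℙ {ω | S' ω ≤ -t}).toReal
      ≤ Real.exp (-(min (t ^ 2 / (24 * ((p:ℝ) * gE a))) (t / 4))) := by
    calc (ℙ {ω | S' ω ≤ -t}).toReal
        ≤ Real.exp (-(-lam) * -t) * mgf S' ℙ (-lam) := hchern
    _ ≤ Real.exp (-(-lam) * -t) * Real.exp ((p:ℝ) * (6 * lam ^ 2 * gE a)) := by
        apply mul_le_mul_of_nonneg_left _ (Real.exp_pos _).le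
        rw [hprod]
        exact hprod_le
    _ = Real.exp (-lam * t + 6 * lam ^ 2 * ((p:ℝ) * gE a)) := by
        rw [← Real.exp_add]
        congr 1
        ring
    _ ≤ Real.exp (-(min (t ^ 2 / (24 * ((p:ℝ) * gE a))) (t / 4))) := Real.exp_le_exp.mpr hlam
  -- rewrite the target exponent
  have hRHSeq : t ^ 2 * Real.exp (a ^ 2 / 2) / (24 * (p:ℝ))
      = t ^ 2 / (24 * ((p:ℝ) * gE a)) := by
    have hgE : gE a * Real.exp (a ^ 2 / 2) = 1 := by
      rw [gE, ← Real.exp_add, show -a ^ 2 / 2 + a ^ 2 / 2 = 0 by ring, Real.exp_zero]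
    field_simp
    linear_combination hgE
  calc ℙ {ω | ∑ i : Fin p, (if a ≤ |Z i ω| then Z i ω ^ 2 - nuGauss a else 0) < -t}
      ≤ ℙ {ω | S' ω ≤ -t} := hevent
  _ = ENNReal.ofReal ((ℙ {ω | S' ω ≤ -t}).toReal) :=
      (ENNReal.ofReal_toReal (measure_ne_top _ _)).symm
  _ ≤ ENNReal.ofReal (Real.exp (-(min (t ^ 2 * Real.exp (a ^ 2 / 2) / (24 * (p:ℝ))) (t / 4)))) := by
      apply ENNReal.ofReal_le_ofReal
      rw [hRHSeq]
      exact hfinal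
end

section
/- Let 𝓜 be the collection of seeded intervals generated with parameters α ∈ (1,2] and K ≥ 2 for sample size n. Then for every real h with 0 < h ≤ n/2 and every integer η with max(3h/2, 1) ≤ η ≤ n − max(3h/2, 1), there exist integers l ≥ 1 and v such that: (v−l, v+l] ∈ 𝓜; h/2 ≤ l ≤ max(h, 1); |v − η| ≤ l/K ≤ l/2; and moreover (v−l, v+l] ⊆ (η − max(3h/2, 1), η + max(3h/2, 1)]. -/
open MeasureTheory ProbabilityTheory Real
open scoped ENNReal NNReal Classical

/-- The sequence of seeded interval half-lengths: `l_1 = 1`, `l_{j+1} = max(l_j + 1, ⌊α l_j⌋)`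
(0-indexed here). -/
noncomputable def seedLens (α : ℝ) : ℕ → ℕ
  | 0 => 1
  | j + 1 => max (seedLens α j + 1) ⌊α * (seedLens α j : ℝ)⌋₊

/-- The collection of seeded intervals (as pairs `(s, e)` denoting the integer interval
`(s, e]`) generated with growth parameter `α` and step parameter `K` for sample size `n`. -/
noncomputable def seededIntervals (n : ℕ) (α : ℝ) (K : ℕ) : Finset (ℕ × ℕ) :=
  ((Finset.range n).filter fun j => 2 * seedLens α j ≤ n).biUnion fun j =>
    let l := seedLens α j
    let s := max 1 (l / K)
    insert (n - 2 * l, n)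
      ((Finset.range ((n - 2 * l) / s + 1)).image fun i => (i * s, i * s + 2 * l))

lemma seedLens_ge (α : ℝ) (j : ℕ) : j + 1 ≤ seedLens α j := by
  induction j with
  | zero => simp [seedLens]
  | succ k ih =>
    have : seedLens α k + 1 ≤ seedLens α (k + 1) := le_max_left _ _
    omega

lemma seedLens_succ_le (α : ℝ) (hα2 : α ≤ 2) (j : ℕ) :
    seedLens α (j + 1) ≤ 2 * seedLens α j := by
  have h1 : 1 ≤ seedLens α j := by have := seedLens_ge α j; omega
  have hfloor : ⌊α * (seedLens α j : ℝ)⌋₊ ≤ 2 * seedLens α j := by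
    have : α * (seedLens α j : ℝ) ≤ ((2 * seedLens α j : ℕ) : ℝ) := by
      push_cast
      have : (0:ℝ) ≤ (seedLens α j : ℝ) := by positivity
      nlinarith
    calc ⌊α * (seedLens α j : ℝ)⌋₊ ≤ ⌊((2 * seedLens α j : ℕ) : ℝ)⌋₊ :=
          Nat.floor_le_floor this
      _ = 2 * seedLens α j := Nat.floor_natCast _
  show max (seedLens α j + 1) _ ≤ _
  omega

/-- For seeded intervals generated with `α ∈ (1, 2]` and `K ≥ 2`: for every real `0 < h ≤ n/2`
and every integer `η` with `max(3h/2, 1) ≤ η ≤ n − max(3h/2, 1)`, there exist integers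
`l ≥ 1` and `v` such that `(v−l, v+l] ∈ 𝓜`, `h/2 ≤ l ≤ max(h, 1)`, `|v − η| ≤ l/K ≤ l/2`, and
`(v−l, v+l] ⊆ (η − max(3h/2, 1), η + max(3h/2, 1)]`. -/
theorem seeded_interval_near_changepoint
    (n : ℕ) (α : ℝ) (K : ℕ) (hα1 : 1 < α) (hα2 : α ≤ 2) (hK : 2 ≤ K)
    (h : ℝ) (hh0 : 0 < h) (hhn : h ≤ (n : ℝ) / 2)
    (η : ℕ) (hη1 : max (3 * h / 2) 1 ≤ (η : ℝ))
    (hη2 : (η : ℝ) ≤ (n : ℝ) - max (3 * h / 2) 1) :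
    ∃ l v : ℕ, 1 ≤ l ∧ l ≤ v ∧
      (v - l, v + l) ∈ seededIntervals n α K ∧
      h / 2 ≤ (l : ℝ) ∧ (l : ℝ) ≤ max h 1 ∧
      |(v : ℝ) - (η : ℝ)| ≤ (l : ℝ) / (K : ℝ) ∧ (l : ℝ) / (K : ℝ) ≤ (l : ℝ) / 2 ∧
      (η : ℝ) - max (3 * h / 2) 1 ≤ (v : ℝ) - (l : ℝ) ∧
      (v : ℝ) + (l : ℝ) ≤ (η : ℝ) + max (3 * h / 2) 1 := by
  classical
  set T : ℝ := max h 1 with hTdef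
  set M : ℝ := max (3 * h / 2) 1 with hMdef
  have hT1 : (1:ℝ) ≤ T := le_max_right _ _
  have hM1 : (1:ℝ) ≤ M := le_max_right _ _
  have hhT : h ≤ T := le_max_left _ _
  have hM32 : 3 * h / 2 ≤ M := le_max_left _ _
  -- choose the largest j with seedLens α j ≤ T
  set P : ℕ → Prop := fun j => (seedLens α j : ℝ) ≤ T with hPdef
  have hP0 : P 0 := by simpa [P, seedLens] using hT1
  set B : ℕ := ⌈T⌉₊ with hBdef
  set j : ℕ := Nat.findGreatest P B with hjdef
  have hPj : P j := Nat.findGreatest_spec (Nat.zero_le B) hP0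
  have hnotPj1 : ¬ P (j + 1) := by
    rcases le_or_gt (j + 1) B with hb | hb
    · exact Nat.findGreatest_is_greatest (Nat.lt_succ_self j) hb
    · intro hcontra
      have h1 : (j + 2 : ℕ) ≤ seedLens α (j + 1) := seedLens_ge α (j + 1)
      have h2 : (B : ℝ) + 1 ≤ seedLens α (j + 1) := by
        have : (B + 1 : ℕ) ≤ seedLens α (j + 1) := by omega
        exact_mod_cast this
      have h3 : T ≤ (B : ℝ) := Nat.le_ceil T
      have : (seedLens α (j + 1) : ℝ) ≤ T := hcontra
      linarith
  set l : ℕ := seedLens α j with hldef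
  have hl1 : 1 ≤ l := by have := seedLens_ge α j; omega
  have hlT : (l : ℝ) ≤ T := hPj
  have hTlt : T < 2 * (l : ℝ) := by
    have h1 : ¬ ((seedLens α (j+1) : ℝ) ≤ T) := hnotPj1
    push_neg at h1
    have h2 : (seedLens α (j+1) : ℝ) ≤ 2 * l := by
      exact_mod_cast seedLens_succ_le α hα2 j
    linarith
  have hhl : h / 2 ≤ (l : ℝ) := by linarith
  -- l ≤ M
  have hlM : (l : ℝ) ≤ M := by
    rcases le_or_gt h 1 with hc | hc
    · have hTeq : T = 1 := by rw [hTdef]; exact max_eq_right hc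
      rw [hTeq] at hlT; linarith
    · have hTeq : T = h := by rw [hTdef]; exact max_eq_left (le_of_lt hc)
      rw [hTeq] at hlT; linarith
  have hlη : l ≤ η := by
    have : (l : ℝ) ≤ (η : ℝ) := by linarith
    exact_mod_cast this
  have hηln : η + l ≤ n := by
    have : ((η + l : ℕ) : ℝ) ≤ (n : ℝ) := by push_cast; linarith
    exact_mod_cast this
  have h2ln : 2 * l ≤ n := by omega
  -- step
  set s : ℕ := max 1 (l / K) with hsdef
  have hs1 : 1 ≤ s := le_max_left _ _
  have hK0 : (0:ℝ) < K := by positivity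
  have hsl : (s : ℝ) - 1 ≤ (l : ℝ) / K := by
    rcases lt_or_ge l K with hc | hc
    · have : l / K = 0 := Nat.div_eq_of_lt hc
      have hseq : s = 1 := by rw [hsdef, this]; simp
      rw [hseq]
      have : (0:ℝ) ≤ (l : ℝ) / K := by positivity
      push_cast
      linarith
    · have h1 : 1 ≤ l / K := (Nat.one_le_div_iff (by omega)).2 hc
      have hseq : s = l / K := by rw [hsdef]; exact max_eq_right h1
      have h2 : ((l / K : ℕ) : ℝ) ≤ (l : ℝ) / K := Nat.cast_div_le
      rw [hseq]; linarith
  -- pick grid point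
  set i : ℕ := (η - l) / s with hidef
  set v : ℕ := i * s + l with hvdef
  have hil : i * s ≤ η - l := Nat.div_mul_le_self _ _
  have hvη : v ≤ η := by omega
  have hlv : l ≤ v := by omega
  have hmod : η - v < s := by
    have h1 : i * s + (η - l) % s = η - l := by
      rw [hidef]; exact Nat.div_add_mod' _ _
    have h2 : (η - l) % s < s := Nat.mod_lt _ (by omega)
    omega
  have hgapnat : η - v ≤ s - 1 := by omega
  have hgap : (η : ℝ) - (v : ℝ) ≤ (s : ℝ) - 1 := by
    have : ((η - v : ℕ) : ℝ) ≤ ((s - 1 : ℕ) : ℝ) := by exact_mod_cast hgapnat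
    rw [Nat.cast_sub hvη, Nat.cast_sub hs1] at this
    simpa using this
  have hvRle : (v : ℝ) ≤ (η : ℝ) := Nat.cast_le.2 hvη
  have habs : |(v : ℝ) - (η : ℝ)| ≤ (l : ℝ) / K := by
    rw [abs_sub_comm, abs_of_nonneg (sub_nonneg.2 hvRle)]
    linarith
  have hK2 : (2:ℝ) ≤ (K : ℝ) := by exact_mod_cast hK
  have hKl : (l : ℝ) / K ≤ (l : ℝ) / 2 := by gcongr
  -- coverage:  s - 1 + l ≤ M
  have hcov : (s : ℝ) - 1 + l ≤ M := by
    rcases eq_or_lt_of_le hl1 with hc | hc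
    · -- l = 1
      have hl' : l = 1 := hc.symm
      have : l / K = 0 := Nat.div_eq_of_lt (by omega)
      have hseq : s = 1 := by rw [hsdef, this]; simp
      rw [hseq, hl']
      push_cast
      linarith
    · -- 2 ≤ l
      have h2l : (2:ℝ) ≤ (l : ℝ) := by exact_mod_cast hc
      have hh2 : 2 ≤ h := by
        rcases le_or_gt h 1 with hd | hd
        · have : T = 1 := max_eq_right hd
          rw [this] at hlT; linarith
        · have : T = h := max_eq_left (le_of_lt hd)
          rw [this] at hlT
          by_contra hcon
          push_neg at hcon
          -- h < 2 and l ≤ h with 2 ≤ l: contradiction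
          linarith
      have hTh : T = h := max_eq_left (by linarith)
      rw [hTh] at hlT
      have : (s : ℝ) - 1 ≤ (l : ℝ) / 2 := le_trans hsl hKl
      linarith
  -- membership
  have hjn : j < n := by
    have h1 : j + 1 ≤ l := seedLens_ge α j
    omega
  have himax : i ≤ (n - 2 * l) / s := by
    rw [Nat.le_div_iff_mul_le (by omega : 0 < s)]
    omega
  have hmem : (v - l, v + l) ∈ seededIntervals n α K := by
    rw [seededIntervals, Finset.mem_biUnion]
    refine ⟨j, Finset.mem_filter.2 ⟨Finset.mem_range.2 hjn, h2ln⟩, ?_⟩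
    simp only [← hldef, ← hsdef]
    apply Finset.mem_insert_of_mem
    rw [Finset.mem_image]
    refine ⟨i, Finset.mem_range.2 (by omega), ?_⟩
    have e1 : i * s = v - l := by omega
    have e2 : i * s + 2 * l = v + l := by omega
    rw [e2, e1]
  refine ⟨l, v, hl1, hlv, hmem, hhl, hlT, habs, hKl, ?_, ?_⟩
  · have hvR : (η : ℝ) - ((s:ℝ) - 1) ≤ (v : ℝ) := by linarith
    linarith
  · linarith
end

section
/- Let 𝓜 be the collection of seeded intervals generated with parameters α > 1 and K > 1 for sample size n ≥ 2. Then the number N of distinct integer triples (s, e, v) with (s,e] ∈ 𝓜 and s < v < e satisfies N < 4·(⌈1/(α−1)⌉ + log_α n)·K·n; in particular N = O(n·log n) for fixed α and K. -/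
open MeasureTheory ProbabilityTheory Real
open scoped ENNReal NNReal Classical

lemma seedLens_succ_ge (α : ℝ) (j : ℕ) : seedLens α j + 1 ≤ seedLens α (j + 1) :=
  le_max_left _ _

lemma seedLens_mono (α : ℝ) : Monotone (seedLens α) :=
  monotone_nat_of_le_succ fun j => by have := seedLens_succ_ge α j; omega

lemma seedLens_one_ge (α : ℝ) (hα : 1 < α) : α - 1 ≤ (seedLens α 1 : ℝ) := by
  have h : seedLens α 1 = max 2 ⌊α * ((1:ℕ) : ℝ)⌋₊ := by simp [seedLens]
  have h2 : α - 1 < (⌊α⌋₊ : ℝ) := Nat.sub_one_lt_floor α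
  have h3 : ⌊α * ((1:ℕ):ℝ)⌋₊ ≤ seedLens α 1 := h ▸ le_max_right _ _
  have : (⌊α⌋₊:ℝ) ≤ (seedLens α 1 : ℝ) := by
    have : ⌊α⌋₊ ≤ seedLens α 1 := by simpa using h3
    exact_mod_cast this
  linarith

lemma seedLens_rec (α : ℝ) (hα : 1 < α) (j : ℕ) :
    α * ((seedLens α j : ℝ) - 1 / (α - 1)) ≤ (seedLens α (j + 1) : ℝ) - 1 / (α - 1) := by
  have h1 : α * (seedLens α j : ℝ) - 1 < (⌊α * (seedLens α j : ℝ)⌋₊ : ℝ) :=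
    Nat.sub_one_lt_floor _
  have h2 : (⌊α * (seedLens α j : ℝ)⌋₊ : ℝ) ≤ (seedLens α (j + 1) : ℝ) := by
    exact_mod_cast (le_max_right (seedLens α j + 1) ⌊α * (seedLens α j : ℝ)⌋₊ :
      _ ≤ seedLens α (j + 1))
  have hc : (α - 1) * (1 / (α - 1)) = 1 := by
    rw [mul_one_div]; exact div_self (by linarith)
  nlinarith [h1, h2]

lemma seedLens_pow (α : ℝ) (hα : 1 < α) (C m : ℕ) :
    α ^ m * ((seedLens α C : ℝ) - 1 / (α - 1)) ≤ (seedLens α (C + m) : ℝ) - 1 / (α - 1) := by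
  induction m with
  | zero => simp
  | succ m ih =>
      have h := seedLens_rec α hα (C + m)
      have h2 : α * (α ^ m * ((seedLens α C : ℝ) - 1 / (α - 1)))
          ≤ α * ((seedLens α (C + m) : ℝ) - 1 / (α - 1)) :=
        mul_le_mul_of_nonneg_left ih (by linarith)
      calc α ^ (m + 1) * ((seedLens α C : ℝ) - 1 / (α - 1))
          = α * (α ^ m * ((seedLens α C : ℝ) - 1 / (α - 1))) := by ring
        _ ≤ α * ((seedLens α (C + m) : ℝ) - 1 / (α - 1)) := h2
        _ ≤ (seedLens α (C + m + 1) : ℝ) - 1 / (α - 1) := h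

lemma seedLens_base (α : ℝ) (hα : 1 < α) :
    α / 2 ≤ (seedLens α ⌈1 / (α - 1)⌉₊ : ℝ) - 1 / (α - 1) := by
  set c : ℝ := 1 / (α - 1) with hc
  have hα1 : (0:ℝ) < α - 1 := by linarith
  have hcpos : 0 < c := by positivity
  set C : ℕ := ⌈c⌉₊ with hC
  have hC1 : 1 ≤ C := Nat.one_le_iff_ne_zero.mpr (by
    simp only [hC, ne_eq, Nat.ceil_eq_zero, not_le]; exact hcpos)
  have hCc : c ≤ (C : ℝ) := Nat.le_ceil c
  have hL1 : ((C : ℝ) + 1) ≤ (seedLens α C : ℝ) := by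
    have := seedLens_ge α C; exact_mod_cast this
  have hL2 : α - 1 ≤ (seedLens α C : ℝ) := by
    have h1 := seedLens_one_ge α hα
    have h2 : seedLens α 1 ≤ seedLens α C := seedLens_mono α hC1
    have : (seedLens α 1 : ℝ) ≤ (seedLens α C : ℝ) := by exact_mod_cast h2
    linarith
  rcases le_or_gt α 2 with h2 | h2
  · -- c ≥ 1, C ≥ c, l_C ≥ C+1 ≥ c+1
    have hc1 : 1 ≤ c := by
      rw [hc, le_div_iff₀ hα1]; linarith
    linarith
  · have hc1 : c ≤ 1 := by
      rw [hc, div_le_one hα1]; linarith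
    have hCeq : C = 1 := le_antisymm (by
      rw [hC]; exact Nat.ceil_le.mpr (by push_cast; linarith)) hC1
    rcases le_or_gt α 3 with h3 | h3
    · -- 2 - c ≥ α/2
      have hL : (2 : ℝ) ≤ (seedLens α C : ℝ) := by
        rw [hCeq] at hL1 ⊢; push_cast at hL1; linarith
      have key : α / 2 ≤ 2 - c := by
        have hm : c * (α - 1) = 1 := by rw [hc]; field_simp
        nlinarith [mul_nonneg (by linarith : (0:ℝ) ≤ α - 2) (by linarith : (0:ℝ) ≤ 3 - α)]
      linarith
    · -- α - 1 - c ≥ α/2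
      have key : α / 2 ≤ (α - 1) - c := by
        rw [hc]
        have : c * (α - 1) = 1 := by rw [hc]; field_simp
        nlinarith
      linarith

lemma seedLens_count (n : ℕ) (hn : 2 ≤ n) (α : ℝ) (hα : 1 < α) (j : ℕ)
    (hj : 2 * seedLens α j ≤ n) :
    (j : ℝ) + 1 ≤ (⌈1 / (α - 1)⌉₊ : ℝ) + Real.logb α (n : ℝ) := by
  have hα1 : (0:ℝ) < α - 1 := by linarith
  have hlog0 : 0 ≤ Real.logb α (n : ℝ) :=
    Real.logb_nonneg hα (by exact_mod_cast Nat.one_le_iff_ne_zero.mpr (by omega))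
  set C : ℕ := ⌈1 / (α - 1)⌉₊ with hC
  rcases le_or_gt (j + 1) C with h | h
  · have : (j:ℝ) + 1 ≤ (C:ℝ) := by exact_mod_cast h
    linarith
  · have hCj : C ≤ j := by omega
    set m : ℕ := j - C with hm
    have hjm : j = C + m := by omega
    have hpow := seedLens_pow α hα C m
    have hbase := seedLens_base α hα
    have hbase' : α ^ m * (α / 2) ≤ α ^ m * ((seedLens α C : ℝ) - 1 / (α - 1)) :=
      mul_le_mul_of_nonneg_left hbase (by positivity)
    have hl : (seedLens α j : ℝ) ≤ (n : ℝ) / 2 := by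
      have : (2 * seedLens α j : ℕ) ≤ (n : ℕ) := hj
      have h2 : ((2 * seedLens α j : ℕ) : ℝ) ≤ (n : ℝ) := by exact_mod_cast this
      push_cast at h2; linarith
    have hcpos : 0 < 1 / (α - 1) := by positivity
    have hkey : α ^ (m + 1) < (n : ℝ) := by
      have h1 : α ^ m * (α / 2) ≤ (seedLens α (C + m) : ℝ) - 1 / (α - 1) :=
        le_trans hbase' hpow
      rw [← hjm] at h1
      have : α ^ (m + 1) = 2 * (α ^ m * (α / 2)) := by ring
      rw [this]
      linarith
    have hlt : (m : ℝ) + 1 < Real.logb α (n : ℝ) := by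
      have := Real.logb_lt_logb hα (by positivity : (0:ℝ) < α ^ (m + 1)) hkey
      rwa [Real.logb_pow, Real.logb_self_eq_one hα, mul_one,
        Nat.cast_add, Nat.cast_one] at this
    have : (j : ℝ) = (C : ℝ) + (m : ℝ) := by rw [hjm]; push_cast; ring
    linarith

lemma per_scale (n l K : ℕ) (hl : 1 ≤ l) (hln : 2 * l ≤ n) (hK : 2 ≤ K) :
    ((n - 2 * l) / max 1 (l / K) + 2) * (2 * l - 1) < 4 * K * n := by
  obtain ⟨l', rfl⟩ : ∃ l', l = l' + 1 := ⟨l - 1, by omega⟩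
  rcases lt_or_ge (l' + 1) K with h | h
  · have hs : (l' + 1) / K = 0 := Nat.div_eq_of_lt h
    rw [hs]
    norm_num
    have h1 : n - 2 * (l' + 1) + 2 ≤ n := by omega
    have h2 : 2 * (l' + 1) - 1 ≤ 2 * K := by omega
    calc (n - 2 * (l' + 1) + 2) * (2 * (l' + 1) - 1) ≤ n * (2 * K) :=
          Nat.mul_le_mul h1 h2
      _ < 4 * K * n := by nlinarith
  · set s := (l' + 1) / K with hs
    have hs1 : 1 ≤ s := (Nat.one_le_div_iff (by omega)).mpr h
    rw [max_eq_right hs1]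
    set q := (n - 2 * (l' + 1)) / s with hq
    have h3 : q * s ≤ n - 2 * (l' + 1) := Nat.div_mul_le_self _ _
    have h3' : q * s ≤ n - 2 * (l' + 1) := h3
    have h1 : K * s ≤ l' + 1 := by
      rw [hs, mul_comm]; exact Nat.div_mul_le_self _ _
    have h2 : l' + 1 < s * K + K := by
      rw [hs]; exact Nat.lt_div_mul_add (by omega)
    obtain ⟨d, hd⟩ : ∃ d, n = 2 * (l' + 1) + d := ⟨n - 2 * (l' + 1), by omega⟩
    subst hd
    have h3'' : q * s ≤ d := by omega
    have hKs : K ≤ K * s := Nat.le_mul_of_pos_right K hs1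
    have h2' : s * K = K * s := by ring
    have h5 : 2 * (l' + 1) + 2 ≤ 4 * (K * s) := by omega
    have h6 : q * (2 * (l' + 1) + 2) ≤ q * (4 * (K * s)) := Nat.mul_le_mul_left q h5
    have h7 : q * (4 * (K * s)) = 4 * K * (q * s) := by ring
    have h8 : 4 * K * (q * s) ≤ 4 * K * d := Nat.mul_le_mul_left _ h3''
    have hsub : 2 * (l' + 1) - 1 = 2 * l' + 1 := by omega
    rw [hsub]
    nlinarith [h6, h7, h8]

lemma sum_biUnion_le' {ι β : Type*} [DecidableEq β] (s : Finset ι) (t : ι → Finset β)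
    (f : β → ℕ) : ∑ x ∈ s.biUnion t, f x ≤ ∑ j ∈ s, ∑ x ∈ t j, f x := by
  classical
  induction s using Finset.induction with
  | empty => simp
  | insert _ _ h ih =>
      rename_i a s'
      rw [Finset.biUnion_insert, Finset.sum_insert h]
      calc ∑ x ∈ t a ∪ s'.biUnion t, f x
          ≤ ∑ x ∈ t a, f x + ∑ x ∈ s'.biUnion t, f x := by
            have := Finset.sum_union_inter (s₁ := t a) (s₂ := s'.biUnion t) (f := f)
            omega
        _ ≤ ∑ x ∈ t a, f x + ∑ j ∈ s', ∑ x ∈ t j, f x := by omega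

/-- The number `N` of distinct integer triples `(s, e, v)` with `(s, e] ∈ 𝓜` and `s < v < e`
satisfies `N < 4·(⌈1/(α−1)⌉ + log_α n)·K·n`; in particular `N = O(n log n)` for fixed `α, K`. -/
theorem seeded_intervals_triple_count
    (n : ℕ) (hn : 2 ≤ n) (α : ℝ) (K : ℕ) (hα : 1 < α) (hK : 1 < K) :
    ((∑ m ∈ seededIntervals n α K, (m.2 - m.1 - 1) : ℕ) : ℝ)
      < 4 * ((⌈1 / (α - 1)⌉₊ : ℝ) + Real.logb α (n : ℝ)) * (K : ℝ) * (n : ℝ) := by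
  classical
  set F := (Finset.range n).filter (fun j => 2 * seedLens α j ≤ n) with hF
  set I : ℕ → Finset (ℕ × ℕ) := fun j =>
    let l := seedLens α j
    let s := max 1 (l / K)
    insert (n - 2 * l, n)
      ((Finset.range ((n - 2 * l) / s + 1)).image fun i => (i * s, i * s + 2 * l)) with hI
  have hFeq : seededIntervals n α K = F.biUnion I := rfl
  have hFne : F.Nonempty := by
    refine ⟨0, Finset.mem_filter.mpr ⟨Finset.mem_range.mpr (by omega), ?_⟩⟩
    show 2 * seedLens α 0 ≤ n
    simp [seedLens]; omega
  -- per-scale bound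
  have hstep : ∀ j ∈ F, (∑ m ∈ I j, (m.2 - m.1 - 1)) < 4 * K * n := by
    intro j hj
    obtain ⟨-, hjn⟩ := Finset.mem_filter.mp hj
    set l := seedLens α j with hl
    have hl1 : 1 ≤ l := by have := seedLens_ge α j; omega
    set s := max 1 (l / K) with hs
    set q := (n - 2 * l) / s with hq
    have hw : ∀ m ∈ I j, (m.2 - m.1 - 1) ≤ 2 * l - 1 := by
      intro m hm
      simp only [hI] at hm
      rcases Finset.mem_insert.mp hm with h | h
      · subst h; simp only; omega
      · obtain ⟨i, -, rfl⟩ := Finset.mem_image.mp h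
        simp only; omega
    have hIj : I j = insert (n - 2 * l, n)
        ((Finset.range (q + 1)).image fun i => (i * s, i * s + 2 * l)) := rfl
    have hcard : (I j).card ≤ q + 2 := by
      rw [hIj]
      have h1 := Finset.card_insert_le (n - 2 * l, n)
        ((Finset.range (q + 1)).image fun i => (i * s, i * s + 2 * l))
      have h2 : ((Finset.range (q + 1)).image fun i => (i * s, i * s + 2 * l)).card ≤ q + 1 :=
        le_trans Finset.card_image_le (by rw [Finset.card_range])
      omega
    calc (∑ m ∈ I j, (m.2 - m.1 - 1)) ≤ (I j).card * (2 * l - 1) := by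
          simpa using Finset.sum_le_card_nsmul (I j) _ (2 * l - 1) hw
      _ ≤ (q + 2) * (2 * l - 1) := Nat.mul_le_mul_right _ hcard
      _ < 4 * K * n := per_scale n l K hl1 hjn (by omega)
  -- total in ℕ
  have htot : (∑ m ∈ seededIntervals n α K, (m.2 - m.1 - 1)) < F.card * (4 * K * n) := by
    calc (∑ m ∈ seededIntervals n α K, (m.2 - m.1 - 1))
        ≤ ∑ j ∈ F, ∑ m ∈ I j, (m.2 - m.1 - 1) := by
          rw [hFeq]; exact sum_biUnion_le' F I _
      _ < ∑ j ∈ F, 4 * K * n := Finset.sum_lt_sum_of_nonempty hFne hstep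
      _ = F.card * (4 * K * n) := by rw [Finset.sum_const, smul_eq_mul]
  -- card bound
  set X : ℝ := (⌈1 / (α - 1)⌉₊ : ℝ) + Real.logb α (n : ℝ) with hX
  have hX0 : 0 ≤ X := by
    have h1 : 0 ≤ Real.logb α (n : ℝ) :=
      Real.logb_nonneg hα (by exact_mod_cast Nat.one_le_iff_ne_zero.mpr (by omega))
    have h2 : (0:ℝ) ≤ (⌈1 / (α - 1)⌉₊ : ℝ) := Nat.cast_nonneg _
    rw [hX]; linarith
  have hcard : (F.card : ℝ) ≤ X := by
    have hsub : F ⊆ Finset.range ⌊X⌋₊ := by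
      intro j hj
      obtain ⟨-, hjn⟩ := Finset.mem_filter.mp hj
      have h1 : (j : ℝ) + 1 ≤ X := seedLens_count n hn α hα j hjn
      have h2 : j + 1 ≤ ⌊X⌋₊ := Nat.le_floor (by push_cast; linarith)
      exact Finset.mem_range.mpr (by omega)
    calc (F.card : ℝ) ≤ ((Finset.range ⌊X⌋₊).card : ℝ) := by
          exact_mod_cast Finset.card_le_card hsub
      _ = (⌊X⌋₊ : ℝ) := by rw [Finset.card_range]
      _ ≤ X := Nat.floor_le hX0
  have hKn : (0:ℝ) ≤ 4 * K * n := by positivity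
  calc ((∑ m ∈ seededIntervals n α K, (m.2 - m.1 - 1) : ℕ) : ℝ)
      < ((F.card * (4 * K * n) : ℕ) : ℝ) := by exact_mod_cast htot
    _ = (F.card : ℝ) * (4 * (K:ℝ) * (n:ℝ)) := by push_cast; ring
    _ ≤ X * (4 * (K:ℝ) * (n:ℝ)) := mul_le_mul_of_nonneg_right hcard (by positivity)
    _ = 4 * X * (K:ℝ) * (n:ℝ) := by ring
end

section
/- Let a > 0 and ν_a = E(Z² | |Z| ≥ a) for a standard Gaussian Z, and for θ ∈ ℝ let Y_θ ~ N(θ, 1). Define A_θ = (Y_θ² − ν_a)·1{|Y_θ| ≥ a} and B_θ = Y_θ² − 1. Then A_θ − B_θ is stochastically decreasing in |θ|: for all θ₁, θ₂ ∈ ℝ with |θ₁| ≤ |θ₂| and all real u, P(A_{θ₂} − B_{θ₂} > u) ≤ P(A_{θ₁} − B_{θ₁} > u). -/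
open MeasureTheory ProbabilityTheory Real
open scoped ENNReal NNReal Classical

lemma integrable_sq_gaussian : Integrable (fun z : ℝ => z ^ 2) (gaussianReal 0 1) := by
  rw [gaussianReal_of_var_ne_zero _ one_ne_zero,
    integrable_withDensity_iff (measurable_gaussianPDF 0 1)
      (ae_of_all _ fun x => ENNReal.ofReal_lt_top)]
  have hto : ∀ x : ℝ, (gaussianPDF 0 1 x).toReal = gaussianPDFReal 0 1 x := fun x =>
    ENNReal.toReal_ofReal (gaussianPDFReal_nonneg _ _ _)
  simp only [hto, gaussianPDFReal]
  have h := (integrable_rpow_mul_exp_neg_mul_sq (b := 1/2) (by norm_num)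
      (s := 2) (by norm_num)).const_mul ((Real.sqrt (2 * π * (1:ℝ≥0)))⁻¹)
  have h2 : ∀ x : ℝ, x ^ (2:ℝ) = x ^ (2:ℕ) := fun x => by
    rw [show (2:ℝ) = ((2:ℕ):ℝ) by norm_num, Real.rpow_natCast]
  simp only [h2] at h
  refine h.congr (ae_of_all _ fun x => ?_)
  simp only []
  rw [show -(1/2 : ℝ) * x ^ 2 = -(x - 0) ^ 2 / (2 * ((1:ℝ≥0):ℝ)) by push_cast; ring]
  ring

lemma nu_ge (a : ℝ) (ha : 0 < a) : a ^ 2 ≤ nuGauss a := by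
  have hSm : MeasurableSet {z : ℝ | a ≤ |z|} :=
    (isClosed_le continuous_const continuous_abs).measurableSet
  have hpos : 0 < gaussianReal 0 1 {z : ℝ | a ≤ |z|} := by
    rw [pos_iff_ne_zero]
    intro h0
    have hv : (volume : Measure ℝ) {z : ℝ | a ≤ |z|} = 0 :=
      gaussianReal_absolutelyContinuous' 0 one_ne_zero h0
    have hIcc : (volume : Measure ℝ) (Set.Icc a (a+1)) = 0 := by
      refine measure_mono_null (fun x hx => ?_) hv
      have : a ≤ x := hx.1
      exact this.trans (le_abs_self x)
    rw [Real.volume_Icc] at hIcc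
    simp at hIcc
  have hne : gaussianReal 0 1 {z : ℝ | a ≤ |z|} ≠ ⊤ := measure_ne_top _ _
  have hPpos : 0 < (gaussianReal 0 1 {z : ℝ | a ≤ |z|}).toReal :=
    ENNReal.toReal_pos hpos.ne' hne
  have hlow : a ^ 2 * (gaussianReal 0 1 {z : ℝ | a ≤ |z|}).toReal
      ≤ ∫ z in {z : ℝ | a ≤ |z|}, z ^ 2 ∂(gaussianReal 0 1) := by
    refine setIntegral_ge_of_const_le_real hSm hne (fun x hx => ?_)
      integrable_sq_gaussian.integrableOn
    have hax : a ≤ |x| := hx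
    nlinarith [sq_abs x, abs_nonneg x]
  rw [nuGauss, le_div_iff₀ hPpos]
  exact hlow

lemma continuous_gaussianPDFReal01 : Continuous (gaussianPDFReal 0 1) := by
  unfold gaussianPDFReal
  fun_prop

/-- CDF-like antiderivative of the standard gaussian pdf. -/
noncomputable def stdGaussInt (x : ℝ) : ℝ := ∫ s in (0:ℝ)..x, gaussianPDFReal 0 1 s

lemma hasDerivAt_stdGaussInt (x : ℝ) :
    HasDerivAt stdGaussInt (gaussianPDFReal 0 1 x) x :=
  intervalIntegral.integral_hasDerivAt_right
    (continuous_gaussianPDFReal01.intervalIntegrable _ _)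
    (continuous_gaussianPDFReal01.stronglyMeasurable.stronglyMeasurableAtFilter)
    continuous_gaussianPDFReal01.continuousAt

lemma gauss_symm_interval (θ c : ℝ) :
    gaussianReal (-θ) 1 {y : ℝ | |y| < c} = gaussianReal θ 1 {y : ℝ | |y| < c} := by
  have hvar : (⟨(-1:ℝ)^2, sq_nonneg _⟩ : ℝ≥0) * 1 = 1 := by
    ext; norm_num
  have h := gaussianReal_map_const_mul (μ := θ) (v := 1) (-1)
  rw [show (NNReal.mk ((-1:ℝ)^2) (sq_nonneg _) * 1 : ℝ≥0) = 1 from hvar] at h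
  have hSm : MeasurableSet {y : ℝ | |y| < c} :=
    (isOpen_lt continuous_abs continuous_const).measurableSet
  have hmap : gaussianReal (-θ) 1 {y : ℝ | |y| < c}
      = gaussianReal θ 1 ((fun x : ℝ => -1 * x) ⁻¹' {y : ℝ | |y| < c}) := by
    rw [show (-θ : ℝ) = -1 * θ by ring, ← h,
      Measure.map_apply (by fun_prop) hSm]
  rw [hmap]
  congr 1
  ext x
  simp [abs_mul]

lemma key_antitone (c : ℝ) (hc : 0 ≤ c) {t₁ t₂ : ℝ} (h1 : 0 ≤ t₁) (h12 : t₁ ≤ t₂) :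
    gaussianReal t₂ 1 {y : ℝ | |y| < c} ≤ gaussianReal t₁ 1 {y : ℝ | |y| < c} := by
  have hset : {y : ℝ | |y| < c} = Set.Ioo (-c) c := by
    ext y; simp [Set.mem_Ioo, abs_lt]
  have hshift : ∀ t x : ℝ, gaussianPDFReal t 1 x = gaussianPDFReal 0 1 (x - t) := by
    intro t x; simp [gaussianPDFReal]
  have happly : ∀ t : ℝ, gaussianReal t 1 (Set.Ioo (-c) c)
      = ENNReal.ofReal (stdGaussInt (c - t) - stdGaussInt (-c - t)) := by
    intro t
    rw [gaussianReal_apply_eq_integral _ one_ne_zero]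
    congr 1
    have hle : (-c : ℝ) ≤ c := neg_le_self hc
    rw [← MeasureTheory.integral_Ioc_eq_integral_Ioo,
      ← intervalIntegral.integral_of_le hle]
    simp_rw [hshift t]
    rw [intervalIntegral.integral_comp_sub_right _ t]
    unfold stdGaussInt
    rw [intervalIntegral.integral_interval_sub_left
      (continuous_gaussianPDFReal01.intervalIntegrable _ _)
      (continuous_gaussianPDFReal01.intervalIntegrable _ _)]
  have hH : ∀ t : ℝ, HasDerivAt (fun t => stdGaussInt (c - t) - stdGaussInt (-c - t))
      (gaussianPDFReal 0 1 (-c - t) - gaussianPDFReal 0 1 (c - t)) t := by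
    intro t
    have hin1 : HasDerivAt (fun t : ℝ => c - t) (-1) t := (hasDerivAt_id t).const_sub c
    have hin2 : HasDerivAt (fun t : ℝ => -c - t) (-1) t := (hasDerivAt_id t).const_sub (-c)
    have hd1 := (hasDerivAt_stdGaussInt (c - t)).comp t hin1
    have hd2 := (hasDerivAt_stdGaussInt (-c - t)).comp t hin2
    have := hd1.sub hd2
    exact this.congr_deriv (by ring)
  have hdiff : Differentiable ℝ (fun t => stdGaussInt (c - t) - stdGaussInt (-c - t)) :=
    fun t => (hH t).differentiableAt
  have hanti : AntitoneOn (fun t => stdGaussInt (c - t) - stdGaussInt (-c - t)) (Set.Ici 0) := by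
    refine antitoneOn_of_deriv_nonpos (convex_Ici 0) hdiff.continuous.continuousOn
      hdiff.differentiableOn (fun x hx => ?_)
    rw [interior_Ici] at hx
    rw [(hH x).deriv]
    have hx0 : (0:ℝ) ≤ x := le_of_lt hx
    have hexp : gaussianPDFReal 0 1 (-c - x) ≤ gaussianPDFReal 0 1 (c - x) := by
      unfold gaussianPDFReal
      refine mul_le_mul_of_nonneg_left ?_ (by positivity)
      apply Real.exp_le_exp.2
      have h2 : (0:ℝ) < 2 * (1:ℝ≥0) := by norm_num
      rw [div_le_div_iff_of_pos_right h2]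
      nlinarith [mul_nonneg hc hx0]
    linarith
  rw [hset, happly t₁, happly t₂]
  exact ENNReal.ofReal_le_ofReal (hanti (Set.mem_Ici.2 h1) (Set.mem_Ici.2 (h1.trans h12)) h12)

/-- For `Y_θ ~ N(θ, 1)`, `A_θ = (Y_θ² − ν_a)·1{|Y_θ| ≥ a}` and `B_θ = Y_θ² − 1`, the difference
`A_θ − B_θ` is stochastically decreasing in `|θ|`: if `|θ₁| ≤ |θ₂|`, then for all `u ∈ ℝ`,
`P(A_{θ₂} − B_{θ₂} > u) ≤ P(A_{θ₁} − B_{θ₁} > u)`. -/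
theorem thresholding_correction_stochastically_decreasing
    (a : ℝ) (ha : 0 < a) (θ₁ θ₂ : ℝ) (hθ : |θ₁| ≤ |θ₂|) (u : ℝ) :
    (gaussianReal θ₂ 1)
        {y : ℝ | u < (if a ≤ |y| then y ^ 2 - nuGauss a else 0) - (y ^ 2 - 1)}
      ≤ (gaussianReal θ₁ 1)
        {y : ℝ | u < (if a ≤ |y| then y ^ 2 - nuGauss a else 0) - (y ^ 2 - 1)} := by
  have hν : a ^ 2 ≤ nuGauss a := nu_ge a ha
  by_cases hu : u < 1 - nuGauss a
  · have hSuniv : {y : ℝ | u < (if a ≤ |y| then y ^ 2 - nuGauss a else 0) - (y ^ 2 - 1)}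
        = Set.univ := by
      ext y
      simp only [Set.mem_setOf_eq, Set.mem_univ, iff_true]
      split_ifs with h
      · linarith
      · have hya : |y| < a := not_le.mp h
        have hy2 : y ^ 2 < a ^ 2 := by nlinarith [sq_abs y, abs_nonneg y]
        linarith
    rw [hSuniv]
    simp
  · push_neg at hu
    set c := min a (Real.sqrt (1 - u)) with hcdef
    have hc : 0 ≤ c := le_min ha.le (Real.sqrt_nonneg _)
    have hSeq : {y : ℝ | u < (if a ≤ |y| then y ^ 2 - nuGauss a else 0) - (y ^ 2 - 1)}
        = {y : ℝ | |y| < c} := by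
      ext y
      simp only [Set.mem_setOf_eq, hcdef, lt_min_iff]
      split_ifs with h
      · constructor
        · intro hlt; exfalso; linarith
        · rintro ⟨h1, _⟩; exact absurd h (not_le.mpr h1).elim
      · have hya : |y| < a := not_le.mp h
        constructor
        · intro hlt
          refine ⟨hya, ?_⟩
          rw [Real.lt_sqrt (abs_nonneg y), sq_abs]
          linarith
        · rintro ⟨_, h2⟩
          rw [Real.lt_sqrt (abs_nonneg y), sq_abs] at h2
          linarith
    rw [hSeq]
    have habs : ∀ θ : ℝ, gaussianReal θ 1 {y : ℝ | |y| < c}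
        = gaussianReal |θ| 1 {y : ℝ | |y| < c} := by
      intro θ
      rcases abs_choice θ with h | h
      · rw [h]
      · rw [h, gauss_symm_interval]
    rw [habs θ₁, habs θ₂]
    exact key_antitone c hc (abs_nonneg θ₁) hθ
end

section
/- Let μ ∈ ℝ^n be a vector with exactly one changepoint η_j in the open integer interval (s,e), where 0 ≤ s < η_j < e ≤ n (i.e. μ is constant on {s+1,…,η_j} and on {η_j+1,…,e}), with jump θ_j = μ_{η_j+1} − μ_{η_j}. Fix an integer v with s < v < e and set ρ = |η_j − v|, δ_L = η_j − s, δ_R = e − η_j. Then: (i) ‖ Ψ^{η_j}_{(s,e]}·T^{η_j}_{(s,e]}(μ) − Ψ^v_{(s,e]}·T^v_{(s,e]}(μ) ‖₂² = T^{η_j}_{(s,e]}(μ)² − T^v_{(s,e]}(μ)²; (ii) if η_j ≤ v < e then T^{η_j}_{(s,e]}(μ)² − T^v_{(s,e]}(μ)² = (ρ·δ_L/(ρ + δ_L))·θ_j²; and (iii) if s < v ≤ η_j then T^{η_j}_{(s,e]}(μ)² − T^v_{(s,e]}(μ)² = (ρ·δ_R/(ρ + δ_R))·θ_j². -/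
open MeasureTheory ProbabilityTheory Real
open scoped ENNReal NNReal Classical

/-- The CUSUM transform `T^v_{(s,e]}(y)`. -/
noncomputable def cusum (s v e : ℕ) (y : ℕ → ℝ) : ℝ :=
  Real.sqrt (((e : ℝ) - v) / (((e : ℝ) - s) * ((v : ℝ) - s))) * ∑ t ∈ Finset.Ioc s v, y t -
  Real.sqrt (((v : ℝ) - s) / (((e : ℝ) - s) * ((e : ℝ) - v))) * ∑ t ∈ Finset.Ioc v e, y t

/-- The CUSUM contrast vector `Ψ^v_{(s,e]}`, so that `T^v_{(s,e]}(y) = ⟨y, Ψ^v_{(s,e]}⟩`. -/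
noncomputable def cusumVec (s v e : ℕ) : ℕ → ℝ := fun l =>
  if s < l ∧ l ≤ v then Real.sqrt (((e : ℝ) - v) / (((e : ℝ) - s) * ((v : ℝ) - s)))
  else if v < l ∧ l ≤ e then -Real.sqrt (((v : ℝ) - s) / (((e : ℝ) - s) * ((e : ℝ) - v)))
  else 0

private lemma sqrt_ratio {A B : ℝ} (hA : 0 ≤ A) (hB : 0 ≤ B) (C : ℝ) :
    Real.sqrt (A / (B * C)) = Real.sqrt A / (Real.sqrt B * Real.sqrt C) := by
  rw [Real.sqrt_div hA, Real.sqrt_mul hB]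

private lemma cusumVec_left {s v e l : ℕ} (h1 : s < l) (h2 : l ≤ v) :
    cusumVec s v e l = Real.sqrt (((e:ℝ) - v) / (((e:ℝ) - s) * ((v:ℝ) - s))) := by
  unfold cusumVec; rw [if_pos ⟨h1, h2⟩]

private lemma cusumVec_right {s v e l : ℕ} (h1 : v < l) (h2 : l ≤ e) :
    cusumVec s v e l = -Real.sqrt (((v:ℝ) - s) / (((e:ℝ) - s) * ((e:ℝ) - v))) := by
  unfold cusumVec
  rw [if_neg (by omega), if_pos ⟨h1, h2⟩]

private lemma cusumVec_eq_zero {s v e l : ℕ} (hs : s ≤ v) (hv : v ≤ e) (h : l ∉ Finset.Ioc s e) :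
    cusumVec s v e l = 0 := by
  rw [Finset.mem_Ioc] at h
  unfold cusumVec
  split_ifs with h1 h2
  · exfalso; omega
  · exfalso; omega
  · rfl

private lemma alg1 (x y z L R a b : ℝ) (hx : x ≠ 0) (hy : y ≠ 0) (hz : z ≠ 0)
    (hxL : x * x = L) (hyR : y * y = R) :
    y/(z*x) * (L*a) - x/(z*y) * (R*b) = x*y/z*(a-b) := by
  subst hxL; subst hyR; field_simp

private lemma alg2 (x t r z L M U a b : ℝ) (ht : t ≠ 0) (hr : r ≠ 0) (hz : z ≠ 0)
    (hxL : x * x = L) (hM : M = t*t - L) (hrU : r * r = U) :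
    r/(z*t) * (L*a + M*b) - t/(z*r) * (U*b) = x*x*r/(z*t)*(a-b) := by
  subst hxL; subst hrU; subst hM; field_simp; ring

private lemma alg3 (y t r z W M R a b : ℝ) (ht : t ≠ 0) (hr : r ≠ 0) (hz : z ≠ 0)
    (htW : t * t = W) (hM : M = r*r - R) (hyR : y * y = R) :
    r/(z*t) * (W*a) - t/(z*r) * (M*a + R*b) = t*y*y/(z*r)*(a-b) := by
  subst htW; subst hyR; subst hM; field_simp; ring

private lemma key_alg (x y z t r θ : ℝ) (hx : x ≠ 0) (hy : y ≠ 0) (hz : z ≠ 0)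
    (ht : t ≠ 0) (hr : r ≠ 0) (h1 : x^2 + y^2 = z^2) (h2 : t^2 + r^2 = z^2) :
    x^2 * (y/(z*x) * (x*y/z*θ) - r/(z*t) * (x*x*r/(z*t)*θ))^2
      + (t^2 - x^2) * (-(x/(z*y) * (x*y/z*θ)) - r/(z*t) * (x*x*r/(z*t)*θ))^2
      + r^2 * (-(x/(z*y) * (x*y/z*θ)) + t/(z*r) * (x*x*r/(z*t)*θ))^2
    = (x*y/z*θ)^2 - (x*x*r/(z*t)*θ)^2 := by
  have hy2 : y^2 = z^2 - x^2 := by linarith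
  have hr2 : r^2 = z^2 - t^2 := by linarith
  have e1 : y/(z*x) * (x*y/z*θ) = y^2/z^2*θ := by field_simp
  have e2 : x/(z*y) * (x*y/z*θ) = x^2/z^2*θ := by field_simp
  have e3 : r/(z*t) * (x*x*r/(z*t)*θ) = x^2*r^2/(z^2*t^2)*θ := by field_simp
  have e4 : t/(z*r) * (x*x*r/(z*t)*θ) = x^2/z^2*θ := by field_simp
  have eA : (x*y/z*θ)^2 = x^2*y^2/z^2*θ^2 := by ring
  have eB : (x*x*r/(z*t)*θ)^2 = x^2*x^2*r^2/(z^2*t^2)*θ^2 := by ring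
  rw [e1, e2, e3, e4, eA, eB, hy2, hr2]
  field_simp
  ring

private lemma key_alg2 (x y z t r θ : ℝ) (hx : x ≠ 0) (hy : y ≠ 0) (hz : z ≠ 0)
    (ht : 0 < t) (hr : 0 < r) (h1 : x^2 + y^2 = z^2) (h2 : t^2 + r^2 = z^2) :
    t^2 * (y/(z*x) * (x*y/z*θ) - r/(z*t) * (t*y*y/(z*r)*θ))^2
      + (x^2 - t^2) * (y/(z*x) * (x*y/z*θ) + t/(z*r) * (t*y*y/(z*r)*θ))^2
      + y^2 * (-(x/(z*y) * (x*y/z*θ)) + t/(z*r) * (t*y*y/(z*r)*θ))^2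
    = (x*y/z*θ)^2 - (t*y*y/(z*r)*θ)^2 := by
  have hx2 : x^2 = t^2 + r^2 - y^2 := by linarith
  have hz2 : z^2 = t^2 + r^2 := h2.symm
  have ht' : t ≠ 0 := ht.ne'
  have hr' : r ≠ 0 := hr.ne'
  have f1 : y/(z*x) * (x*y/z*θ) = y^2/z^2*θ := by field_simp
  have f2 : x/(z*y) * (x*y/z*θ) = x^2/z^2*θ := by field_simp
  have f3 : r/(z*t) * (t*y*y/(z*r)*θ) = y^2/z^2*θ := by field_simp
  have f4 : t/(z*r) * (t*y*y/(z*r)*θ) = t^2*y^2/(z^2*r^2)*θ := by field_simp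
  have fA : (x*y/z*θ)^2 = x^2*y^2/z^2*θ^2 := by ring
  have fB : (t*y*y/(z*r)*θ)^2 = t^2*y^2*y^2/(z^2*r^2)*θ^2 := by ring
  rw [f1, f2, f3, f4, fA, fB, hx2, hz2]
  have hden : t^2 + r^2 ≠ 0 := by positivity
  field_simp
  ring

/-- Properties of CUSUMs of a vector `μ ∈ ℝⁿ` with exactly one changepoint `η` in the open
integer interval `(s, e)`, with jump `θ = μ_{η+1} − μ_η`, evaluated at a position `s < v < e`:
(i) `‖Ψ^η·T^η(μ) − Ψ^v·T^v(μ)‖₂² = T^η(μ)² − T^v(μ)²`;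
(ii) if `η ≤ v < e` then `T^η(μ)² − T^v(μ)² = (ρδ_L/(ρ + δ_L))·θ²` with `ρ = |η − v|`,
`δ_L = η − s`; (iii) if `s < v ≤ η` then `T^η(μ)² − T^v(μ)² = (ρδ_R/(ρ + δ_R))·θ²` with
`δ_R = e − η`. -/
theorem cusum_single_changepoint
    (n : ℕ) (μ : ℕ → ℝ) (s e η v : ℕ)
    (hsη : s < η) (hηe : η < e) (hen : e ≤ n)
    (hconstL : ∀ t, s < t → t ≤ η → μ t = μ η)
    (hconstR : ∀ t, η < t → t ≤ e → μ t = μ (η + 1))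
    (hjump : μ (η + 1) ≠ μ η)
    (hsv : s < v) (hve : v < e) :
    (∑ l ∈ Finset.Icc 1 n,
        (cusumVec s η e l * cusum s η e μ - cusumVec s v e l * cusum s v e μ) ^ 2
      = cusum s η e μ ^ 2 - cusum s v e μ ^ 2) ∧
    (η ≤ v →
      cusum s η e μ ^ 2 - cusum s v e μ ^ 2
        = (|(η : ℝ) - v| * ((η : ℝ) - s)) / (|(η : ℝ) - v| + ((η : ℝ) - s))
            * (μ (η + 1) - μ η) ^ 2) ∧
    (v ≤ η →
      cusum s η e μ ^ 2 - cusum s v e μ ^ 2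
        = (|(η : ℝ) - v| * ((e : ℝ) - η)) / (|(η : ℝ) - v| + ((e : ℝ) - η))
            * (μ (η + 1) - μ η) ^ 2) := by
  have hL0 : (0:ℝ) < (η:ℝ) - s := by
    have : (s:ℝ) < η := by exact_mod_cast hsη
    linarith
  have hR0 : (0:ℝ) < (e:ℝ) - η := by
    have : (η:ℝ) < e := by exact_mod_cast hηe
    linarith
  have hS0 : (0:ℝ) < (e:ℝ) - s := by
    have : (s:ℝ) < e := by exact_mod_cast (hsη.trans hηe)
    linarith
  have hW0 : (0:ℝ) < (v:ℝ) - s := by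
    have : (s:ℝ) < v := by exact_mod_cast hsv
    linarith
  have hU0 : (0:ℝ) < (e:ℝ) - v := by
    have : (v:ℝ) < e := by exact_mod_cast hve
    linarith
  have hsqL : 0 < Real.sqrt ((η:ℝ) - s) := Real.sqrt_pos.mpr hL0
  have hsqR : 0 < Real.sqrt ((e:ℝ) - η) := Real.sqrt_pos.mpr hR0
  have hsqS : 0 < Real.sqrt ((e:ℝ) - s) := Real.sqrt_pos.mpr hS0
  have hsqW : 0 < Real.sqrt ((v:ℝ) - s) := Real.sqrt_pos.mpr hW0
  have hsqU : 0 < Real.sqrt ((e:ℝ) - v) := Real.sqrt_pos.mpr hU0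
  have h1sq : Real.sqrt ((η:ℝ) - s) ^ 2 + Real.sqrt ((e:ℝ) - η) ^ 2
      = Real.sqrt ((e:ℝ) - s) ^ 2 := by
    rw [Real.sq_sqrt hL0.le, Real.sq_sqrt hR0.le, Real.sq_sqrt hS0.le]; ring
  have h2sq : Real.sqrt ((v:ℝ) - s) ^ 2 + Real.sqrt ((e:ℝ) - v) ^ 2
      = Real.sqrt ((e:ℝ) - s) ^ 2 := by
    rw [Real.sq_sqrt hW0.le, Real.sq_sqrt hU0.le, Real.sq_sqrt hS0.le]; ring
  -- sums over the two constancy regions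
  have hsum_Lη : ∑ t ∈ Finset.Ioc s η, μ t = ((η:ℝ) - s) * μ η := by
    rw [Finset.sum_congr rfl fun t ht =>
        hconstL t (Finset.mem_Ioc.mp ht).1 (Finset.mem_Ioc.mp ht).2,
      Finset.sum_const, Nat.card_Ioc, nsmul_eq_mul, Nat.cast_sub hsη.le]
  have hsum_Rη : ∑ t ∈ Finset.Ioc η e, μ t = ((e:ℝ) - η) * μ (η + 1) := by
    rw [Finset.sum_congr rfl fun t ht =>
        hconstR t (Finset.mem_Ioc.mp ht).1 (Finset.mem_Ioc.mp ht).2,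
      Finset.sum_const, Nat.card_Ioc, nsmul_eq_mul, Nat.cast_sub hηe.le]
  have hTe : cusum s η e μ
      = Real.sqrt ((η:ℝ) - s) * Real.sqrt ((e:ℝ) - η) / Real.sqrt ((e:ℝ) - s)
          * (μ η - μ (η + 1)) := by
    unfold cusum
    rw [hsum_Lη, hsum_Rη, sqrt_ratio hR0.le hS0.le ((η:ℝ) - s),
      sqrt_ratio hL0.le hS0.le ((e:ℝ) - η)]
    linear_combination alg1 (Real.sqrt ((η:ℝ) - s)) (Real.sqrt ((e:ℝ) - η))
      (Real.sqrt ((e:ℝ) - s)) ((η:ℝ) - s) ((e:ℝ) - η) (μ η) (μ (η + 1))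
      hsqL.ne' hsqR.ne' hsqS.ne' (Real.mul_self_sqrt hL0.le) (Real.mul_self_sqrt hR0.le)
  -- closed form of cusum at v in the case η ≤ v
  have hTvGe : η ≤ v → cusum s v e μ
      = Real.sqrt ((η:ℝ) - s) * Real.sqrt ((η:ℝ) - s) * Real.sqrt ((e:ℝ) - v)
          / (Real.sqrt ((e:ℝ) - s) * Real.sqrt ((v:ℝ) - s)) * (μ η - μ (η + 1)) := by
    intro hvη
    have hsum_mid : ∑ t ∈ Finset.Ioc η v, μ t = ((v:ℝ) - η) * μ (η + 1) := by
      rw [Finset.sum_congr rfl fun t ht =>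
          hconstR t (Finset.mem_Ioc.mp ht).1 ((Finset.mem_Ioc.mp ht).2.trans hve.le),
        Finset.sum_const, Nat.card_Ioc, nsmul_eq_mul, Nat.cast_sub hvη]
    have hsum_Lv : ∑ t ∈ Finset.Ioc s v, μ t
        = ((η:ℝ) - s) * μ η + ((v:ℝ) - η) * μ (η + 1) := by
      rw [← Finset.sum_Ioc_consecutive _ hsη.le hvη, hsum_Lη, hsum_mid]
    have hsum_Rv : ∑ t ∈ Finset.Ioc v e, μ t = ((e:ℝ) - v) * μ (η + 1) := by
      rw [Finset.sum_congr rfl fun t ht =>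
          hconstR t (lt_of_le_of_lt hvη (Finset.mem_Ioc.mp ht).1) (Finset.mem_Ioc.mp ht).2,
        Finset.sum_const, Nat.card_Ioc, nsmul_eq_mul, Nat.cast_sub hve.le]
    unfold cusum
    rw [hsum_Lv, hsum_Rv, sqrt_ratio hU0.le hS0.le ((v:ℝ) - s),
      sqrt_ratio hW0.le hS0.le ((e:ℝ) - v)]
    linear_combination alg2 (Real.sqrt ((η:ℝ) - s)) (Real.sqrt ((v:ℝ) - s))
      (Real.sqrt ((e:ℝ) - v)) (Real.sqrt ((e:ℝ) - s)) ((η:ℝ) - s) ((v:ℝ) - η) ((e:ℝ) - v)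
      (μ η) (μ (η + 1)) hsqW.ne' hsqU.ne' hsqS.ne' (Real.mul_self_sqrt hL0.le)
      (by rw [Real.mul_self_sqrt hW0.le]; ring) (Real.mul_self_sqrt hU0.le)
  -- closed form of cusum at v in the case v ≤ η
  have hTvLe : v ≤ η → cusum s v e μ
      = Real.sqrt ((v:ℝ) - s) * Real.sqrt ((e:ℝ) - η) * Real.sqrt ((e:ℝ) - η)
          / (Real.sqrt ((e:ℝ) - s) * Real.sqrt ((e:ℝ) - v)) * (μ η - μ (η + 1)) := by
    intro hvη
    have hsum_mid : ∑ t ∈ Finset.Ioc v η, μ t = ((η:ℝ) - v) * μ η := by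
      rw [Finset.sum_congr rfl fun t ht =>
          hconstL t (hsv.trans (Finset.mem_Ioc.mp ht).1) (Finset.mem_Ioc.mp ht).2,
        Finset.sum_const, Nat.card_Ioc, nsmul_eq_mul, Nat.cast_sub hvη]
    have hsum_Lv : ∑ t ∈ Finset.Ioc s v, μ t = ((v:ℝ) - s) * μ η := by
      rw [Finset.sum_congr rfl fun t ht =>
          hconstL t (Finset.mem_Ioc.mp ht).1 ((Finset.mem_Ioc.mp ht).2.trans hvη),
        Finset.sum_const, Nat.card_Ioc, nsmul_eq_mul, Nat.cast_sub hsv.le]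
    have hsum_Rv : ∑ t ∈ Finset.Ioc v e, μ t
        = ((η:ℝ) - v) * μ η + ((e:ℝ) - η) * μ (η + 1) := by
      rw [← Finset.sum_Ioc_consecutive _ hvη hηe.le, hsum_mid, hsum_Rη]
    unfold cusum
    rw [hsum_Lv, hsum_Rv, sqrt_ratio hU0.le hS0.le ((v:ℝ) - s),
      sqrt_ratio hW0.le hS0.le ((e:ℝ) - v)]
    linear_combination alg3 (Real.sqrt ((e:ℝ) - η)) (Real.sqrt ((v:ℝ) - s))
      (Real.sqrt ((e:ℝ) - v)) (Real.sqrt ((e:ℝ) - s)) ((v:ℝ) - s) ((η:ℝ) - v) ((e:ℝ) - η)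
      (μ η) (μ (η + 1)) hsqW.ne' hsqU.ne' hsqS.ne' (Real.mul_self_sqrt hW0.le)
      (by rw [Real.mul_self_sqrt hU0.le]; ring) (Real.mul_self_sqrt hR0.le)
  refine ⟨?_, ?_, ?_⟩
  · -- part (i)
    have hsub : Finset.Ioc s e ⊆ Finset.Icc 1 n := by
      intro l hl; rw [Finset.mem_Ioc] at hl; rw [Finset.mem_Icc]; omega
    have hzero : ∀ x ∈ Finset.Icc 1 n, x ∉ Finset.Ioc s e →
        (cusumVec s η e x * cusum s η e μ - cusumVec s v e x * cusum s v e μ) ^ 2 = 0 := by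
      intro x _ hx
      rw [cusumVec_eq_zero hsη.le hηe.le hx, cusumVec_eq_zero hsv.le hve.le hx]; ring
    rw [← Finset.sum_subset hsub hzero]
    rcases le_total η v with hvη | hvη
    · -- case η ≤ v
      have hIa : ∑ l ∈ Finset.Ioc s η,
          (cusumVec s η e l * cusum s η e μ - cusumVec s v e l * cusum s v e μ) ^ 2
          = ((η - s : ℕ) : ℝ) *
            (Real.sqrt (((e:ℝ) - η) / (((e:ℝ) - s) * ((η:ℝ) - s))) * cusum s η e μ
              - Real.sqrt (((e:ℝ) - v) / (((e:ℝ) - s) * ((v:ℝ) - s))) * cusum s v e μ) ^ 2 := by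
        have hconst : ∀ l ∈ Finset.Ioc s η,
            (cusumVec s η e l * cusum s η e μ - cusumVec s v e l * cusum s v e μ) ^ 2
            = (Real.sqrt (((e:ℝ) - η) / (((e:ℝ) - s) * ((η:ℝ) - s))) * cusum s η e μ
              - Real.sqrt (((e:ℝ) - v) / (((e:ℝ) - s) * ((v:ℝ) - s))) * cusum s v e μ) ^ 2 := by
          intro l hl
          obtain ⟨h1, h2⟩ := Finset.mem_Ioc.mp hl
          rw [cusumVec_left h1 h2, cusumVec_left h1 (h2.trans hvη)]
        rw [Finset.sum_congr rfl hconst, Finset.sum_const, Nat.card_Ioc, nsmul_eq_mul]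
      have hIb : ∑ l ∈ Finset.Ioc η v,
          (cusumVec s η e l * cusum s η e μ - cusumVec s v e l * cusum s v e μ) ^ 2
          = ((v - η : ℕ) : ℝ) *
            (-Real.sqrt (((η:ℝ) - s) / (((e:ℝ) - s) * ((e:ℝ) - η))) * cusum s η e μ
              - Real.sqrt (((e:ℝ) - v) / (((e:ℝ) - s) * ((v:ℝ) - s))) * cusum s v e μ) ^ 2 := by
        have hconst : ∀ l ∈ Finset.Ioc η v,
            (cusumVec s η e l * cusum s η e μ - cusumVec s v e l * cusum s v e μ) ^ 2
            = (-Real.sqrt (((η:ℝ) - s) / (((e:ℝ) - s) * ((e:ℝ) - η))) * cusum s η e μ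
              - Real.sqrt (((e:ℝ) - v) / (((e:ℝ) - s) * ((v:ℝ) - s))) * cusum s v e μ) ^ 2 := by
          intro l hl
          obtain ⟨h1, h2⟩ := Finset.mem_Ioc.mp hl
          rw [cusumVec_right h1 (h2.trans hve.le), cusumVec_left (hsη.trans h1) h2]
        rw [Finset.sum_congr rfl hconst, Finset.sum_const, Nat.card_Ioc, nsmul_eq_mul]
      have hIc : ∑ l ∈ Finset.Ioc v e,
          (cusumVec s η e l * cusum s η e μ - cusumVec s v e l * cusum s v e μ) ^ 2
          = ((e - v : ℕ) : ℝ) *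
            (-Real.sqrt (((η:ℝ) - s) / (((e:ℝ) - s) * ((e:ℝ) - η))) * cusum s η e μ
              - (-Real.sqrt (((v:ℝ) - s) / (((e:ℝ) - s) * ((e:ℝ) - v)))) * cusum s v e μ) ^ 2 := by
        have hconst : ∀ l ∈ Finset.Ioc v e,
            (cusumVec s η e l * cusum s η e μ - cusumVec s v e l * cusum s v e μ) ^ 2
            = (-Real.sqrt (((η:ℝ) - s) / (((e:ℝ) - s) * ((e:ℝ) - η))) * cusum s η e μ
              - (-Real.sqrt (((v:ℝ) - s) / (((e:ℝ) - s) * ((e:ℝ) - v)))) * cusum s v e μ) ^ 2 := by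
          intro l hl
          obtain ⟨h1, h2⟩ := Finset.mem_Ioc.mp hl
          rw [cusumVec_right (lt_of_le_of_lt hvη h1) h2, cusumVec_right h1 h2]
        rw [Finset.sum_congr rfl hconst, Finset.sum_const, Nat.card_Ioc, nsmul_eq_mul]
      have hc1 : ((η - s : ℕ) : ℝ) = Real.sqrt ((η:ℝ) - s) ^ 2 := by
        rw [Real.sq_sqrt hL0.le, Nat.cast_sub hsη.le]
      have hc2 : ((v - η : ℕ) : ℝ) = Real.sqrt ((v:ℝ) - s) ^ 2 - Real.sqrt ((η:ℝ) - s) ^ 2 := by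
        rw [Real.sq_sqrt hW0.le, Real.sq_sqrt hL0.le, Nat.cast_sub hvη]; ring
      have hc3 : ((e - v : ℕ) : ℝ) = Real.sqrt ((e:ℝ) - v) ^ 2 := by
        rw [Real.sq_sqrt hU0.le, Nat.cast_sub hve.le]
      rw [← Finset.sum_Ioc_consecutive _ hsv.le hve.le,
        ← Finset.sum_Ioc_consecutive _ hsη.le hvη, hIa, hIb, hIc, hTe, hTvGe hvη,
        sqrt_ratio hR0.le hS0.le ((η:ℝ) - s), sqrt_ratio hU0.le hS0.le ((v:ℝ) - s),
        sqrt_ratio hL0.le hS0.le ((e:ℝ) - η), sqrt_ratio hW0.le hS0.le ((e:ℝ) - v),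
        hc1, hc2, hc3]
      linear_combination key_alg (Real.sqrt ((η:ℝ) - s)) (Real.sqrt ((e:ℝ) - η))
        (Real.sqrt ((e:ℝ) - s)) (Real.sqrt ((v:ℝ) - s)) (Real.sqrt ((e:ℝ) - v))
        (μ η - μ (η + 1)) hsqL.ne' hsqR.ne' hsqS.ne' hsqW.ne' hsqU.ne' h1sq h2sq
    · -- case v ≤ η
      have hIa : ∑ l ∈ Finset.Ioc s v,
          (cusumVec s η e l * cusum s η e μ - cusumVec s v e l * cusum s v e μ) ^ 2
          = ((v - s : ℕ) : ℝ) *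
            (Real.sqrt (((e:ℝ) - η) / (((e:ℝ) - s) * ((η:ℝ) - s))) * cusum s η e μ
              - Real.sqrt (((e:ℝ) - v) / (((e:ℝ) - s) * ((v:ℝ) - s))) * cusum s v e μ) ^ 2 := by
        have hconst : ∀ l ∈ Finset.Ioc s v,
            (cusumVec s η e l * cusum s η e μ - cusumVec s v e l * cusum s v e μ) ^ 2
            = (Real.sqrt (((e:ℝ) - η) / (((e:ℝ) - s) * ((η:ℝ) - s))) * cusum s η e μ
              - Real.sqrt (((e:ℝ) - v) / (((e:ℝ) - s) * ((v:ℝ) - s))) * cusum s v e μ) ^ 2 := by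
          intro l hl
          obtain ⟨h1, h2⟩ := Finset.mem_Ioc.mp hl
          rw [cusumVec_left h1 (h2.trans hvη), cusumVec_left h1 h2]
        rw [Finset.sum_congr rfl hconst, Finset.sum_const, Nat.card_Ioc, nsmul_eq_mul]
      have hIb : ∑ l ∈ Finset.Ioc v η,
          (cusumVec s η e l * cusum s η e μ - cusumVec s v e l * cusum s v e μ) ^ 2
          = ((η - v : ℕ) : ℝ) *
            (Real.sqrt (((e:ℝ) - η) / (((e:ℝ) - s) * ((η:ℝ) - s))) * cusum s η e μ
              - (-Real.sqrt (((v:ℝ) - s) / (((e:ℝ) - s) * ((e:ℝ) - v)))) * cusum s v e μ) ^ 2 := by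
        have hconst : ∀ l ∈ Finset.Ioc v η,
            (cusumVec s η e l * cusum s η e μ - cusumVec s v e l * cusum s v e μ) ^ 2
            = (Real.sqrt (((e:ℝ) - η) / (((e:ℝ) - s) * ((η:ℝ) - s))) * cusum s η e μ
              - (-Real.sqrt (((v:ℝ) - s) / (((e:ℝ) - s) * ((e:ℝ) - v)))) * cusum s v e μ) ^ 2 := by
          intro l hl
          obtain ⟨h1, h2⟩ := Finset.mem_Ioc.mp hl
          rw [cusumVec_left (hsv.trans h1) h2, cusumVec_right h1 (h2.trans hηe.le)]
        rw [Finset.sum_congr rfl hconst, Finset.sum_const, Nat.card_Ioc, nsmul_eq_mul]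
      have hIc : ∑ l ∈ Finset.Ioc η e,
          (cusumVec s η e l * cusum s η e μ - cusumVec s v e l * cusum s v e μ) ^ 2
          = ((e - η : ℕ) : ℝ) *
            (-Real.sqrt (((η:ℝ) - s) / (((e:ℝ) - s) * ((e:ℝ) - η))) * cusum s η e μ
              - (-Real.sqrt (((v:ℝ) - s) / (((e:ℝ) - s) * ((e:ℝ) - v)))) * cusum s v e μ) ^ 2 := by
        have hconst : ∀ l ∈ Finset.Ioc η e,
            (cusumVec s η e l * cusum s η e μ - cusumVec s v e l * cusum s v e μ) ^ 2
            = (-Real.sqrt (((η:ℝ) - s) / (((e:ℝ) - s) * ((e:ℝ) - η))) * cusum s η e μ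
              - (-Real.sqrt (((v:ℝ) - s) / (((e:ℝ) - s) * ((e:ℝ) - v)))) * cusum s v e μ) ^ 2 := by
          intro l hl
          obtain ⟨h1, h2⟩ := Finset.mem_Ioc.mp hl
          rw [cusumVec_right h1 h2, cusumVec_right (lt_of_le_of_lt hvη h1) h2]
        rw [Finset.sum_congr rfl hconst, Finset.sum_const, Nat.card_Ioc, nsmul_eq_mul]
      have hc1 : ((v - s : ℕ) : ℝ) = Real.sqrt ((v:ℝ) - s) ^ 2 := by
        rw [Real.sq_sqrt hW0.le, Nat.cast_sub hsv.le]
      have hc2 : ((η - v : ℕ) : ℝ) = Real.sqrt ((η:ℝ) - s) ^ 2 - Real.sqrt ((v:ℝ) - s) ^ 2 := by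
        rw [Real.sq_sqrt hL0.le, Real.sq_sqrt hW0.le, Nat.cast_sub hvη]; ring
      have hc3 : ((e - η : ℕ) : ℝ) = Real.sqrt ((e:ℝ) - η) ^ 2 := by
        rw [Real.sq_sqrt hR0.le, Nat.cast_sub hηe.le]
      rw [← Finset.sum_Ioc_consecutive _ hsη.le hηe.le,
        ← Finset.sum_Ioc_consecutive _ hsv.le hvη, hIa, hIb, hIc, hTe, hTvLe hvη,
        sqrt_ratio hR0.le hS0.le ((η:ℝ) - s), sqrt_ratio hU0.le hS0.le ((v:ℝ) - s),
        sqrt_ratio hL0.le hS0.le ((e:ℝ) - η), sqrt_ratio hW0.le hS0.le ((e:ℝ) - v),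
        hc1, hc2, hc3]
      linear_combination key_alg2 (Real.sqrt ((η:ℝ) - s)) (Real.sqrt ((e:ℝ) - η))
        (Real.sqrt ((e:ℝ) - s)) (Real.sqrt ((v:ℝ) - s)) (Real.sqrt ((e:ℝ) - v))
        (μ η - μ (η + 1)) hsqL.ne' hsqR.ne' hsqS.ne' hsqW hsqU h1sq h2sq
  · -- part (ii)
    intro hvη
    have habs : |(η:ℝ) - v| = (v:ℝ) - η := by
      rw [abs_sub_comm]
      exact abs_of_nonneg (by
        have : (η:ℝ) ≤ v := by exact_mod_cast hvη
        linarith)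
    rw [habs, hTe, hTvGe hvη]
    have e1 : (Real.sqrt ((η:ℝ) - s) * Real.sqrt ((e:ℝ) - η) / Real.sqrt ((e:ℝ) - s)
          * (μ η - μ (η + 1))) ^ 2
        = (Real.sqrt ((η:ℝ) - s) * Real.sqrt ((η:ℝ) - s))
            * (Real.sqrt ((e:ℝ) - η) * Real.sqrt ((e:ℝ) - η))
            / (Real.sqrt ((e:ℝ) - s) * Real.sqrt ((e:ℝ) - s))
            * ((μ η - μ (η + 1)) * (μ η - μ (η + 1))) := by ring
    have e2 : (Real.sqrt ((η:ℝ) - s) * Real.sqrt ((η:ℝ) - s) * Real.sqrt ((e:ℝ) - v)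
          / (Real.sqrt ((e:ℝ) - s) * Real.sqrt ((v:ℝ) - s)) * (μ η - μ (η + 1))) ^ 2
        = ((Real.sqrt ((η:ℝ) - s) * Real.sqrt ((η:ℝ) - s))
            * (Real.sqrt ((η:ℝ) - s) * Real.sqrt ((η:ℝ) - s)))
            * (Real.sqrt ((e:ℝ) - v) * Real.sqrt ((e:ℝ) - v))
            / ((Real.sqrt ((e:ℝ) - s) * Real.sqrt ((e:ℝ) - s))
              * (Real.sqrt ((v:ℝ) - s) * Real.sqrt ((v:ℝ) - s)))
            * ((μ η - μ (η + 1)) * (μ η - μ (η + 1))) := by ring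
    rw [e1, e2, Real.mul_self_sqrt hL0.le, Real.mul_self_sqrt hR0.le,
      Real.mul_self_sqrt hS0.le, Real.mul_self_sqrt hU0.le, Real.mul_self_sqrt hW0.le]
    have hden : ((v:ℝ) - η) + ((η:ℝ) - s) ≠ 0 := by
      have h : ((v:ℝ) - η) + ((η:ℝ) - s) = (v:ℝ) - s := by ring
      rw [h]; exact hW0.ne'
    field_simp
    ring
  · -- part (iii)
    intro hvη
    have habs : |(η:ℝ) - v| = (η:ℝ) - v := by
      exact abs_of_nonneg (by
        have : (v:ℝ) ≤ η := by exact_mod_cast hvη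
        linarith)
    rw [habs, hTe, hTvLe hvη]
    have e1 : (Real.sqrt ((η:ℝ) - s) * Real.sqrt ((e:ℝ) - η) / Real.sqrt ((e:ℝ) - s)
          * (μ η - μ (η + 1))) ^ 2
        = (Real.sqrt ((η:ℝ) - s) * Real.sqrt ((η:ℝ) - s))
            * (Real.sqrt ((e:ℝ) - η) * Real.sqrt ((e:ℝ) - η))
            / (Real.sqrt ((e:ℝ) - s) * Real.sqrt ((e:ℝ) - s))
            * ((μ η - μ (η + 1)) * (μ η - μ (η + 1))) := by ring
    have e2 : (Real.sqrt ((v:ℝ) - s) * Real.sqrt ((e:ℝ) - η) * Real.sqrt ((e:ℝ) - η)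
          / (Real.sqrt ((e:ℝ) - s) * Real.sqrt ((e:ℝ) - v)) * (μ η - μ (η + 1))) ^ 2
        = (Real.sqrt ((v:ℝ) - s) * Real.sqrt ((v:ℝ) - s))
            * ((Real.sqrt ((e:ℝ) - η) * Real.sqrt ((e:ℝ) - η))
              * (Real.sqrt ((e:ℝ) - η) * Real.sqrt ((e:ℝ) - η)))
            / ((Real.sqrt ((e:ℝ) - s) * Real.sqrt ((e:ℝ) - s))
              * (Real.sqrt ((e:ℝ) - v) * Real.sqrt ((e:ℝ) - v)))
            * ((μ η - μ (η + 1)) * (μ η - μ (η + 1))) := by ring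
    rw [e1, e2, Real.mul_self_sqrt hL0.le, Real.mul_self_sqrt hR0.le,
      Real.mul_self_sqrt hS0.le, Real.mul_self_sqrt hU0.le, Real.mul_self_sqrt hW0.le]
    have hden : ((η:ℝ) - v) + ((e:ℝ) - η) ≠ 0 := by
      have h : ((η:ℝ) - v) + ((e:ℝ) - η) = (e:ℝ) - v := by ring
      rw [h]; exact hU0.ne'
    field_simp
    ring
end
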